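/- arXiv:2212.12680 — 12 statements merged into one kernel-verified Lean document; each statement's English description precedes it below -/
import Mathlib

section
/- For any finitely supported real sequence (u_n)_{n≥0} with u_0 = 0, the discrete Hardy inequality holds: ∑_{n≥1} (u_n - u_{n-1})² ≥ (1/4) ∑_{n≥1} u_n²/n². -/
private lemma hardy_const (M : ℝ) (hM : 2 ≤ M) :
    1 ≤ (2*M - Real.sqrt M * Real.sqrt (M-1) - Real.sqrt M * Real.sqrt (M+1)) * (4*M) := by
  set s := Real.sqrt M
  set t := Real.sqrt (M-1)
  set r := Real.sqrt (M+1)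
  have hs2 : s^2 = M := Real.sq_sqrt (by linarith)
  have ht2 : t^2 = M - 1 := Real.sq_sqrt (by linarith)
  have hr2 : r^2 = M + 1 := Real.sq_sqrt (by linarith)
  have hs0 : 0 ≤ s := Real.sqrt_nonneg _
  have ht0 : 0 ≤ t := Real.sqrt_nonneg _
  have hr0 : 0 ≤ r := Real.sqrt_nonneg _
  set p := s*t with hp
  set q := s*r with hq
  have hp0 : 0 ≤ p := mul_nonneg hs0 ht0
  have hq0 : 0 ≤ q := mul_nonneg hs0 hr0
  have hp2 : p^2 = M^2 - M := by rw [hp, mul_pow, hs2, ht2]; ring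
  have hq2 : q^2 = M^2 + M := by rw [hq, mul_pow, hs2, hr2]; ring
  have hpq2 : (p*q)^2 = M^2*(M^2-1) := by
    have : (p*q)^2 = p^2 * q^2 := by ring
    rw [this, hp2, hq2]; ring
  have hpq : p*q ≤ M^2 - 1/2 := by nlinarith [mul_nonneg hp0 hq0]
  have h2 : (p+q)^2 ≤ 4*M^2 - 1 := by nlinarith
  have h3 : 4*M*(p+q) ≤ 8*M^2 - 1 := by
    nlinarith [mul_nonneg hp0 hq0, add_nonneg hp0 hq0,
      mul_nonneg (mul_nonneg (by linarith : (0:ℝ) ≤ 4*M) hp0) hq0]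
  nlinarith

private lemma hardy_step (M a b : ℝ) (hM : 2 ≤ M) :
    (b - a)^2 ≥ b^2/(4*M^2) +
      ((Real.sqrt (M+1) - Real.sqrt M)/Real.sqrt M * b^2
        - (Real.sqrt M - Real.sqrt (M-1))/Real.sqrt (M-1) * a^2) := by
  have hc := hardy_const M hM
  set s := Real.sqrt M
  set t := Real.sqrt (M-1)
  set r := Real.sqrt (M+1)
  have hs2 : s^2 = M := Real.sq_sqrt (by linarith)
  have ht2 : t^2 = M - 1 := Real.sq_sqrt (by linarith)
  have hs0 : 0 < s := Real.sqrt_pos.2 (by linarith)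
  have ht0 : 0 < t := Real.sqrt_pos.2 (by linarith)
  rw [ge_iff_le, ← sub_nonneg]
  have hexp : (b - a)^2 - (b^2/(4*M^2) + ((r - s)/s * b^2 - (s - t)/t * a^2))
      = (4*M^2*(t*b - s*a)^2 + s*t*b^2*((2*M - s*t - s*r)*(4*M) - 1)) / (4*M^2*s*t) := by
    have hM0 : M ≠ 0 := by linarith
    field_simp
    linear_combination (4*b^2*M*t*r + 4*b^2*M*t^2) * hs2
  rw [hexp]
  apply div_nonneg
  · have h1 : 0 ≤ 4*M^2*(t*b - s*a)^2 := by positivity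
    have h2 : 0 ≤ s*t*b^2*((2*M - s*t - s*r)*(4*M) - 1) :=
      mul_nonneg (by positivity) (by linarith)
    linarith
  · positivity

/-- Discrete Hardy inequality on ℕ with the sharp constant 1/4. -/
theorem discrete_hardy (u : ℕ → ℝ) (hfin : ∃ N, ∀ n ≥ N, u n = 0) (h0 : u 0 = 0) :
    ∑' n : ℕ, (u (n + 1) - u n) ^ 2 ≥
      (1 / 4) * ∑' n : ℕ, (u (n + 1)) ^ 2 / ((n : ℝ) + 1) ^ 2 := by
  obtain ⟨N, hN⟩ := hfin
  set G : ℕ → ℝ := fun n =>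
    (Real.sqrt ((n:ℝ)+1) - Real.sqrt (n:ℝ)) / Real.sqrt (n:ℝ) * (u n)^2 with hG
  have key : ∀ n : ℕ, (u (n+1) - u n)^2 ≥
      (u (n+1))^2 / (4*((n:ℝ)+1)^2) + (G (n+1) - G n) := by
    intro n
    match n with
    | 0 =>
      have h2 : Real.sqrt 2 ≤ 7/4 := by
        nlinarith [Real.sq_sqrt (by norm_num : (0:ℝ) ≤ 2), Real.sqrt_nonneg 2]
      simp only [hG, h0]
      norm_num [Real.sqrt_one]
      nlinarith [sq_nonneg (u 1), mul_nonneg (by linarith : (0:ℝ) ≤ 7/4 - Real.sqrt 2) (sq_nonneg (u 1))]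
    | (m+1) =>
      have hM : (2:ℝ) ≤ ((m:ℝ)+1) + 1 := by
        have : (0:ℝ) ≤ m := Nat.cast_nonneg m
        linarith
      have := hardy_step ((m:ℝ)+1+1) (u (m+1)) (u (m+2)) hM
      have e1 : ((m:ℝ)+1+1) - 1 = ((m:ℝ)+1) := by ring
      rw [e1] at this
      simp only [hG]
      push_cast
      convert this using 3 <;> push_cast <;> ring_nf
  -- reduce tsums to finite sums
  have hL : ∑' n : ℕ, (u (n + 1) - u n) ^ 2
      = ∑ n ∈ Finset.range (N+1), (u (n + 1) - u n) ^ 2 := by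
    apply tsum_eq_sum
    intro n hn
    have hn' : N + 1 ≤ n := by simpa [Finset.mem_range, Nat.lt_succ_iff] using hn
    rw [hN n (by omega), hN (n+1) (by omega)]; ring
  have hR : ∑' n : ℕ, (u (n + 1)) ^ 2 / ((n : ℝ) + 1) ^ 2
      = ∑ n ∈ Finset.range (N+1), (u (n + 1)) ^ 2 / ((n : ℝ) + 1) ^ 2 := by
    apply tsum_eq_sum
    intro n hn
    have hn' : N + 1 ≤ n := by simpa [Finset.mem_range, Nat.lt_succ_iff] using hn
    rw [hN (n+1) (by omega)]; simp
  rw [hL, hR]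
  have hsum : ∑ n ∈ Finset.range (N+1), (u (n + 1) - u n) ^ 2
      ≥ ∑ n ∈ Finset.range (N+1),
          ((u (n+1))^2 / (4*((n:ℝ)+1)^2) + (G (n+1) - G n)) :=
    Finset.sum_le_sum (fun n _ => key n)
  have htel : ∑ n ∈ Finset.range (N+1), (G (n+1) - G n) = G (N+1) - G 0 :=
    Finset.sum_range_sub G (N+1)
  have hG0 : G 0 = 0 := by simp [hG, h0]
  have hGN : G (N+1) = 0 := by
    simp [hG, hN (N+1) (by omega)]
  rw [Finset.sum_add_distrib, htel, hG0, hGN] at hsum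
  have hquarter : ∑ n ∈ Finset.range (N+1), (u (n+1))^2 / (4*((n:ℝ)+1)^2)
      = (1/4) * ∑ n ∈ Finset.range (N+1), (u (n + 1)) ^ 2 / ((n : ℝ) + 1) ^ 2 := by
    rw [Finset.mul_sum]
    apply Finset.sum_congr rfl
    intro n _
    field_simp
  rw [hquarter] at hsum
  linarith
end

section
/- For any finitely supported real sequence (u_n)_{n≥0} with u_0 = 0, we have ∑_{n≥1} (u_n - u_{n-1})² ≥ ∑_{n≥1} (Δ√n / √n) u_n², where Δ√n = 2√n - √(n+1) - √(n-1). -/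
/-- Keller–Pinchover–Pogorzelski improved discrete Hardy inequality with
weight `w_n = Δ√n / √n`. -/
theorem discrete_hardy_optimal_weight (u : ℕ → ℝ) (hfin : ∃ N, ∀ n ≥ N, u n = 0)
    (h0 : u 0 = 0) :
    ∑' n : ℕ, (u (n + 1) - u n) ^ 2 ≥
      ∑' n : ℕ,
        ((2 * Real.sqrt ((n : ℝ) + 1) - Real.sqrt ((n : ℝ) + 2) - Real.sqrt (n : ℝ)) /
            Real.sqrt ((n : ℝ) + 1)) * (u (n + 1)) ^ 2 := by
  obtain ⟨N, hN⟩ := hfin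
  set f : ℕ → ℝ := fun n => (u (n + 1) - u n) ^ 2 with hf_def
  set g : ℕ → ℝ := fun n =>
    ((2 * Real.sqrt ((n : ℝ) + 1) - Real.sqrt ((n : ℝ) + 2) - Real.sqrt (n : ℝ)) /
        Real.sqrt ((n : ℝ) + 1)) * (u (n + 1)) ^ 2 with hg_def
  have hf0 : ∀ n ∉ Finset.range N, f n = 0 := by
    intro n hn
    simp only [Finset.mem_range, not_lt] at hn
    simp [hf_def, hN n hn, hN (n + 1) (le_trans hn (Nat.le_succ n))]
  have hg0 : ∀ n ∉ Finset.range N, g n = 0 := by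
    intro n hn
    simp only [Finset.mem_range, not_lt] at hn
    simp [hg_def, hN (n + 1) (le_trans hn (Nat.le_succ n))]
  rw [ge_iff_le, tsum_eq_sum hf0, tsum_eq_sum hg0]
  set S : ℕ → ℝ := fun n => (Real.sqrt ((n : ℝ) + 1) / Real.sqrt (n : ℝ) - 1) * u n ^ 2
    with hS_def
  have hS0 : S 0 = 0 := by simp [hS_def, h0]
  have hSN : S N = 0 := by simp [hS_def, hN N le_rfl]
  have hstep : ∀ n, g n ≤ f n - (S (n + 1) - S n) := by
    intro n
    cases n with
    | zero =>
      have h2 : Real.sqrt 2 = Real.sqrt 2 := rfl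
      simp only [hf_def, hg_def, hS_def]
      push_cast
      rw [h0]
      simp [Real.sqrt_one]
      ring_nf
      nlinarith [sq_nonneg (u 1)]
    | succ m =>
      set a := u (m + 2) with ha
      set b := u (m + 1) with hb
      set s := Real.sqrt ((m : ℝ) + 1) with hs
      set t := Real.sqrt ((m : ℝ) + 2) with ht
      set r := Real.sqrt ((m : ℝ) + 3) with hr
      have hs_pos : 0 < s := Real.sqrt_pos.mpr (by positivity)
      have ht_pos : 0 < t := Real.sqrt_pos.mpr (by positivity)
      have e1 : ((m : ℝ) + 1 + 1) = (m : ℝ) + 2 := by ring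
      have e2 : ((m : ℝ) + 1 + 2) = (m : ℝ) + 3 := by ring
      have hgm : g (m + 1) = (2 * t - r - s) / t * a ^ 2 := by
        simp only [hg_def]
        push_cast
        rw [e1, e2]
      have hfm : f (m + 1) = (a - b) ^ 2 := by simp [hf_def]; rfl
      have hSm1 : S (m + 2) = (r / t - 1) * a ^ 2 := by
        simp only [hS_def]
        push_cast
        rw [show ((m : ℝ) + 2 + 1) = (m : ℝ) + 3 by ring]
      have hSm : S (m + 1) = (t / s - 1) * b ^ 2 := by
        simp only [hS_def]
        push_cast
        rw [e1]
      rw [hgm, hfm, hSm1, hSm]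
      have key : (a - b) ^ 2 - ((r / t - 1) * a ^ 2 - (t / s - 1) * b ^ 2) -
          (2 * t - r - s) / t * a ^ 2 = (s * a - t * b) ^ 2 / (s * t) := by
        field_simp
        ring
      nlinarith [div_nonneg (sq_nonneg (s * a - t * b)) (le_of_lt (mul_pos hs_pos ht_pos))]
  calc ∑ n ∈ Finset.range N, g n
      ≤ ∑ n ∈ Finset.range N, (f n - (S (n + 1) - S n)) :=
        Finset.sum_le_sum fun n _ => hstep n
    _ = ∑ n ∈ Finset.range N, f n - (S N - S 0) := by
        rw [Finset.sum_sub_distrib, Finset.sum_range_sub]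
    _ = ∑ n ∈ Finset.range N, f n := by rw [hSN, hS0]; ring
end

section
/- Let f be a positive sequence for n ≥ 1 with f_0 = 0, V any real sequence, and u a finitely supported sequence with u_0 = 0. Then ∑_{n≥1} V_n (u_n - u_{n-1})² + ∑_{n≥1} (div(V∇f)_n / f_n) u_n² = ∑_{n≥2} V_n ( √(f_{n-1}/f_n) u_n − √(f_n/f_{n-1}) u_{n-1} )², where div(V∇f)_n = V_{n+1}(f_{n+1} − f_n) − V_n(f_n − f_{n-1}). -/
/-- The weighted first order Hardy equality on ℕ:
`∑_{n≥1} V_n |∇u_n|² + ∑_{n≥1} (div(V∇f)_n / f_n) u_n²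
  = ∑_{n≥2} V_n (√(f_{n-1}/f_n) u_n − √(f_n/f_{n-1}) u_{n-1})²`,
where `div(V∇f)_n = V_{n+1}(f_{n+1}−f_n) − V_n(f_n−f_{n-1})`. -/
theorem weighted_hardy_equality (V f u : ℕ → ℝ)
    (hf : ∀ n ≥ 1, 0 < f n) (hf0 : f 0 = 0)
    (hfin : ∃ N, ∀ n ≥ N, u n = 0) (h0 : u 0 = 0) :
    ∑' n : ℕ, V (n + 1) * (u (n + 1) - u n) ^ 2 +
      ∑' n : ℕ,
        ((V (n + 2) * (f (n + 2) - f (n + 1)) - V (n + 1) * (f (n + 1) - f n)) / f (n + 1)) *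
          (u (n + 1)) ^ 2 =
    ∑' n : ℕ,
      V (n + 2) *
        (Real.sqrt (f (n + 1) / f (n + 2)) * u (n + 2) -
          Real.sqrt (f (n + 2) / f (n + 1)) * u (n + 1)) ^ 2 := by
  obtain ⟨N, hN⟩ := hfin
  set A : ℕ → ℝ := fun n => V (n + 1) * (u (n + 1) - u n) ^ 2 with hAdef
  set B : ℕ → ℝ := fun n =>
    ((V (n + 2) * (f (n + 2) - f (n + 1)) - V (n + 1) * (f (n + 1) - f n)) / f (n + 1)) *
      (u (n + 1)) ^ 2 with hBdef
  set C : ℕ → ℝ := fun n =>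
    V (n + 2) *
      (Real.sqrt (f (n + 1) / f (n + 2)) * u (n + 2) -
        Real.sqrt (f (n + 2) / f (n + 1)) * u (n + 1)) ^ 2 with hCdef
  set T : ℕ → ℝ := fun n => V (n + 1) * (f n - f (n + 1)) / f (n + 1) * u (n + 1) ^ 2 with hTdef
  have hAz : ∀ n ∉ Finset.range N, A n = 0 := by
    intro n hn
    simp only [Finset.mem_range, not_lt] at hn
    simp [hAdef, hN _ (by omega : n + 1 ≥ N), hN _ hn]
  have hBz : ∀ n ∉ Finset.range N, B n = 0 := by
    intro n hn
    simp only [Finset.mem_range, not_lt] at hn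
    simp [hBdef, hN _ (by omega : n + 1 ≥ N)]
  have hCz : ∀ n ∉ Finset.range N, C n = 0 := by
    intro n hn
    simp only [Finset.mem_range, not_lt] at hn
    simp [hCdef, hN _ (by omega : n + 1 ≥ N), hN _ (by omega : n + 2 ≥ N)]
  rw [tsum_eq_sum hAz, tsum_eq_sum hBz, tsum_eq_sum hCz]
  -- pointwise key identity
  have key : ∀ n, C n - B n = A (n + 1) + (T (n + 1) - T n) := by
    intro n
    have ha : 0 < f (n + 1) := hf _ (by omega)
    have hb : 0 < f (n + 2) := hf _ (by omega)
    set a := f (n + 1)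
    set b := f (n + 2)
    set x := u (n + 2)
    set y := u (n + 1)
    have h1 : Real.sqrt (a / b) ^ 2 = a / b := Real.sq_sqrt (by positivity)
    have h2 : Real.sqrt (b / a) ^ 2 = b / a := Real.sq_sqrt (by positivity)
    have h3 : Real.sqrt (a / b) * Real.sqrt (b / a) = 1 := by
      rw [← Real.sqrt_mul (by positivity)]
      have : a / b * (b / a) = 1 := by field_simp
      rw [this, Real.sqrt_one]
    have expand : (Real.sqrt (a / b) * x - Real.sqrt (b / a) * y) ^ 2 =
        (a / b) * x ^ 2 + (b / a) * y ^ 2 - 2 * (x * y) := by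
      calc (Real.sqrt (a / b) * x - Real.sqrt (b / a) * y) ^ 2
          = Real.sqrt (a / b) ^ 2 * x ^ 2 + Real.sqrt (b / a) ^ 2 * y ^ 2 -
              2 * (Real.sqrt (a / b) * Real.sqrt (b / a)) * (x * y) := by ring
        _ = (a / b) * x ^ 2 + (b / a) * y ^ 2 - 2 * (x * y) := by rw [h1, h2, h3]; ring
    simp only [hCdef, hBdef, hAdef, hTdef]
    rw [show n + 1 + 1 = n + 2 from rfl]
    have ha' : f (n + 1) ≠ 0 := ne_of_gt ha
    have hb' : f (n + 2) ≠ 0 := ne_of_gt hb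
    rw [expand]
    field_simp
    ring
  have tele : ∑ n ∈ Finset.range N, (C n - B n) =
      ∑ n ∈ Finset.range N, A (n + 1) + (T N - T 0) := by
    have := Finset.sum_range_sub T N
    calc ∑ n ∈ Finset.range N, (C n - B n)
        = ∑ n ∈ Finset.range N, (A (n + 1) + (T (n + 1) - T n)) := by
          exact Finset.sum_congr rfl fun n _ => key n
      _ = ∑ n ∈ Finset.range N, A (n + 1) + ∑ n ∈ Finset.range N, (T (n + 1) - T n) := by
          rw [Finset.sum_add_distrib]
      _ = ∑ n ∈ Finset.range N, A (n + 1) + (T N - T 0) := by rw [this]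
  have hTN : T N = 0 := by simp [hTdef, hN _ (by omega : N + 1 ≥ N)]
  have hT0 : T 0 = -(V 1 * u 1 ^ 2) := by
    have h1 : 0 < f 1 := hf 1 le_rfl
    simp only [hTdef]
    rw [hf0]
    field_simp
    ring
  have hA0 : A 0 = V 1 * u 1 ^ 2 := by simp [hAdef, h0]
  have hshift : ∑ n ∈ Finset.range N, A (n + 1) = ∑ n ∈ Finset.range N, A n - A 0 := by
    have hAN : A N = 0 := by
      simp [hAdef, hN _ (by omega : N + 1 ≥ N), hN _ (le_refl N)]
    have e1 : ∑ n ∈ Finset.range (N + 1), A n = ∑ n ∈ Finset.range N, A (n + 1) + A 0 :=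
      Finset.sum_range_succ' A N
    have e2 : ∑ n ∈ Finset.range (N + 1), A n = ∑ n ∈ Finset.range N, A n + A N :=
      Finset.sum_range_succ A N
    rw [hAN, add_zero] at e2
    linarith
  have := tele
  rw [Finset.sum_sub_distrib] at this
  rw [hshift, hTN, hT0, hA0] at this
  linarith
end

section
/- Let α < 0. For every finitely supported real sequence (v_n)_{n≥0} with v_0 = 0, we have ∑_{n≥1} n^α (v_n − v_{n-1})² ≥ ((α−1)²/4) ∑_{n≥1} (n+1)^{α−2} v_n². -/
lemma bern_neg' (γ x : ℝ) (hγ : 0 ≤ γ) (hx1 : x < 1) :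
    1 + γ * x ≤ (1 - x) ^ (-γ) := by
  have h1 : (0:ℝ) < 1 - x := by linarith
  have h2 : (1 - x) ^ γ ≤ Real.exp (-(γ * x)) := by
    calc (1 - x) ^ γ ≤ (Real.exp (-x)) ^ γ := by
          apply Real.rpow_le_rpow h1.le _ hγ
          linarith [Real.add_one_le_exp (-x)]
      _ = Real.exp (-(γ * x)) := by
          rw [← Real.exp_mul]; ring_nf
  have hb : 1 + γ * x ≤ Real.exp (γ * x) := by
    linarith [Real.add_one_le_exp (γ * x)]
  have h3 : (1 + γ * x) * (1 - x) ^ γ ≤ 1 := by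
    rcases le_or_gt 0 (1 + γ * x) with h4 | h4
    · calc (1 + γ * x) * (1 - x) ^ γ ≤ Real.exp (γ * x) * Real.exp (-(γ * x)) :=
          mul_le_mul hb h2 (Real.rpow_nonneg h1.le _) (Real.exp_nonneg _)
        _ = 1 := by rw [← Real.exp_add, add_neg_cancel, Real.exp_zero]
    · have := Real.rpow_pos_of_pos h1 γ
      nlinarith
  have hgpos : (0:ℝ) < (1 - x) ^ γ := Real.rpow_pos_of_pos h1 _
  rw [Real.rpow_neg h1.le]
  nlinarith [hgpos, h3, inv_pos.mpr hgpos, mul_inv_cancel₀ hgpos.ne']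

lemma fkey_abstract (γ r u w s1 s2 z : ℝ)
    (hγ : 0 < γ) (hr0 : 0 < r) (hr1 : r ≤ 1/2)
    (hu : 1 + γ * r ≤ u) (hw1 : 1 ≤ w) (hz : 1 + γ * r^2 ≤ z) (hprod : u = w * z)
    (hs1nn : 0 ≤ s1) (hs2_1 : 1 ≤ s2) (hsq : s1 + s2 ≤ 2 - r^2/4) :
    (γ + 1/2)^2 * r^2 ≤ u^2 - u * s1 - s2 * w + 1 := by
  have hgr : 0 < γ * r := mul_pos hγ hr0
  have hu1 : 1 ≤ u := by linarith
  have t1 : γ^2 * r^2 ≤ (u - 1)^2 := by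
    nlinarith [mul_nonneg (show (0:ℝ) ≤ u - 1 - γ*r by linarith)
      (show (0:ℝ) ≤ u - 1 + γ*r by linarith)]
  have t2 : r^2/4 ≤ u * (2 - s1 - s2) := by nlinarith [sq_nonneg r]
  have huw : γ * r^2 ≤ u - w := by
    nlinarith [mul_nonneg (show (0:ℝ) ≤ w - 1 by linarith)
      (show (0:ℝ) ≤ z - 1 by nlinarith)]
  have t3 : γ * r^2 ≤ s2 * (u - w) := by
    nlinarith [mul_nonneg (show (0:ℝ) ≤ s2 - 1 by linarith)
      (show (0:ℝ) ≤ u - w by nlinarith)]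
  nlinarith [t1, t2, t3]

lemma sqrt_two_bound (r : ℝ) (h0 : 0 ≤ r) (h1 : r ≤ 1) :
    Real.sqrt (1 - r) + Real.sqrt (1 + r) ≤ 2 - r ^ 2 / 4 := by
  set a := Real.sqrt (1 - r) with ha
  set b := Real.sqrt (1 + r) with hb
  have ha2 : a ^ 2 = 1 - r := Real.sq_sqrt (by linarith)
  have hb2 : b ^ 2 = 1 + r := Real.sq_sqrt (by linarith)
  have han : 0 ≤ a := Real.sqrt_nonneg _
  have hbn : 0 ≤ b := Real.sqrt_nonneg _
  nlinarith [sq_nonneg (a - b), sq_nonneg (a + b - 2), sq_nonneg (a*b - 1),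
    sq_nonneg (a + b), sq_nonneg r, sq_nonneg (r*(a+b)), mul_nonneg han hbn]

lemma fkey (γ r : ℝ) (hγ : 0 < γ) (hr0 : 0 < r) (hr1 : r ≤ 1/2) :
    (γ + 1/2) ^ 2 * r ^ 2 ≤
      (1 - r) ^ (-(2*γ)) - (1 - r) ^ (1/2 - γ) - (1 + r) ^ (1/2 + γ) + 1 := by
  have h1 : (0:ℝ) < 1 - r := by linarith
  have h1' : (0:ℝ) < 1 + r := by linarith
  have hu : 1 + γ * r ≤ (1 - r) ^ (-γ) := bern_neg' γ r hγ.le (by linarith)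
  have hw1 : (1:ℝ) ≤ (1 + r) ^ γ := Real.one_le_rpow (by linarith) hγ.le
  have hz : 1 + γ * r^2 ≤ (1 - r^2) ^ (-γ) := bern_neg' γ (r^2) hγ.le (by nlinarith)
  have hprod : (1 - r) ^ (-γ) = (1 + r) ^ γ * (1 - r^2) ^ (-γ) := by
    have h5 : (1 - r^2 : ℝ) = (1 - r) * (1 + r) := by ring
    rw [h5, Real.mul_rpow h1.le h1'.le, mul_comm ((1-r) ^ (-γ)), ← mul_assoc,
      ← Real.rpow_add h1', add_neg_cancel, Real.rpow_zero, one_mul]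
  have hs2sq : (Real.sqrt (1+r)) ^ 2 = 1 + r := Real.sq_sqrt h1'.le
  have hs2nn : 0 ≤ Real.sqrt (1+r) := Real.sqrt_nonneg _
  have hs2_1 : (1:ℝ) ≤ Real.sqrt (1+r) := by nlinarith
  have hsq := sqrt_two_bound r hr0.le (by linarith)
  have e1 : (1 - r) ^ (-(2*γ)) = ((1 - r) ^ (-γ)) ^ 2 := by
    rw [← Real.rpow_natCast ((1-r) ^ (-γ)) 2, ← Real.rpow_mul h1.le]
    ring_nf
  have e2 : (1 - r) ^ (1/2 - γ) = (1 - r) ^ (-γ) * Real.sqrt (1 - r) := by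
    rw [Real.sqrt_eq_rpow, ← Real.rpow_add h1]
    ring_nf
  have e3 : (1 + r) ^ (1/2 + γ) = Real.sqrt (1 + r) * (1 + r) ^ γ := by
    rw [Real.sqrt_eq_rpow, ← Real.rpow_add h1']
  rw [e1, e2, e3]
  exact fkey_abstract γ r ((1-r) ^ (-γ)) ((1+r) ^ γ) (Real.sqrt (1-r)) (Real.sqrt (1+r))
    ((1 - r^2) ^ (-γ)) hγ hr0 hr1 hu hw1 hz hprod (Real.sqrt_nonneg _) hs2_1 hsq
lemma key_discrete (γ : ℝ) (hγ : 0 < γ) (n : ℕ) :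
    (γ + 1/2)^2 * (((n:ℝ)+2) ^ ((-(2*γ)) - 2) * ((n:ℝ)+2) ^ (γ + 1/2)) ≤
      ((n:ℝ)+1) ^ (-(2*γ)) * (((n:ℝ)+2) ^ (γ+1/2) - ((n:ℝ)+1) ^ (γ+1/2)) -
      ((n:ℝ)+2) ^ (-(2*γ)) * (((n:ℝ)+3) ^ (γ+1/2) - ((n:ℝ)+2) ^ (γ+1/2)) := by
  set x : ℝ := (n:ℝ) + 2 with hx_def
  have hx0 : (0:ℝ) < x := by positivity
  have hx2 : (2:ℝ) ≤ x := by
    have : (0:ℝ) ≤ (n:ℝ) := Nat.cast_nonneg n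
    rw [hx_def]; linarith
  set r : ℝ := x⁻¹ with hr_def
  have hr0 : 0 < r := by positivity
  have hr1 : r ≤ 1/2 := by
    rw [hr_def]
    rw [inv_le_comm₀ hx0 (by norm_num)]
    linarith
  have hrx : x * r = 1 := mul_inv_cancel₀ hx0.ne'
  have h1mr : (0:ℝ) < 1 - r := by linarith
  have h1pr : (0:ℝ) < 1 + r := by linarith
  have hxr1 : ((n:ℝ)+1) = x * (1 - r) := by
    have : x * (1 - r) = x - x * r := by ring
    rw [this, hrx, hx_def]; ring
  have hxr3 : ((n:ℝ)+3) = x * (1 + r) := by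
    have : x * (1 + r) = x + x * r := by ring
    rw [this, hrx, hx_def]; ring
  have hab : (-(2*γ)) + (γ + 1/2) = 1/2 - γ := by ring
  have eA : ((n:ℝ)+1) ^ (-(2*γ)) * x ^ (γ+1/2) = x ^ (1/2 - γ) * (1 - r) ^ (-(2*γ)) := by
    rw [hxr1, Real.mul_rpow hx0.le h1mr.le]
    rw [mul_comm (x ^ (-(2*γ))) _, mul_assoc, ← Real.rpow_add hx0, hab]
    ring
  have eB : ((n:ℝ)+1) ^ (-(2*γ)) * ((n:ℝ)+1) ^ (γ+1/2) = x ^ (1/2 - γ) * (1 - r) ^ (1/2 - γ) := by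
    rw [← Real.rpow_add (show (0:ℝ) < (n:ℝ)+1 by positivity), hab, hxr1,
      Real.mul_rpow hx0.le h1mr.le]
  have eC : x ^ (-(2*γ)) * ((n:ℝ)+3) ^ (γ+1/2) = x ^ (1/2 - γ) * (1 + r) ^ (1/2 + γ) := by
    rw [hxr3, Real.mul_rpow hx0.le h1pr.le, ← mul_assoc, ← Real.rpow_add hx0, hab,
      show (γ+1/2 : ℝ) = 1/2 + γ by ring]
  have eD : x ^ (-(2*γ)) * x ^ (γ+1/2) = x ^ (1/2 - γ) := by
    rw [← Real.rpow_add hx0, hab]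
  have eT : x ^ ((-(2*γ)) - 2) * x ^ (γ+1/2) = x ^ (1/2 - γ) * r ^ 2 := by
    rw [← Real.rpow_add hx0, show (-(2*γ)) - 2 + (γ+1/2) = (1/2 - γ) + (-2) by ring,
      Real.rpow_add hx0, hr_def]
    congr 1
    rw [show ((-2):ℝ) = -((2:ℕ):ℝ) by norm_num, Real.rpow_neg hx0.le, Real.rpow_natCast,
      ← inv_pow]
  have hkey := fkey γ r hγ hr0 hr1
  have hmul := mul_le_mul_of_nonneg_left hkey (Real.rpow_nonneg hx0.le (1/2 - γ))
  calc (γ + 1/2)^2 * (x ^ ((-(2*γ)) - 2) * x ^ (γ+1/2))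
      = x ^ (1/2 - γ) * ((γ + 1/2)^2 * r^2) := by rw [eT]; ring
    _ ≤ x ^ (1/2 - γ) * ((1 - r) ^ (-(2*γ)) - (1 - r) ^ (1/2 - γ) - (1 + r) ^ (1/2 + γ) + 1) := hmul
    _ = ((n:ℝ)+1) ^ (-(2*γ)) * (x ^ (γ+1/2) - ((n:ℝ)+1) ^ (γ+1/2)) -
        x ^ (-(2*γ)) * (((n:ℝ)+3) ^ (γ+1/2) - x ^ (γ+1/2)) := by
        have expand : x ^ (1/2 - γ) * ((1 - r) ^ (-(2*γ)) - (1 - r) ^ (1/2 - γ) -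
            (1 + r) ^ (1/2 + γ) + 1) =
            (x ^ (1/2 - γ) * (1 - r) ^ (-(2*γ))) - (x ^ (1/2 - γ) * (1 - r) ^ (1/2 - γ)) -
            (x ^ (1/2 - γ) * (1 + r) ^ (1/2 + γ)) + x ^ (1/2 - γ) := by ring
        rw [expand, ← eA, ← eB, ← eC, ← eD]
        ring

lemma term_lower (a g g' w w' : ℝ) (ha : 0 ≤ a) (hg : 0 < g) (hg' : 0 < g') :
    a * (g' - g) * w'^2 / g' - a * (g' - g) * w^2 / g ≤ a * (w' - w)^2 := by
  rw [div_sub_div _ _ hg'.ne' hg.ne', div_le_iff₀ (by positivity)]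
  nlinarith [mul_nonneg ha (sq_nonneg (g * w' - g' * w))]


/-- Shifted weighted Hardy inequality for negative powers `α < 0`:
`∑_{n≥1} n^α |∇v_n|² ≥ ((α−1)²/4) ∑_{n≥1} (n+1)^{α−2} v_n²`. -/
theorem hardy_shifted_neg (α : ℝ) (hα : α < 0) (v : ℕ → ℝ)
    (hfin : ∃ N, ∀ n ≥ N, v n = 0) (h0 : v 0 = 0) :
    ∑' n : ℕ, ((n : ℝ) + 1) ^ α * (v (n + 1) - v n) ^ 2 ≥
      ((α - 1) ^ 2 / 4) * ∑' n : ℕ, ((n : ℝ) + 2) ^ (α - 2) * (v (n + 1)) ^ 2 := by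
  obtain ⟨N, hN⟩ := hfin
  set γ : ℝ := -α/2 with hγdef
  have hγ : 0 < γ := by rw [hγdef]; linarith
  have hαγ : α = -(2*γ) := by rw [hγdef]; ring
  have hα2 : α - 2 = -(2*γ) - 2 := by rw [hαγ]
  have hconst : (α - 1)^2/4 = (γ + 1/2)^2 := by rw [hαγ]; ring
  -- reduce tsums to finite sums
  have e1 : (∑' n : ℕ, ((n : ℝ) + 1) ^ α * (v (n + 1) - v n) ^ 2)
      = ∑ n ∈ Finset.range N, ((n : ℝ) + 1) ^ α * (v (n + 1) - v n) ^ 2 := by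
    apply tsum_eq_sum
    intro b hb
    simp only [Finset.mem_range, not_lt] at hb
    rw [hN (b+1) (by omega), hN b (by omega)]
    ring
  have e2 : (∑' n : ℕ, ((n : ℝ) + 2) ^ (α - 2) * (v (n + 1)) ^ 2)
      = ∑ n ∈ Finset.range N, ((n : ℝ) + 2) ^ (α - 2) * (v (n + 1)) ^ 2 := by
    apply tsum_eq_sum
    intro b hb
    simp only [Finset.mem_range, not_lt] at hb
    rw [hN (b+1) (by omega)]
    ring
  rw [e1, e2, ge_iff_le, hconst]
  -- auxiliary sequences
  set g : ℕ → ℝ := fun n => ((n:ℝ)+1) ^ (γ+1/2) with hgdef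
  set P : ℕ → ℝ := fun n => ((n:ℝ)+1) ^ (-(2*γ)) * (g (n+1) - g n) with hPdef
  set c : ℕ → ℝ := fun n => P n * (v n)^2 / g n with hcdef
  have hgpos : ∀ n, 0 < g n := fun n => Real.rpow_pos_of_pos (by positivity) _
  have hapos : ∀ n : ℕ, (0:ℝ) ≤ ((n:ℝ)+1) ^ (-(2*γ)) :=
    fun n => Real.rpow_nonneg (by positivity) _
  -- key discrete inequality in terms of P and g
  have keyP : ∀ n : ℕ, (γ+1/2)^2 * (((n:ℝ)+2) ^ (α-2) * g (n+1)) ≤ P n - P (n+1) := by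
    intro n
    have h := key_discrete γ hγ n
    rw [hα2]
    simp only [hPdef, hgdef]
    push_cast
    convert h using 2 <;> push_cast <;> ring_nf
  -- step 4 termwise
  have step4 : ∀ n : ℕ, (γ+1/2)^2 * (((n:ℝ)+2) ^ (α-2) * (v (n+1))^2) ≤
      (P n - P (n+1)) * ((v (n+1))^2 / g (n+1)) := by
    intro n
    have hq : (0:ℝ) ≤ (v (n+1))^2 / g (n+1) := by positivity
    have h := mul_le_mul_of_nonneg_right (keyP n) hq
    calc (γ+1/2)^2 * (((n:ℝ)+2) ^ (α-2) * (v (n+1))^2)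
        = (γ+1/2)^2 * (((n:ℝ)+2) ^ (α-2) * g (n+1)) * ((v (n+1))^2 / g (n+1)) := by
          field_simp
          exact (mul_div_cancel_right₀ _ (hgpos (n+1)).ne').symm
      _ ≤ (P n - P (n+1)) * ((v (n+1))^2 / g (n+1)) := h
  -- shift sum of c
  have hc0 : c 0 = 0 := by simp [hcdef, h0]
  have hcN : c N = 0 := by simp [hcdef, hN N le_rfl]
  have hshift : ∑ n ∈ Finset.range N, c (n+1) = ∑ n ∈ Finset.range N, c n := by
    have h1 := Finset.sum_range_succ' c N
    have h2 := Finset.sum_range_succ c N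
    rw [h2] at h1
    rw [hc0, hcN] at h1
    linarith
  -- assemble
  calc (γ + 1/2)^2 * ∑ n ∈ Finset.range N, ((n : ℝ) + 2) ^ (α - 2) * (v (n + 1)) ^ 2
      = ∑ n ∈ Finset.range N, (γ+1/2)^2 * (((n : ℝ) + 2) ^ (α - 2) * (v (n + 1)) ^ 2) := by
        rw [Finset.mul_sum]
    _ ≤ ∑ n ∈ Finset.range N, (P n - P (n+1)) * ((v (n+1))^2 / g (n+1)) :=
        Finset.sum_le_sum (fun n _ => step4 n)
    _ = ∑ n ∈ Finset.range N, (P n * (v (n+1))^2 / g (n+1) - c (n+1)) := by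
        apply Finset.sum_congr rfl
        intro n _
        rw [hcdef]
        ring
    _ = ∑ n ∈ Finset.range N, (P n * (v (n+1))^2 / g (n+1)) -
        ∑ n ∈ Finset.range N, c (n+1) := Finset.sum_sub_distrib _ _
    _ = ∑ n ∈ Finset.range N, (P n * (v (n+1))^2 / g (n+1)) -
        ∑ n ∈ Finset.range N, c n := by rw [hshift]
    _ = ∑ n ∈ Finset.range N, (P n * (v (n+1))^2 / g (n+1) - c n) :=
        (Finset.sum_sub_distrib _ _).symm
    _ ≤ ∑ n ∈ Finset.range N, ((n : ℝ) + 1) ^ α * (v (n + 1) - v n) ^ 2 := by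
        apply Finset.sum_le_sum
        intro n _
        rw [hcdef, hPdef, hαγ]
        exact term_lower _ _ _ _ _ (hapos n) (hgpos n) (hgpos (n+1))
end

section
/- Let α < 0. For every finitely supported real sequence (u_n)_{n≥0} with u_0 = u_1 = 0, we have ∑_{n≥2} (n−1)^α (u_n − u_{n-1})² ≥ ((α−1)²/4) ∑_{n≥2} n^{α−2} u_n². -/
open Real

set_option maxHeartbeats 1000000


/-- Bernoulli for negative exponent `-q`, `q ≥ 1`. -/
lemma bern_neg {q s : ℝ} (hq : 1 ≤ q) (hs : -1 < s) : 1 - q * s ≤ (1 + s) ^ (-q) := by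
  have h1s : (0:ℝ) < 1 + s := by linarith
  set s' : ℝ := -s / (1 + s) with hs'def
  have hs' : -1 ≤ s' := by
    rw [hs'def, le_div_iff₀ h1s]
    nlinarith [sq_nonneg s]
  have hrw : 1 + s' = (1 + s)⁻¹ := by rw [hs'def]; field_simp; ring
  have hb : 1 + q * s' ≤ (1 + s') ^ q := one_add_mul_self_le_rpow_one_add hs' hq
  have h2 : (1 + s') ^ q = (1 + s) ^ (-q) := by
    rw [hrw, ← rpow_neg_one (1+s), ← rpow_mul h1s.le]; ring_nf
  rw [h2] at hb
  refine le_trans ?_ hb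
  have : 0 ≤ q * (s' + s) := by
    have : s' + s = s^2/(1+s) := by rw [hs'def]; field_simp; ring
    rw [this]
    positivity
  linarith

/-- tangent-line form: `y^(-q) ≥ c^(-q) - q c^(-q-1) (y-c)`. -/
lemma tangent_neg {q : ℝ} (hq : 1 ≤ q) {y c : ℝ} (hy : 0 < y) (hc : 0 < c) :
    c ^ (-q) - q * c ^ (-q-1) * (y - c) ≤ y ^ (-q) := by
  have hs : (-1:ℝ) < y/c - 1 := by
    have : 0 < y/c := div_pos hy hc
    linarith
  have hb := bern_neg hq hs
  have h1 : (1 + (y/c - 1)) = y/c := by ring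
  rw [h1, div_rpow hy.le hc.le] at hb
  have hcq : 0 < c ^ (-q) := rpow_pos_of_pos hc _
  have key : c ^ (-q) * (1 - q * (y/c - 1)) ≤ c ^ (-q) * (y ^ (-q) / c ^ (-q)) := by
    exact mul_le_mul_of_nonneg_left hb hcq.le
  rw [mul_div_cancel₀ _ (ne_of_gt hcq)] at key
  refine le_trans (le_of_eq ?_) key
  have hexp : c ^ (-q-1) = c ^ (-q) * c⁻¹ := by
    rw [← rpow_neg_one c, ← rpow_add hc]; ring_nf
  rw [hexp]
  field_simp

lemma tele (c w : ℕ → ℝ) (M : ℕ) :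
    ∑ n ∈ Finset.range M, c n * (w (n+2) - w (n+1)) =
      ∑ n ∈ Finset.range M, (c n - c (n+1)) * w (n+2) + c M * w (M+1) - c 0 * w 1 := by
  induction M with
  | zero => simp
  | succ M ih => rw [Finset.sum_range_succ, Finset.sum_range_succ, ih]; ring

lemma pointP {φ ψ u v : ℝ} (hφ : 0 < φ) (hψ : 0 < ψ) :
    (φ - ψ) * (u^2/φ - v^2/ψ) ≤ (u - v)^2 := by
  have key : (u - v)^2 - (φ - ψ) * (u^2/φ - v^2/ψ) = (ψ*u - φ*v)^2/(φ*ψ) := by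
    field_simp; ring
  nlinarith [div_nonneg (sq_nonneg (ψ*u - φ*v)) (le_of_lt (mul_pos hφ hψ))]

lemma D_lemma {β t : ℝ} (hβ : 1/2 < β) (ht : 0 ≤ t) (ht1 : t ≤ 1) :
    β^2 * ((1+t/2)^(-β-2) * (1-β*t/2)) ≤ β * ((1+t)^(β-2) * (β+(2*β-1)*t)) := by
  have hA : (0:ℝ) < 1 + t := by linarith
  have hB : (0:ℝ) < 1 + t/2 := by linarith
  have hP : (0:ℝ) < (1+t)*(1+t/2) := mul_pos hA hB
  have hAβ : (0:ℝ) < (1+t)^(β-2) := rpow_pos_of_pos hA _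
  have hBβ : (0:ℝ) < (1+t/2)^(-β-2) := rpow_pos_of_pos hB _
  have hlin : (0:ℝ) ≤ β + (2*β-1)*t := by nlinarith
  have e2 : ((2:ℝ)) = ((2:ℕ):ℝ) := by norm_num
  -- main core inequality:
  have core : β * (1 - β*t/2) * (1+t)^2 ≤
      ((1+t)*(1+t/2))^β * ((1+t/2)^2 * (β+(2*β-1)*t)) := by
    have hPm1 : (1+t)*(1+t/2) = 1 + (t*(3+t)/2) := by ring
    rcases le_or_gt 1 β with hb1 | hb1
    · -- β ≥ 1 : P^β ≥ 1 + β (P-1)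
      have hs : (-1:ℝ) ≤ t*(3+t)/2 := by nlinarith
      have hbern := one_add_mul_self_le_rpow_one_add hs hb1
      have hPb : 1 + β*(t*(3+t)/2) ≤ ((1+t)*(1+t/2))^β := by
        rw [hPm1]; exact hbern
      have hpos : (0:ℝ) ≤ (1+t/2)^2 * (β+(2*β-1)*t) := by positivity
      have hpoly : β * (1 - β*t/2) * (1+t)^2 ≤
          (1 + β*(t*(3+t)/2)) * ((1+t/2)^2 * (β+(2*β-1)*t)) := by
        nlinarith [mul_nonneg ht (sub_nonneg.2 hb1), sq_nonneg t,
          mul_nonneg (mul_nonneg ht ht) (sub_nonneg.2 hb1),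
          mul_nonneg (mul_nonneg (mul_nonneg ht ht) ht) (sub_nonneg.2 hb1), sq_nonneg (β-1),
          mul_nonneg (mul_nonneg ht ht) ht, mul_nonneg ht (mul_nonneg ht (mul_nonneg ht ht)),
          mul_nonneg (mul_nonneg ht (sub_nonneg.2 hb1)) (sub_nonneg.2 hb1)]
      exact hpoly.trans (mul_le_mul_of_nonneg_right hPb hpos)
    · -- 1/2 < β < 1 : P^(1-β) ≤ 1 + (1-β)(P-1)
      have hs : (-1:ℝ) ≤ t*(3+t)/2 := by nlinarith
      have hbern := rpow_one_add_le_one_add_mul_self hs (by linarith : (0:ℝ) ≤ 1-β) (by linarith : 1-β ≤ 1)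
      have hQ : ((1+t)*(1+t/2))^(1-β) ≤ 1 + (1-β)*(t*(3+t)/2) := by
        rw [hPm1]; exact hbern
      have hP1β : (0:ℝ) < ((1+t)*(1+t/2))^(1-β) := rpow_pos_of_pos hP _
      have hsplit : ((1+t)*(1+t/2))^β * ((1+t)*(1+t/2))^(1-β) = (1+t)*(1+t/2) := by
        rw [← rpow_add hP]; norm_num
      have hbt : β*t ≤ 1 := by nlinarith
      have hLHSpos : (0:ℝ) ≤ β * (1 - β*t/2) * (1+t)^2 := by
        have h1 : (0:ℝ) ≤ 1 - β*t/2 := by linarith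
        have h2 : (0:ℝ) ≤ β := by linarith
        positivity
      -- polynomial core (poly2)
      have hpoly : β * (1 - β*t/2) * (1+t)^2 * (1 + (1-β)*(t*(3+t)/2)) ≤
          ((1+t)*(1+t/2)) * ((1+t/2)^2 * (β+(2*β-1)*t)) := by
        have he : (0:ℝ) ≤ 2*β-1 := by linarith
        have hd : (0:ℝ) ≤ 1-β := by linarith
        have hq0 : (0:ℝ) ≤ -1 + β + 2*β^2 := by nlinarith
        have hq1 : (0:ℝ) ≤ -5/2 + 11/4*β + 21/4*β^2 - 3/4*β^3 := by
          nlinarith [mul_nonneg he hd, mul_nonneg (mul_nonneg hd hd) hd]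
        have hq2 : (0:ℝ) ≤ -9/4 + 23/8*β + 19/4*β^2 - 7/4*β^3 := by
          nlinarith [mul_nonneg he hd, mul_nonneg (mul_nonneg hd hd) hd, mul_nonneg (mul_nonneg he hd) hd]
        have hq3 : (0:ℝ) ≤ -7/8 + 11/8*β + 7/4*β^2 - 5/4*β^3 := by
          nlinarith [mul_nonneg he hd, mul_nonneg (mul_nonneg hd hd) hd, mul_nonneg (mul_nonneg he hd) hd]
        have hq4 : (0:ℝ) ≤ -1/8 + 1/4*β + 1/4*β^2 - 1/4*β^3 := by
          nlinarith [mul_nonneg he hd, mul_nonneg (mul_nonneg hd hd) hd, mul_nonneg (mul_nonneg he hd) hd]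
        have h2 : (0:ℝ) ≤ t^2 := sq_nonneg t
        have h3 : (0:ℝ) ≤ t^3 := by positivity
        have h4 : (0:ℝ) ≤ t^4 := by positivity
        have h5 : (0:ℝ) ≤ t^5 := by positivity
        nlinarith [mul_nonneg hq0 ht, mul_nonneg hq1 h2, mul_nonneg hq2 h3,
          mul_nonneg hq3 h4, mul_nonneg hq4 h5]
      -- combine: LHS * P^(1-β) ≤ LHS * Q ≤ P * stuff = P^β * P^(1-β) * stuff
      have step1 : β * (1 - β*t/2) * (1+t)^2 * ((1+t)*(1+t/2))^(1-β) ≤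
          ((1+t)*(1+t/2))^β * ((1+t/2)^2 * (β+(2*β-1)*t)) * ((1+t)*(1+t/2))^(1-β) := by
        calc β * (1 - β*t/2) * (1+t)^2 * ((1+t)*(1+t/2))^(1-β)
            ≤ β * (1 - β*t/2) * (1+t)^2 * (1 + (1-β)*(t*(3+t)/2)) :=
              mul_le_mul_of_nonneg_left hQ hLHSpos
          _ ≤ ((1+t)*(1+t/2)) * ((1+t/2)^2 * (β+(2*β-1)*t)) := hpoly
          _ = ((1+t)*(1+t/2))^β * ((1+t/2)^2 * (β+(2*β-1)*t)) * ((1+t)*(1+t/2))^(1-β) := by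
              conv_lhs => rw [← hsplit]
              ring
      exact le_of_mul_le_mul_right step1 hP1β
  -- now convert core to the stated form
  have hexpand : (1+t)^(β-2) * (1+t/2)^(β+2)
      = ((1+t)*(1+t/2))^β * (1+t/2)^2 / (1+t)^2 := by
    rw [mul_rpow hA.le hB.le, rpow_sub hA, rpow_add hB, e2, rpow_natCast, rpow_natCast]
    field_simp
  have hBinv : (1+t/2)^(-β-2) = (1+t/2)^(β+2) * ((1+t/2)^(β+2))⁻¹ * (1+t/2)^(-β-2) := by
    rw [mul_inv_cancel₀ (ne_of_gt (rpow_pos_of_pos hB _)), one_mul]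
  -- target: β^2 * ((1+t/2)^(-β-2) * (1-β*t/2)) ≤ β * ((1+t)^(β-2) * (β+(2β-1)t))
  have hD : β * (1 - β*t/2) ≤ (1+t)^(β-2) * (1+t/2)^(β+2) * (β + (2*β-1)*t) := by
    have h2pos : (0:ℝ) < (1+t)^2 := by positivity
    rw [hexpand]
    rw [div_mul_eq_mul_div, le_div_iff₀ h2pos]
    calc β * (1 - β*t/2) * (1+t)^2 ≤ ((1+t)*(1+t/2))^β * ((1+t/2)^2 * (β+(2*β-1)*t)) := core
      _ = ((1+t)*(1+t/2))^β * (1+t/2)^2 * (β+(2*β-1)*t) := by ring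
  -- multiply hD by β * (1+t/2)^(-β-2) ≥ 0
  have hβ0 : (0:ℝ) < β := by linarith
  have hmul := mul_le_mul_of_nonneg_left hD (by positivity : (0:ℝ) ≤ β * (1+t/2)^(-β-2))
  have hcancel : (1+t/2)^(-β-2) * (1+t/2)^(β+2) = 1 := by
    rw [← rpow_add hB]; norm_num
  calc β^2 * ((1+t/2)^(-β-2) * (1-β*t/2))
      = β * (1+t/2)^(-β-2) * (β * (1 - β*t/2)) := by ring
    _ ≤ β * (1+t/2)^(-β-2) * ((1+t)^(β-2) * (1+t/2)^(β+2) * (β + (2*β-1)*t)) := hmul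
    _ = β * ((1+t)^(β-2) * (β+(2*β-1)*t)) * ((1+t/2)^(-β-2) * (1+t/2)^(β+2)) := by ring
    _ = β * ((1+t)^(β-2) * (β+(2*β-1)*t)) := by rw [hcancel, mul_one]

lemma star {β t : ℝ} (hβ : 1/2 < β) (ht : 0 ≤ t) (ht1 : t ≤ 1) :
    β^2 * t * (1+t/2)^(-β-1) ≤ (1-β) + (2*β-1)*(1+t)^β - β*(1+t)^(β-1) := by
  set Φ : ℝ → ℝ := fun s => (1-β) + (2*β-1)*(1+s)^β - β*(1+s)^(β-1) - β^2*s*(1+s/2)^(-β-1)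
    with hΦ
  have hderiv : ∀ s : ℝ, 0 ≤ s →
      HasDerivAt Φ (β*((1+s)^(β-2)*(β+(2*β-1)*s)) - β^2*((1+s/2)^(-β-2)*(1-β*s/2))) s := by
    intro s hs
    have h1s : (0:ℝ) < 1 + s := by linarith
    have h2s : (0:ℝ) < 1 + s/2 := by linarith
    have d1 : HasDerivAt (fun x : ℝ => 1 + x) 1 s := (hasDerivAt_id s).const_add 1
    have d2 : HasDerivAt (fun x : ℝ => 1 + x/2) (1/2) s := by
      simpa using ((hasDerivAt_id s).div_const 2).const_add 1
    have dA : HasDerivAt (fun x : ℝ => (1+x)^β) (1*β*(1+s)^(β-1)) s :=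
      d1.rpow_const (Or.inl h1s.ne')
    have dB : HasDerivAt (fun x : ℝ => (1+x)^(β-1)) (1*(β-1)*(1+s)^(β-1-1)) s :=
      d1.rpow_const (Or.inl h1s.ne')
    have dC : HasDerivAt (fun x : ℝ => (1+x/2)^(-β-1)) (1/2*(-β-1)*(1+s/2)^(-β-1-1)) s :=
      d2.rpow_const (Or.inl h2s.ne')
    have dD : HasDerivAt (fun x : ℝ => β^2*(x*(1+x/2)^(-β-1)))
        (β^2*(1*(1+s/2)^(-β-1) + s*(1/2*(-β-1)*(1+s/2)^(-β-1-1)))) s :=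
      ((hasDerivAt_id s).mul dC).const_mul (β^2)
    have dall := (((dA.const_mul (2*β-1)).const_add (1-β)).sub (dB.const_mul β)).sub dD
    have hfeq : (fun s : ℝ => (1-β) + (2*β-1)*(1+s)^β - β*(1+s)^(β-1) - β^2*(s*(1+s/2)^(-β-1)))
        = Φ := by
      funext x; simp only [hΦ]; ring
    rw [← hfeq]
    refine dall.congr_deriv ?_
    have e1 : (1+s)^(β-1) = (1+s)^(β-2)*(1+s) := by
      rw [show β-1 = (β-2)+1 by ring, rpow_add_one h1s.ne']
    have e2 : (1+s/2)^(-β-1) = (1+s/2)^(-β-2)*(1+s/2) := by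
      rw [show -β-1 = (-β-2)+1 by ring, rpow_add_one h2s.ne']
    have e3 : (1+s)^(β-1-1) = (1+s)^(β-2) := by rw [show β-1-1 = β-2 by ring]
    have e4 : (1+s/2)^(-β-1-1) = (1+s/2)^(-β-2) := by rw [show -β-1-1 = -β-2 by ring]
    rw [e3, e4, e1, e2]; ring
  have hcont : ContinuousOn Φ (Set.Icc (0:ℝ) 1) := fun s hs =>
    (hderiv s hs.1).continuousAt.continuousWithinAt
  have hmono : MonotoneOn Φ (Set.Icc (0:ℝ) 1) := by
    apply monotoneOn_of_deriv_nonneg (convex_Icc 0 1) hcont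
    · intro s hs
      rw [interior_Icc] at hs
      exact (hderiv s hs.1.le).differentiableAt.differentiableWithinAt
    · intro s hs
      rw [interior_Icc] at hs
      rw [(hderiv s hs.1.le).deriv]
      have := D_lemma hβ hs.1.le hs.2.le
      linarith
  have h0 : Φ 0 = 0 := by
    simp only [hΦ]
    norm_num
    ring
  have := hmono (Set.mem_Icc.2 ⟨le_refl 0, zero_le_one⟩) (Set.mem_Icc.2 ⟨ht, ht1⟩) ht
  rw [h0] at this
  simp only [hΦ] at this
  linarith

/-- lower bound for `-g'` -/
lemma deriv_lb {β x : ℝ} (hβ : 1/2 < β) (hx : 1 ≤ x) :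
    β^2*(x+1/2)^(-β-1) ≤
      (1-β)*x^(-β) + (2*β-1)*(x^(-(2*β))*(x+1)^β) - β*(x^(1-2*β)*(x+1)^(β-1)) := by
  have hx0 : (0:ℝ) < x := by linarith
  have hxh : (0:ℝ) < x + 1/2 := by linarith
  have hx1 : (0:ℝ) < x + 1 := by linarith
  have ht : (0:ℝ) ≤ 1/x := by positivity
  have ht1 : 1/x ≤ 1 := by rw [div_le_one hx0]; linarith
  have hst := star hβ ht ht1
  have hxb : (0:ℝ) < x^(-β) := rpow_pos_of_pos hx0 _
  have hst2 := mul_le_mul_of_nonneg_left hst hxb.le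
  have hxmul : ∀ a b : ℝ, x^a * x^b = x^(a+b) := fun a b => (rpow_add hx0 a b).symm
  have e1 : (1+(1/x)/2) = (x+1/2)/x := by rw [eq_div_iff hx0.ne']; field_simp
  have e2 : (1+(1/x)) = (x+1)/x := by rw [eq_div_iff hx0.ne']; field_simp
  have eB : (1+(1/x)/2)^(-β-1) = (x+1/2)^(-β-1) * x^(β+1) := by
    rw [e1, div_rpow hxh.le hx0.le, div_eq_mul_inv, ← rpow_neg hx0.le]
    rw [show -(-β-1) = β+1 by ring]
  have eA1 : (1+(1/x))^β = (x+1)^β * x^(-β) := by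
    rw [e2, div_rpow hx1.le hx0.le, div_eq_mul_inv, ← rpow_neg hx0.le]
  have eA2 : (1+(1/x))^(β-1) = (x+1)^(β-1) * x^(-(β-1)) := by
    rw [e2, div_rpow hx1.le hx0.le, div_eq_mul_inv, ← rpow_neg hx0.le]
  have eL : x^(-β) * (β^2 * (1/x) * (1+(1/x)/2)^(-β-1)) = β^2*(x+1/2)^(-β-1) := by
    rw [eB]
    have h1x : (1:ℝ)/x = x^(-1:ℝ) := by
      rw [rpow_neg_one, one_div]
    rw [h1x]
    have : x^(-β) * (β ^ 2 * x^(-1:ℝ) * ((x + 1/2)^(-β-1) * x^(β+1)))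
        = β^2 * (x+1/2)^(-β-1) * (x^(-β) * x^(-1:ℝ) * x^(β+1)) := by ring
    rw [this, hxmul, hxmul, show -β + -1 + (β+1) = 0 by ring, rpow_zero, mul_one]
  have eR : x^(-β) * ((1-β) + (2*β-1)*(1+(1/x))^β - β*(1+(1/x))^(β-1)) =
      (1-β)*x^(-β) + (2*β-1)*(x^(-(2*β))*(x+1)^β) - β*(x^(1-2*β)*(x+1)^(β-1)) := by
    rw [eA1, eA2]
    have h1 : x^(-β) * x^(-β) = x^(-(2*β)) := by rw [hxmul, show -β + -β = -(2*β) by ring]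
    have h2 : x^(-β) * x^(-(β-1)) = x^(1-2*β) := by rw [hxmul, show -β + -(β-1) = 1-2*β by ring]
    calc x^(-β) * ((1-β) + (2*β-1)*((x+1)^β * x^(-β)) - β*((x+1)^(β-1) * x^(-(β-1))))
        = (1-β)*x^(-β) + (2*β-1)*((x^(-β) * x^(-β))*(x+1)^β)
          - β*((x^(-β) * x^(-(β-1)))*(x+1)^(β-1)) := by ring
      _ = _ := by rw [h1, h2]
  rw [eL, eR] at hst2
  exact hst2

lemma gf_hasDeriv {β x : ℝ} (hx : 0 < x) :
    HasDerivAt (fun y : ℝ => y^(1-2*β)*(y+1)^β - y^(1-β))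
      (((1-2*β)*x^(-(2*β)))*(x+1)^β + x^(1-2*β)*(β*(x+1)^(β-1)) - (1-β)*x^(-β)) x := by
  have hx1 : (0:ℝ) < x + 1 := by linarith
  have d1 : HasDerivAt (fun y : ℝ => y^(1-2*β)) ((1-2*β)*x^(1-2*β-1)) x :=
    Real.hasDerivAt_rpow_const (Or.inl hx.ne')
  have d2 : HasDerivAt (fun y : ℝ => (y+1)^β) (1*β*(x+1)^(β-1)) x :=
    ((hasDerivAt_id x).add_const 1).rpow_const (Or.inl hx1.ne')
  have d3 : HasDerivAt (fun y : ℝ => y^(1-β)) ((1-β)*x^(1-β-1)) x :=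
    Real.hasDerivAt_rpow_const (Or.inl hx.ne')
  have dall := (d1.mul d2).sub d3
  refine dall.congr_deriv ?_
  rw [show 1-2*β-1 = -(2*β) by ring, show 1-β-1 = -β by ring]
  ring

lemma key_lemma {β c : ℝ} (hβ : 1/2 < β) (hc : 2 ≤ c) :
    β^2 * c^(-β-1) ≤
      ((c-1)^(1-2*β)*(c-1+1)^β - (c-1)^(1-β)) - (c^(1-2*β)*(c+1)^β - c^(1-β)) := by
  have hc0 : (0:ℝ) < c := by linarith
  set F : ℝ → ℝ := fun y => -(y^(1-2*β)*(y+1)^β - y^(1-β)) - β^2*c^(-β-1)*y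
      + β^2*(β+1)*c^(-β-2)/2*(y+(1/2-c))^2 with hF
  have hderiv : ∀ y : ℝ, 1 ≤ y → HasDerivAt F
      (-(((1-2*β)*y^(-(2*β)))*(y+1)^β + y^(1-2*β)*(β*(y+1)^(β-1)) - (1-β)*y^(-β))
        - β^2*c^(-β-1) + β^2*(β+1)*c^(-β-2)*(y+(1/2-c))) y := by
    intro y hy
    have hy0 : (0:ℝ) < y := by linarith
    have dq : HasDerivAt (fun y : ℝ => β^2*(β+1)*c^(-β-2)/2*(y+(1/2-c))^2)
        (β^2*(β+1)*c^(-β-2)/2*(2*(y+(1/2-c))^1*1)) y :=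
      (((hasDerivAt_id y).add_const (1/2-c)).pow 2).const_mul _
    have dlin : HasDerivAt (fun y : ℝ => β^2*c^(-β-1)*y) (β^2*c^(-β-1)*1) y :=
      (hasDerivAt_id y).const_mul _
    have dall := (((gf_hasDeriv (β := β) hy0).neg).sub dlin).add dq
    refine dall.congr_deriv ?_
    ring
  have hmono : MonotoneOn F (Set.Icc (c-1) c) := by
    apply monotoneOn_of_deriv_nonneg (convex_Icc _ _)
    · exact fun y hy => (hderiv y (by have := hy.1; linarith)).continuousAt.continuousWithinAt
    · intro y hy
      rw [interior_Icc] at hy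
      exact (hderiv y (by have := hy.1; linarith)).differentiableAt.differentiableWithinAt
    · intro y hy
      rw [interior_Icc] at hy
      have hy1 : (1:ℝ) ≤ y := by have := hy.1; linarith
      rw [(hderiv y hy1).deriv]
      have hlb := deriv_lb hβ hy1
      have htan := tangent_neg (q := β+1) (by linarith : (1:ℝ) ≤ β+1)
        (show (0:ℝ) < y+1/2 by linarith) hc0
      rw [show -(β+1) = -β-1 by ring, show -β-1-1 = -β-2 by ring] at htan
      have htan2 := mul_le_mul_of_nonneg_left htan (sq_nonneg β)
      nlinarith [htan2, hlb]
  have hle := hmono (Set.mem_Icc.2 ⟨le_refl (c-1), by linarith⟩)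
    (Set.mem_Icc.2 ⟨by linarith, le_refl c⟩) (by linarith)
  simp only [hF] at hle
  nlinarith [hle]

/-- Shifted weighted Hardy inequality for `α < 0`:
`∑_{n≥2} (n−1)^α |∇u_n|² ≥ ((α−1)²/4) ∑_{n≥2} n^{α−2} u_n²`. -/
theorem hardy_shifted_neg' (α : ℝ) (hα : α < 0) (u : ℕ → ℝ)
    (hfin : ∃ N, ∀ n ≥ N, u n = 0) (h0 : u 0 = 0) (h1 : u 1 = 0) :
    ∑' n : ℕ, ((n : ℝ) + 1) ^ α * (u (n + 2) - u (n + 1)) ^ 2 ≥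
      ((α - 1) ^ 2 / 4) * ∑' n : ℕ, ((n : ℝ) + 2) ^ (α - 2) * (u (n + 2)) ^ 2 := by
  obtain ⟨N, hN⟩ := hfin
  set β : ℝ := (1 - α)/2 with hβdef
  have hβ : 1/2 < β := by rw [hβdef]; linarith
  have hαβ : α = 1 - 2*β := by rw [hβdef]; ring
  have hfz : ∀ n ∉ Finset.range N, ((n : ℝ) + 1) ^ α * (u (n + 2) - u (n + 1)) ^ 2 = 0 := by
    intro n hn
    rw [Finset.mem_range, not_lt] at hn
    rw [hN (n+2) (by omega), hN (n+1) (by omega)]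
    ring
  have hgz : ∀ n ∉ Finset.range N, ((n : ℝ) + 2) ^ (α-2) * (u (n + 2)) ^ 2 = 0 := by
    intro n hn
    rw [Finset.mem_range, not_lt] at hn
    rw [hN (n+2) (by omega)]
    ring
  rw [tsum_eq_sum hfz, tsum_eq_sum hgz, ge_iff_le, Finset.mul_sum]
  set φf : ℕ → ℝ := fun m => (m:ℝ)^β with hφdef
  set w : ℕ → ℝ := fun m => (u m)^2 / φf m with hwdef
  set cc : ℕ → ℝ := fun n => ((n:ℝ)+1)^α * (φf (n+2) - φf (n+1)) with hccdef
  have hφpos : ∀ m : ℕ, 0 < m → 0 < φf m := by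
    intro m hm
    have : (0:ℝ) < (m:ℝ) := by exact_mod_cast hm
    exact rpow_pos_of_pos this β
  -- expand helper
  have expand : ∀ x : ℝ, 0 < x → x^(1-2*β)*(x+1)^β - x^(1-β) = x^(1-2*β)*((x+1)^β - x^β) := by
    intro x hx
    rw [mul_sub]
    have : x^(1-2*β) * x^β = x^(1-β) := by
      rw [← rpow_add hx, show 1-2*β+β = 1-β by ring]
    rw [this]
  have step3 : ∀ n ∈ Finset.range N,
      (α-1)^2/4 * (((n : ℝ) + 2) ^ (α-2) * (u (n + 2)) ^ 2) ≤ (cc n - cc (n+1)) * w (n+2) := by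
    intro n _
    have hc2 : (2:ℝ) ≤ (n:ℝ)+2 := by have : (0:ℝ) ≤ (n:ℝ) := Nat.cast_nonneg n; linarith
    have hc0 : (0:ℝ) < (n:ℝ)+2 := by positivity
    have hc10 : (0:ℝ) < (n:ℝ)+1 := by positivity
    have hkey := key_lemma hβ hc2
    have e0 : ((n:ℝ)+2-1) = (n:ℝ)+1 := by ring
    rw [e0, expand _ hc10, expand _ hc0, show (n:ℝ)+1+1 = (n:ℝ)+2 by ring] at hkey
    have ecc : cc n - cc (n+1) =
        ((n:ℝ)+1)^(1-2*β)*((((n:ℝ)+2))^β - (((n:ℝ)+1))^β)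
        - ((n:ℝ)+2)^(1-2*β)*((((n:ℝ)+3))^β - (((n:ℝ)+2))^β) := by
      simp only [hccdef, hφdef]
      push_cast
      rw [hαβ]
      ring_nf
    rw [show (n:ℝ)+2+1 = (n:ℝ)+3 by ring] at hkey
    rw [ecc] at *
    have hw0 : 0 ≤ w (n+2) := by
      have := hφpos (n+2) (by omega)
      simp only [hwdef]
      positivity
    have hmul := mul_le_mul_of_nonneg_right hkey hw0
    refine le_trans (le_of_eq ?_) hmul
    -- (α-1)^2/4 * (c^(α-2) u²) = β² c^(-β-1) * (u²/c^β)
    have hφc : φf (n+2) = ((n:ℝ)+2)^β := by simp only [hφdef]; push_cast; ring_nf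
    simp only [hwdef, hφc]
    have hsq : (α-1)^2/4 = β^2 := by rw [hαβ]; ring
    have hexp : ((n:ℝ)+2)^(α-2) = ((n:ℝ)+2)^(-β-1) * (((n:ℝ)+2)^β)⁻¹ := by
      rw [← rpow_neg hc0.le, ← rpow_add hc0, show -β-1 + -β = α-2 by rw [hαβ]; ring]
    rw [hsq, hexp]
    field_simp
  have step1 : ∀ n ∈ Finset.range N,
      cc n * (w (n+2) - w (n+1)) ≤ ((n : ℝ) + 1) ^ α * (u (n + 2) - u (n + 1)) ^ 2 := by
    intro n _
    have hφ1 : 0 < φf (n+1) := hφpos _ (by omega)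
    have hφ2 : 0 < φf (n+2) := hφpos _ (by omega)
    have hp := pointP (φ := φf (n+2)) (ψ := φf (n+1)) (u := u (n+2)) (v := u (n+1)) hφ2 hφ1
    have ha : 0 ≤ ((n:ℝ)+1)^α := rpow_nonneg (by positivity) α
    calc cc n * (w (n+2) - w (n+1))
        = ((n:ℝ)+1)^α * ((φf (n+2) - φf (n+1)) *
            ((u (n+2))^2/φf (n+2) - (u (n+1))^2/φf (n+1))) := by
          simp only [hccdef, hwdef]; ring
      _ ≤ ((n:ℝ)+1)^α * (u (n+2) - u (n+1))^2 := mul_le_mul_of_nonneg_left hp ha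
  calc ∑ n ∈ Finset.range N, (α-1)^2/4 * (((n : ℝ) + 2) ^ (α-2) * (u (n + 2)) ^ 2)
      ≤ ∑ n ∈ Finset.range N, (cc n - cc (n+1)) * w (n+2) := Finset.sum_le_sum step3
    _ = ∑ n ∈ Finset.range N, cc n * (w (n+2) - w (n+1)) := by
        rw [tele cc w N]
        have hw1 : w 1 = 0 := by simp [hwdef, h1]
        have hwN : w (N+1) = 0 := by simp [hwdef, hN (N+1) (by omega)]
        rw [hw1, hwN]
        ring
    _ ≤ ∑ n ∈ Finset.range N, ((n : ℝ) + 1) ^ α * (u (n + 2) - u (n + 1)) ^ 2 :=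
        Finset.sum_le_sum step1
end

section
/- Let α ≥ 0. For every finitely supported real sequence (u_n)_{n≥0} with u_0 = 0, we have ∑_{n≥1} n^α (u_n − u_{n-1})² ≥ ((α−1)²/4) ∑_{n≥1} n^{α−2} u_n². -/
open Finset Real

lemma hardy_scalar_step (w r x y : ℝ) (hw : 0 ≤ w) (hr : 0 < r) :
    w * (1 - r) * x ^ 2 - w * (1 / r - 1) * y ^ 2 ≤ w * (x - y) ^ 2 := by
  have h1 : (x - y) ^ 2 - ((1 - r) * x ^ 2 - (1 / r - 1) * y ^ 2) = (r * x - y) ^ 2 / r := by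
    field_simp
    ring
  have h2 : 0 ≤ (x - y) ^ 2 - ((1 - r) * x ^ 2 - (1 / r - 1) * y ^ 2) := by
    rw [h1]; positivity
  nlinarith [mul_nonneg hw h2]

lemma hardy_of_supersolution (α : ℝ) (u : ℕ → ℝ) (N : ℕ)
    (hN : ∀ n ≥ N, u n = 0) (h0 : u 0 = 0)
    (r : ℝ → ℝ) (hr : ∀ M : ℝ, 1 ≤ M → 0 < r M)
    (crux : ∀ M : ℝ, 1 ≤ M →
      ((α - 1) ^ 2 / 4) * M ^ (α - 2) ≤
        M ^ α * (1 - r M) - (M + 1) ^ α * (1 / r (M + 1) - 1)) :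
    ∑' n : ℕ, ((n : ℝ) + 1) ^ α * (u (n + 1) - u n) ^ 2 ≥
      ((α - 1) ^ 2 / 4) * ∑' n : ℕ, ((n : ℝ) + 1) ^ (α - 2) * (u (n + 1)) ^ 2 := by
  set C := (α - 1) ^ 2 / 4 with hC
  set f : ℕ → ℝ := fun k => ((k : ℝ) + 1) ^ α * (1 / r ((k : ℝ) + 1) - 1) * u k ^ 2 with hf
  have hL : ∑' n : ℕ, ((n : ℝ) + 1) ^ α * (u (n + 1) - u n) ^ 2
      = ∑ n ∈ range N, ((n : ℝ) + 1) ^ α * (u (n + 1) - u n) ^ 2 := by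
    refine tsum_eq_sum fun n hn => ?_
    rw [mem_range, not_lt] at hn
    rw [hN n hn, hN (n + 1) (hn.trans (Nat.le_succ n))]
    ring
  have hR : ∑' n : ℕ, ((n : ℝ) + 1) ^ (α - 2) * (u (n + 1)) ^ 2
      = ∑ n ∈ range N, ((n : ℝ) + 1) ^ (α - 2) * (u (n + 1)) ^ 2 := by
    refine tsum_eq_sum fun n hn => ?_
    rw [mem_range, not_lt] at hn
    rw [hN (n + 1) (hn.trans (Nat.le_succ n))]
    ring
  rw [ge_iff_le, hL, hR, Finset.mul_sum]
  have perterm : ∀ n : ℕ,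
      C * (((n : ℝ) + 1) ^ (α - 2) * u (n + 1) ^ 2) + (f (n + 1) - f n)
        ≤ ((n : ℝ) + 1) ^ α * (u (n + 1) - u n) ^ 2 := by
    intro n
    have hn0 : (0:ℝ) ≤ (n : ℝ) := Nat.cast_nonneg n
    set M : ℝ := (n : ℝ) + 1 with hM
    have hM1 : (1 : ℝ) ≤ M := by rw [hM]; linarith
    have hM0 : (0 : ℝ) < M := by linarith
    have hx := sq_nonneg (u (n + 1))
    have hrM := hr M hM1
    have hscal := hardy_scalar_step (M ^ α) (r M) (u (n + 1)) (u n)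
      (Real.rpow_nonneg hM0.le α) hrM
    have hcr := crux M hM1
    have hfn : f n = M ^ α * (1 / r M - 1) * u n ^ 2 := rfl
    have hfn1 : f (n + 1) = (M + 1) ^ α * (1 / r (M + 1) - 1) * u (n + 1) ^ 2 := by
      simp only [hf, hM]
      push_cast
      ring_nf
    have hmul := mul_le_mul_of_nonneg_right hcr hx
    rw [hfn, hfn1]
    nlinarith [hscal, hmul]
  have hsum := Finset.sum_le_sum (fun n (_ : n ∈ range N) => perterm n)
  rw [Finset.sum_add_distrib, Finset.sum_range_sub f] at hsum
  have hfN : f N = 0 := by simp [hf, hN N le_rfl]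
  have hf0 : f 0 = 0 := by simp [hf, h0]
  rw [hfN, hf0] at hsum
  linarith [hsum]

lemma hardy_cruxA (α : ℝ) (hα : 2 ≤ α) (M : ℝ) (hM : 1 ≤ M) :
    ((α - 1) ^ 2 / 4) * M ^ (α - 2) ≤
      M ^ α * (1 - (2*M + α - 1)/(2*M)) -
        (M + 1) ^ α * (1 / ((2*(M+1) + α - 1)/(2*(M+1))) - 1) := by
  have hM0 : (0:ℝ) < M := by linarith
  have hP : (0:ℝ) < M ^ α := Real.rpow_pos_of_pos hM0 α
  have hT : (M + 1) ^ α = M ^ α * (1 + 1/M) ^ α := by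
    rw [← Real.mul_rpow hM0.le (by positivity)]
    congr 1
    field_simp
  have hM2 : M ^ (α - 2) = M ^ α / M ^ 2 := by
    rw [Real.rpow_sub hM0]
    congr 1
    rw [← Real.rpow_natCast M 2]
    norm_num
  -- Bernoulli squared
  have hb : 1 + (α/2) * (1/M) ≤ (1 + 1/M) ^ (α/2) :=
    one_add_mul_self_le_rpow_one_add
      (le_trans (by norm_num : (-1:ℝ) ≤ 0) (by positivity)) (by linarith)
  have hsq : ((1 + 1/M) ^ (α/2)) ^ 2 = (1 + 1/M) ^ α := by
    rw [← Real.rpow_natCast ((1 + 1/M) ^ (α/2)) 2, ← Real.rpow_mul (by positivity)]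
    norm_num
  have hB : (1 + α/(2*M)) ^ 2 ≤ (1 + 1/M) ^ α := by
    rw [← hsq]
    have h1 : (0:ℝ) ≤ 1 + α/(2*M) := by positivity
    have h2 : 1 + α/(2*M) = 1 + (α/2) * (1/M) := by ring
    nlinarith [hb]
  -- sign of the second coefficient
  have hr'pos : (0:ℝ) < (2*(M+1) + α - 1)/(2*(M+1)) := div_pos (by linarith) (by linarith)
  have hc : 1 / ((2*(M+1) + α - 1)/(2*(M+1))) - 1 ≤ 0 := by
    rw [sub_nonpos, div_le_one hr'pos]
    rw [le_div_iff₀ (by linarith : (0:ℝ) < 2*(M+1))]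
    linarith
  -- rational key inequality
  have hM2ne : (2*M : ℝ) ≠ 0 := by positivity
  have hden1 : (2*(M+1) + α - 1) ≠ 0 := ne_of_gt (by linarith)
  have hden2 : (2*(M+1) : ℝ) ≠ 0 := by positivity
  have hid : (1 - (2*M + α - 1)/(2*M)) - (1 + α/(2*M)) ^ 2 *
        (1 / ((2*(M+1) + α - 1)/(2*(M+1))) - 1) - (α - 1)^2/4 / M^2
      = (α - 1) / (4*M^2*(2*M + α + 1)) := by
    field_simp
    ring
  have hrem : (0:ℝ) ≤ (α - 1) / (4*M^2*(2*M + α + 1)) :=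
    div_nonneg (by linarith) (by positivity)
  have hkey : (α - 1)^2/4 / M^2 ≤ (1 - (2*M + α - 1)/(2*M)) - (1 + α/(2*M)) ^ 2 *
        (1 / ((2*(M+1) + α - 1)/(2*(M+1))) - 1) := by linarith
  -- combine
  rw [hM2, hT]
  have step2 : ((α-1)^2/4 / M^2) * M^α ≤ ((1 - (2*M + α - 1)/(2*M)) - (1 + α/(2*M)) ^ 2 *
        (1 / ((2*(M+1) + α - 1)/(2*(M+1))) - 1)) * M^α :=
    mul_le_mul_of_nonneg_right hkey hP.le
  have step3 : ((1 + 1/M) ^ α) * (1 / ((2*(M+1) + α - 1)/(2*(M+1))) - 1)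
      ≤ ((1 + α/(2*M)) ^ 2) * (1 / ((2*(M+1) + α - 1)/(2*(M+1))) - 1) :=
    mul_le_mul_of_nonpos_right hB hc
  have step4 := mul_le_mul_of_nonneg_left step3 hP.le
  calc (α - 1) ^ 2 / 4 * (M ^ α / M ^ 2) = ((α-1)^2/4 / M^2) * M^α := by ring
    _ ≤ ((1 - (2*M + α - 1)/(2*M)) - (1 + α/(2*M)) ^ 2 *
          (1 / ((2*(M+1) + α - 1)/(2*(M+1))) - 1)) * M^α := step2
    _ = M^α * (1 - (2*M + α - 1)/(2*M)) -
          M^α * ((1 + α/(2*M)) ^ 2 * (1 / ((2*(M+1) + α - 1)/(2*(M+1))) - 1)) := by ring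
    _ ≤ M^α * (1 - (2*M + α - 1)/(2*M)) -
          M^α * ((1 + 1/M) ^ α * (1 / ((2*(M+1) + α - 1)/(2*(M+1))) - 1)) := by linarith
    _ = M^α * (1 - (2*M + α - 1)/(2*M)) -
          M^α * (1 + 1/M) ^ α * (1 / ((2*(M+1) + α - 1)/(2*(M+1))) - 1) := by ring

lemma hardy_cruxB (α : ℝ) (hα1 : 1 ≤ α) (hα2 : α ≤ 2) (M : ℝ) (hM : 1 ≤ M) :
    ((α - 1) ^ 2 / 4) * M ^ (α - 2) ≤
      M ^ α * (1 - (2*M^2 + (α - 1)*(M - 1))/(2*M^2)) -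
        (M + 1) ^ α * (1 / ((2*(M+1)^2 + (α - 1)*((M+1) - 1))/(2*(M+1)^2)) - 1) := by
  have hM0 : (0:ℝ) < M := by linarith
  have hP : (0:ℝ) < M ^ α := Real.rpow_pos_of_pos hM0 α
  have hT : (M + 1) ^ α = M ^ α * (1 + 1/M) ^ α := by
    rw [← Real.mul_rpow hM0.le (by positivity)]
    congr 1
    field_simp
  have hM2 : M ^ (α - 2) = M ^ α / M ^ 2 := by
    rw [Real.rpow_sub hM0]
    congr 1
    rw [← Real.rpow_natCast M 2]
    norm_num
  have hB : 1 + α/M ≤ (1 + 1/M) ^ α := by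
    have hb := one_add_mul_self_le_rpow_one_add
      (le_trans (by norm_num : (-1:ℝ) ≤ 0) (by positivity : (0:ℝ) ≤ 1/M)) hα1
    calc 1 + α/M = 1 + α * (1/M) := by ring
      _ ≤ _ := hb
  have hnum' : (0:ℝ) < 2*(M+1)^2 + (α - 1)*((M+1) - 1) := by nlinarith
  have hr'pos : (0:ℝ) < (2*(M+1)^2 + (α - 1)*((M+1) - 1))/(2*(M+1)^2) :=
    div_pos hnum' (by positivity)
  have hc : 1 / ((2*(M+1)^2 + (α - 1)*((M+1) - 1))/(2*(M+1)^2)) - 1 ≤ 0 := by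
    rw [sub_nonpos, div_le_one hr'pos, le_div_iff₀ (by positivity : (0:ℝ) < 2*(M+1)^2)]
    nlinarith
  have hMne : (M:ℝ) ≠ 0 := ne_of_gt hM0
  have hM1ne : (M+1:ℝ) ≠ 0 := by positivity
  have hden1 : (2*(M+1)^2 + (α - 1)*((M+1) - 1)) ≠ 0 := ne_of_gt hnum'
  have hid : (1 - (2*M^2 + (α - 1)*(M - 1))/(2*M^2)) - (1 + α/M) *
        (1 / ((2*(M+1)^2 + (α - 1)*((M+1) - 1))/(2*(M+1)^2)) - 1) - (α - 1)^2/4 / M^2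
      = ((α - 1)*((5 - α^2)*M + 2*(3 - α))) / (4*M^2*(2*(M+1)^2 + (α - 1)*M)) := by
    have : (2*(M+1)^2 + (α - 1)*M) ≠ 0 := by nlinarith
    field_simp
    rw [eq_div_iff (by nlinarith)]
    ring
  have hrem : (0:ℝ) ≤ ((α - 1)*((5 - α^2)*M + 2*(3 - α))) / (4*M^2*(2*(M+1)^2 + (α - 1)*M)) := by
    apply div_nonneg
    · apply mul_nonneg (by linarith)
      nlinarith [mul_nonneg (mul_nonneg (show (0:ℝ) ≤ 2-α by linarith)
        (show (0:ℝ) ≤ 2+α by linarith)) (show (0:ℝ) ≤ M by linarith)]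
    · apply mul_nonneg (by positivity)
      nlinarith
  have hkey : (α - 1)^2/4 / M^2 ≤ (1 - (2*M^2 + (α - 1)*(M - 1))/(2*M^2)) - (1 + α/M) *
        (1 / ((2*(M+1)^2 + (α - 1)*((M+1) - 1))/(2*(M+1)^2)) - 1) := by linarith
  rw [hM2, hT]
  have step2 : ((α-1)^2/4 / M^2) * M^α ≤ ((1 - (2*M^2 + (α - 1)*(M - 1))/(2*M^2)) - (1 + α/M) *
        (1 / ((2*(M+1)^2 + (α - 1)*((M+1) - 1))/(2*(M+1)^2)) - 1)) * M^α :=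
    mul_le_mul_of_nonneg_right hkey hP.le
  have step3 : ((1 + 1/M) ^ α) * (1 / ((2*(M+1)^2 + (α - 1)*((M+1) - 1))/(2*(M+1)^2)) - 1)
      ≤ (1 + α/M) * (1 / ((2*(M+1)^2 + (α - 1)*((M+1) - 1))/(2*(M+1)^2)) - 1) :=
    mul_le_mul_of_nonpos_right hB hc
  have step4 := mul_le_mul_of_nonneg_left step3 hP.le
  calc (α - 1) ^ 2 / 4 * (M ^ α / M ^ 2) = ((α-1)^2/4 / M^2) * M^α := by ring
    _ ≤ ((1 - (2*M^2 + (α - 1)*(M - 1))/(2*M^2)) - (1 + α/M) *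
          (1 / ((2*(M+1)^2 + (α - 1)*((M+1) - 1))/(2*(M+1)^2)) - 1)) * M^α := step2
    _ = M^α * (1 - (2*M^2 + (α - 1)*(M - 1))/(2*M^2)) -
          M^α * ((1 + α/M) * (1 / ((2*(M+1)^2 + (α - 1)*((M+1) - 1))/(2*(M+1)^2)) - 1)) := by
        ring
    _ ≤ M^α * (1 - (2*M^2 + (α - 1)*(M - 1))/(2*M^2)) -
          M^α * ((1 + 1/M) ^ α * (1 / ((2*(M+1)^2 + (α - 1)*((M+1) - 1))/(2*(M+1)^2)) - 1)) := by
        linarith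
    _ = M^α * (1 - (2*M^2 + (α - 1)*(M - 1))/(2*M^2)) -
          M^α * (1 + 1/M) ^ α * (1 / ((2*(M+1)^2 + (α - 1)*((M+1) - 1))/(2*(M+1)^2)) - 1) := by
        ring

lemma hardy_cruxC (α : ℝ) (hα0 : 0 ≤ α) (hα1 : α ≤ 1) (M : ℝ) (hM : 1 ≤ M) :
    ((α - 1) ^ 2 / 4) * M ^ (α - 2) ≤
      M ^ α * (1 - (4*M^2 - 2*(1 - α)*M - 1)/(4*M^2)) -
        (M + 1) ^ α * (1 / ((4*(M+1)^2 - 2*(1 - α)*(M+1) - 1)/(4*(M+1)^2)) - 1) := by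
  have hM0 : (0:ℝ) < M := by linarith
  have hP : (0:ℝ) < M ^ α := Real.rpow_pos_of_pos hM0 α
  have hT : (M + 1) ^ α = M ^ α * (1 + 1/M) ^ α := by
    rw [← Real.mul_rpow hM0.le (by positivity)]
    congr 1
    field_simp
  have hM2 : M ^ (α - 2) = M ^ α / M ^ 2 := by
    rw [Real.rpow_sub hM0]
    congr 1
    rw [← Real.rpow_natCast M 2]
    norm_num
  have hB : (1 + 1/M) ^ α ≤ 1 + α/M := by
    have hb := rpow_one_add_le_one_add_mul_self
      (le_trans (by norm_num : (-1:ℝ) ≤ 0) (by positivity : (0:ℝ) ≤ 1/M)) hα0 hα1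
    calc (1 + 1/M) ^ α ≤ 1 + α * (1/M) := hb
      _ = 1 + α/M := by ring
  have hnum' : (0:ℝ) < 4*(M+1)^2 - 2*(1 - α)*(M+1) - 1 := by nlinarith
  have hr'pos : (0:ℝ) < (4*(M+1)^2 - 2*(1 - α)*(M+1) - 1)/(4*(M+1)^2) :=
    div_pos hnum' (by positivity)
  have hr'le1 : (4*(M+1)^2 - 2*(1 - α)*(M+1) - 1)/(4*(M+1)^2) ≤ 1 := by
    rw [div_le_one (by positivity : (0:ℝ) < 4*(M+1)^2)]
    nlinarith
  have hc : 0 ≤ 1 / ((4*(M+1)^2 - 2*(1 - α)*(M+1) - 1)/(4*(M+1)^2)) - 1 := by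
    rw [sub_nonneg]
    exact one_le_one_div hr'pos hr'le1
  have hMne : (M:ℝ) ≠ 0 := ne_of_gt hM0
  have hM1ne : (M+1:ℝ) ≠ 0 := by positivity
  have hden1 : (4*(M+1)^2 - 2*(1 - α)*(M+1) - 1) ≠ 0 := ne_of_gt hnum'
  have hid : (1 - (4*M^2 - 2*(1 - α)*M - 1)/(4*M^2)) - (1 + α/M) *
        (1 / ((4*(M+1)^2 - 2*(1 - α)*(M+1) - 1)/(4*(M+1)^2)) - 1) - (α - 1)^2/4 / M^2
      = (2*(2 - (1 - α)^2*(1 + α))*M + α*(1 + 2*α)*(2 - α))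
          / (4*M^2*(4*(M+1)^2 - 2*(1 - α)*(M+1) - 1)) := by
    have h2 : (M + 1) * (4 * (M + 1) - 2 * (1 - α)) - 1 ≠ 0 := by nlinarith
    field_simp
    ring
  have hA1 : (1:ℝ) ≤ 2 - (1 - α)^2*(1 + α) := by nlinarith [sq_nonneg (1 - α), sq_nonneg α]
  have hA0 : (0:ℝ) ≤ α*(1 + 2*α)*(2 - α) :=
    mul_nonneg (mul_nonneg hα0 (by linarith)) (by linarith)
  have hrem : (0:ℝ) ≤ (2*(2 - (1 - α)^2*(1 + α))*M + α*(1 + 2*α)*(2 - α))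
          / (4*M^2*(4*(M+1)^2 - 2*(1 - α)*(M+1) - 1)) := by
    apply div_nonneg
    · nlinarith
    · exact mul_nonneg (by positivity) hnum'.le
  have hkey : (α - 1)^2/4 / M^2 ≤ (1 - (4*M^2 - 2*(1 - α)*M - 1)/(4*M^2)) - (1 + α/M) *
        (1 / ((4*(M+1)^2 - 2*(1 - α)*(M+1) - 1)/(4*(M+1)^2)) - 1) := by linarith
  rw [hM2, hT]
  have step2 : ((α-1)^2/4 / M^2) * M^α ≤ ((1 - (4*M^2 - 2*(1 - α)*M - 1)/(4*M^2)) - (1 + α/M) *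
        (1 / ((4*(M+1)^2 - 2*(1 - α)*(M+1) - 1)/(4*(M+1)^2)) - 1)) * M^α :=
    mul_le_mul_of_nonneg_right hkey hP.le
  have step3 : ((1 + 1/M) ^ α) * (1 / ((4*(M+1)^2 - 2*(1 - α)*(M+1) - 1)/(4*(M+1)^2)) - 1)
      ≤ (1 + α/M) * (1 / ((4*(M+1)^2 - 2*(1 - α)*(M+1) - 1)/(4*(M+1)^2)) - 1) :=
    mul_le_mul_of_nonneg_right hB hc
  have step4 := mul_le_mul_of_nonneg_left step3 hP.le
  calc (α - 1) ^ 2 / 4 * (M ^ α / M ^ 2) = ((α-1)^2/4 / M^2) * M^α := by ring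
    _ ≤ ((1 - (4*M^2 - 2*(1 - α)*M - 1)/(4*M^2)) - (1 + α/M) *
          (1 / ((4*(M+1)^2 - 2*(1 - α)*(M+1) - 1)/(4*(M+1)^2)) - 1)) * M^α := step2
    _ = M^α * (1 - (4*M^2 - 2*(1 - α)*M - 1)/(4*M^2)) -
          M^α * ((1 + α/M) * (1 / ((4*(M+1)^2 - 2*(1 - α)*(M+1) - 1)/(4*(M+1)^2)) - 1)) := by
        ring
    _ ≤ M^α * (1 - (4*M^2 - 2*(1 - α)*M - 1)/(4*M^2)) -
          M^α * ((1 + 1/M) ^ α * (1 / ((4*(M+1)^2 - 2*(1 - α)*(M+1) - 1)/(4*(M+1)^2)) - 1)) := by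
        linarith
    _ = M^α * (1 - (4*M^2 - 2*(1 - α)*M - 1)/(4*M^2)) -
          M^α * (1 + 1/M) ^ α * (1 / ((4*(M+1)^2 - 2*(1 - α)*(M+1) - 1)/(4*(M+1)^2)) - 1) := by
        ring

/-- Sharp weighted Hardy inequality for `α ≥ 0`:
`∑_{n≥1} n^α |∇u_n|² ≥ ((α−1)²/4) ∑_{n≥1} n^{α−2} u_n²`. -/
theorem hardy_weighted_nonneg (α : ℝ) (hα : 0 ≤ α) (u : ℕ → ℝ)
    (hfin : ∃ N, ∀ n ≥ N, u n = 0) (h0 : u 0 = 0) :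
    ∑' n : ℕ, ((n : ℝ) + 1) ^ α * (u (n + 1) - u n) ^ 2 ≥
      ((α - 1) ^ 2 / 4) * ∑' n : ℕ, ((n : ℝ) + 1) ^ (α - 2) * (u (n + 1)) ^ 2 := by
  obtain ⟨N, hN⟩ := hfin
  rcases le_total α 1 with h1 | h1
  · exact hardy_of_supersolution α u N hN h0
      (fun M => (4*M^2 - 2*(1 - α)*M - 1)/(4*M^2))
      (fun M hM => div_pos (by nlinarith) (by nlinarith))
      (fun M hM => hardy_cruxC α hα h1 M hM)
  · rcases le_total α 2 with h2 | h2
    · exact hardy_of_supersolution α u N hN h0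
        (fun M => (2*M^2 + (α - 1)*(M - 1))/(2*M^2))
        (fun M hM => div_pos (by nlinarith) (by nlinarith))
        (fun M hM => hardy_cruxB α h1 h2 M hM)
    · exact hardy_of_supersolution α u N hN h0
        (fun M => (2*M + α - 1)/(2*M))
        (fun M hM => div_pos (by nlinarith) (by nlinarith))
        (fun M hM => hardy_cruxA α h2 M hM)
end

section
/- For every finitely supported real sequence (u_n)_{n≥0} with u_0 = u_1 = 0, the discrete Leray inequality holds: ∑_{n≥2} n (u_n − u_{n-1})² ≥ (1/4) ∑_{n≥2} u_n² / (n (ln n)²). -/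
open Finset Real

/-- Partial harmonic sums: `dlS n = ∑_{k=2}^n 1/k` (a discrete logarithm). -/
noncomputable def dlS (n : ℕ) : ℝ := ∑ k ∈ Finset.Icc 2 n, (1 : ℝ) / k

/-- Ground state: `dlG n = √(dlS n)`. -/
noncomputable def dlG (n : ℕ) : ℝ := Real.sqrt (dlS n)

noncomputable def dlA (n : ℕ) : ℝ := n * (1 - dlG (n - 1) / dlG n)

noncomputable def dlB (n : ℕ) : ℝ := n * (dlG n / dlG (n - 1) - 1)

lemma dlS_nonneg (n : ℕ) : 0 ≤ dlS n := by
  apply Finset.sum_nonneg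
  intro k _
  positivity

lemma dlS_succ (n : ℕ) (hn : 1 ≤ n) : dlS (n + 1) = dlS n + 1 / ((n : ℝ) + 1) := by
  have h : (2 : ℕ) ≤ n + 1 := by omega
  rw [dlS, Finset.sum_Icc_succ_top h]
  push_cast
  rfl

lemma dlS_one : dlS 1 = 0 := by
  rw [dlS, show Finset.Icc 2 1 = ∅ from rfl]
  simp

lemma dlS_half (n : ℕ) (hn : 2 ≤ n) : 1 / 2 ≤ dlS n := by
  have h2 : (2 : ℕ) ∈ Finset.Icc 2 n := by simp [hn]
  have := Finset.single_le_sum (f := fun k : ℕ => (1 : ℝ) / k)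
    (fun i _ => by positivity) h2
  norm_num at this
  rw [dlS]
  simpa only [one_div] using this

lemma log_step (n : ℕ) (hn : 1 ≤ n) :
    1 / ((n : ℝ) + 1) ≤ Real.log ((n : ℝ) + 1) - Real.log n := by
  have hn' : (1 : ℝ) ≤ (n : ℝ) := by exact_mod_cast hn
  have hpos : (0 : ℝ) < (n : ℝ) / ((n : ℝ) + 1) := by positivity
  have h := Real.log_le_sub_one_of_pos hpos
  rw [Real.log_div (by linarith) (by linarith)] at h
  have he : (n : ℝ) / ((n : ℝ) + 1) - 1 = -(1 / ((n : ℝ) + 1)) := by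
    field_simp
    ring
  rw [he] at h
  linarith

lemma dlS_le_log (n : ℕ) (hn : 2 ≤ n) :
    dlS n + (Real.log 2 - 1 / 2) ≤ Real.log n := by
  induction n, hn using Nat.le_induction with
  | base =>
    rw [show dlS 2 = dlS 1 + 1 / ((1:ℝ)+1) from by exact_mod_cast dlS_succ 1 le_rfl, dlS_one]
    norm_num
  | succ n hn ih =>
    have hstep := log_step n (by omega)
    rw [dlS_succ n (by omega)]
    push_cast
    linarith

lemma dlG_sq (n : ℕ) : dlG n ^ 2 = dlS n := Real.sq_sqrt (dlS_nonneg n)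

lemma dlG_pos (n : ℕ) (hn : 2 ≤ n) : 0 < dlG n :=
  Real.sqrt_pos.2 (lt_of_lt_of_le (by norm_num) (dlS_half n hn))

lemma dlG_one : dlG 1 = 0 := by rw [dlG, dlS_one, Real.sqrt_zero]

lemma dlA_two : dlA 2 = 2 := by
  rw [dlA, show (2:ℕ) - 1 = 1 from rfl, dlG_one]
  norm_num

/-- Pointwise quadratic inequality for `n ≥ 3`. -/
lemma dlP (m : ℕ) (x y : ℝ) :
    ((m : ℝ) + 3) * (x - y) ^ 2 ≥ dlA (m + 3) * x ^ 2 - dlB (m + 3) * y ^ 2 := by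
  have hp : 0 < dlG (m + 2) := dlG_pos _ (by omega)
  have hq : 0 < dlG (m + 3) := dlG_pos _ (by omega)
  set p := dlG (m + 2) with hpdef
  set q := dlG (m + 3) with hqdef
  have hA : dlA (m + 3) = ((m : ℝ) + 3) * (1 - p / q) := by
    rw [dlA, show m + 3 - 1 = m + 2 from rfl]; push_cast; rfl
  have hB : dlB (m + 3) = ((m : ℝ) + 3) * (q / p - 1) := by
    rw [dlB, show m + 3 - 1 = m + 2 from rfl]; push_cast; rfl
  set a := Real.sqrt (p / q) with hadef
  set b := Real.sqrt (q / p) with hbdef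
  have ha2 : a ^ 2 = p / q := Real.sq_sqrt (by positivity)
  have hb2 : b ^ 2 = q / p := Real.sq_sqrt (by positivity)
  have hab : a * b = 1 := by
    rw [hadef, hbdef, ← Real.sqrt_mul (by positivity)]
    rw [show p / q * (q / p) = 1 by field_simp]
    exact Real.sqrt_one
  have hnn : 0 ≤ a ^ 2 * x ^ 2 - 2 * x * y + b ^ 2 * y ^ 2 := by
    have hexp : a ^ 2 * x ^ 2 - 2 * x * y + b ^ 2 * y ^ 2 = (a * x - b * y) ^ 2 := by
      linear_combination (2 * x * y) * hab
    rw [hexp]; exact sq_nonneg _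
  have base : (1 - p / q) * x ^ 2 - (q / p - 1) * y ^ 2 ≤ (x - y) ^ 2 := by
    rw [← ha2, ← hb2]; nlinarith [hnn]
  rw [hA, hB, ge_iff_le]
  nlinarith [mul_le_mul_of_nonneg_left base (show (0:ℝ) ≤ (m : ℝ) + 3 by positivity)]

lemma dl_sqle {a b : ℝ} (ha : 0 ≤ a) (hb : 0 ≤ b) (h : a ^ 2 ≤ b ^ 2) : a ≤ b := by
  have h2 := Real.sqrt_le_sqrt h
  rwa [Real.sqrt_sq ha, Real.sqrt_sq hb] at h2

lemma dl_sqlt {a b : ℝ} (hb : 0 ≤ b) (h : a ^ 2 < b ^ 2) (ha : 0 ≤ a) : a < b := by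
  have h2 := Real.sqrt_lt_sqrt (by positivity) h
  rwa [Real.sqrt_sq ha, Real.sqrt_sq hb] at h2

/-- Numeric helper: `x+2 ≤ (x+3)·(2 ln2 - 1)·e`. -/
lemma dl_num1 (x c e : ℝ) (hx : 0 ≤ x) (hc : 0.6931 < c) (he : 2.7182818283 < e) :
    x + 2 ≤ (x + 3) * (2 * (c - 1 / 2)) * e := by
  have h1 : (1.04 : ℝ) ≤ (2 * (c - 1 / 2)) * e := by nlinarith
  nlinarith [mul_nonneg hx (show (0:ℝ) ≤ (2 * (c - 1 / 2)) * e - 1.04 by linarith)]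

/-- The main numeric inequality. -/
lemma dl_num2 (t L s c0 : ℝ) (ht : 3 ≤ t) (hs : 1 / 2 ≤ s) (hc0 : 0.1931 < c0)
    (hsL : s + c0 ≤ L) (hLpos : 0 < L) (hLe : L ≤ t * (2 * c0)) :
    8 * s ^ 2 * t + 4 * s + 1 / (2 * t) ≤ 4 * L ^ 2 * (2 * t - 1) := by
  have h1 : 8 * t * (c0 * (L + s)) ≤ 8 * t * (L ^ 2 - s ^ 2) := by
    apply mul_le_mul_of_nonneg_left _ (by linarith : (0:ℝ) ≤ 8 * t)
    nlinarith [mul_nonneg (show (0:ℝ) ≤ L - s - c0 by linarith)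
      (show (0:ℝ) ≤ L + s by linarith)]
  have h2 : 4 * L ^ 2 ≤ 8 * t * c0 * L := by
    nlinarith [mul_le_mul_of_nonneg_left hLe (show (0:ℝ) ≤ 4 * L by linarith)]
  have htc : (0.5793 : ℝ) ≤ t * c0 := by
    nlinarith [mul_nonneg (show (0:ℝ) ≤ t - 3 by linarith)
      (show (0:ℝ) ≤ c0 - 0.1931 by linarith)]
  have h3 : 4 * s + 1 / (2 * t) ≤ 8 * t * c0 * s := by
    have hsix : 1 / (2 * t) ≤ 1 / 6 := by
      rw [div_le_div_iff₀ (by linarith) (by norm_num)]; linarith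
    nlinarith [mul_nonneg (show (0:ℝ) ≤ s - 1 / 2 by linarith)
      (show (0:ℝ) ≤ 8 * (t * c0) - 4.634 by linarith), hsix]
  nlinarith [h1, h2, h3]

set_option maxHeartbeats 1000000 in
/-- The coefficient bound: `α_{m+2} - β_{m+3} ≥ 1/(4 (m+2) ln(m+2)²)`. -/
lemma dlC (m : ℕ) :
    dlA (m + 2) - dlB (m + 3) ≥
      1 / (4 * ((m : ℝ) + 2) * (Real.log ((m : ℝ) + 2)) ^ 2) := by
  have hq : 0 < dlG (m + 2) := dlG_pos _ (by omega)
  have hr : 0 < dlG (m + 3) := dlG_pos _ (by omega)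
  have hp0 : 0 ≤ dlG (m + 1) := Real.sqrt_nonneg _
  set p := dlG (m + 1) with hpdef
  set q := dlG (m + 2) with hqdef
  set r := dlG (m + 3) with hrdef
  set L := Real.log ((m : ℝ) + 2) with hLdef
  set s := dlS (m + 2) with hsdef
  have hm : (0:ℝ) ≤ (m:ℝ) := Nat.cast_nonneg m
  have hq2 : q ^ 2 = s := dlG_sq (m + 2)
  have hqp : q ^ 2 - p ^ 2 = 1 / ((m : ℝ) + 2) := by
    have h := dlS_succ (m + 1) (by omega)
    have hp2 : p ^ 2 = dlS (m + 1) := dlG_sq (m + 1)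
    push_cast at h ⊢
    rw [hq2, hp2]
    rw [show m + 1 + 1 = m + 2 from rfl] at h
    rw [hsdef, h]; ring
  have hrq : r ^ 2 - q ^ 2 = 1 / ((m : ℝ) + 3) := by
    have h := dlS_succ (m + 2) (by omega)
    have hr2 : r ^ 2 = dlS (m + 3) := dlG_sq (m + 3)
    push_cast at h ⊢
    rw [hq2, hr2, show m + 2 + 1 = m + 3 from rfl] at *
    rw [h, hsdef]; ring
  have hsL : s + (Real.log 2 - 1 / 2) ≤ L := by
    have := dlS_le_log (m + 2) (by omega)
    push_cast at this
    exact this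
  have hs : 1 / 2 ≤ s := dlS_half (m + 2) (by omega)
  have hA : dlA (m + 2) = ((m : ℝ) + 2) * (1 - p / q) := by
    rw [dlA, show m + 2 - 1 = m + 1 from rfl]; push_cast; rfl
  have hB : dlB (m + 3) = ((m : ℝ) + 3) * (r / q - 1) := by
    rw [dlB, show m + 3 - 1 = m + 2 from rfl]; push_cast; rfl
  have hL2 : Real.log 2 ≤ L := by
    rw [hLdef]
    apply Real.log_le_log (by norm_num)
    linarith
  clear_value p q r L s
  -- ordering
  have hpq : p ≤ q := by
    apply dl_sqle hp0 hq.le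
    have : (0:ℝ) < 1 / ((m : ℝ) + 2) := by positivity
    linarith
  have hqr : q < r := by
    apply dl_sqlt hr.le _ hq.le
    have : (0:ℝ) < 1 / ((m : ℝ) + 3) := by positivity
    linarith
  -- log facts
  have hln2 : (0.6931 : ℝ) < Real.log 2 := by
    have := Real.log_two_gt_d9; linarith
  have hLpos : 0 < L := by linarith
  -- upper bound on L
  have hLe : L ≤ ((m : ℝ) + 3) * (2 * (Real.log 2 - 1 / 2)) := by
    have he : (2.7182818283 : ℝ) < Real.exp 1 := Real.exp_one_gt_d9
    have hepos : (0:ℝ) < Real.exp 1 := Real.exp_pos 1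
    have hx : (0:ℝ) < ((m : ℝ) + 2) / Real.exp 1 := by positivity
    have h := Real.log_le_sub_one_of_pos hx
    rw [Real.log_div (by linarith) (ne_of_gt hepos), Real.log_exp] at h
    have hLub : L ≤ ((m : ℝ) + 2) / Real.exp 1 := by rw [hLdef]; linarith
    have h2 : ((m : ℝ) + 2) / Real.exp 1 ≤ ((m : ℝ) + 3) * (2 * (Real.log 2 - 1 / 2)) := by
      rw [div_le_iff₀ hepos]
      exact dl_num1 (m : ℝ) (Real.log 2) (Real.exp 1) hm hln2 he
    linarith
  -- epsilon bound: r ≤ q + ε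
  set ε := 1 / (2 * ((m : ℝ) + 3) * q) with hedef
  have hε0 : 0 < ε := by positivity
  have h2inv : 2 * (q * ε) = 1 / ((m : ℝ) + 3) := by
    rw [hedef]; field_simp
  clear_value ε
  clear hedef
  have hre : r ≤ q + ε := by
    apply dl_sqle hr.le (by linarith)
    have h : (q + ε) ^ 2 - r ^ 2 = ε ^ 2 := by linear_combination h2inv - hrq
    nlinarith [sq_nonneg ε]
  -- key identity
  have h1' : (((m : ℝ) + 2) * (q - p)) * (q + p) = 1 := by
    have h : (((m : ℝ) + 2) * (q - p)) * (q + p) = ((m : ℝ) + 2) * (q ^ 2 - p ^ 2) := by ring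
    rw [h, hqp]; field_simp
  have h2' : (((m : ℝ) + 3) * (r - q)) * (r + q) = 1 := by
    have h : (((m : ℝ) + 3) * (r - q)) * (r + q) = ((m : ℝ) + 3) * (r ^ 2 - q ^ 2) := by ring
    rw [h, hrq]; field_simp
  have hAq : dlA (m + 2) * q = ((m : ℝ) + 2) * (q - p) := by
    rw [hA]; field_simp
  have hBq : dlB (m + 3) * q = ((m : ℝ) + 3) * (r - q) := by
    rw [hB]; field_simp
  have hkey : (dlA (m + 2) - dlB (m + 3)) * (q * ((q + p) * (q + r))) = r - p := by
    have h : (dlA (m + 2) - dlB (m + 3)) * (q * ((q + p) * (q + r))) =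
        (dlA (m + 2) * q - dlB (m + 3) * q) * ((q + p) * (q + r)) := by ring
    rw [h, hAq, hBq]
    linear_combination (q + r) * h1' - (q + p) * h2'
  -- main product bound
  have hDbound : q * (q + p) * ((q + r) * (r + p)) ≤ 2 * q ^ 2 * (2 * q + ε) ^ 2 := by
    have e1 : q + p ≤ 2 * q := by linarith
    have e2 : q + r ≤ 2 * q + ε := by linarith
    have e3 : r + p ≤ 2 * q + ε := by linarith
    calc q * (q + p) * ((q + r) * (r + p)) ≤ q * (2 * q) * ((2 * q + ε) * (2 * q + ε)) := by
          apply mul_le_mul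
          · exact mul_le_mul_of_nonneg_left e1 hq.le
          · exact mul_le_mul e2 e3 (by linarith) (by linarith)
          · positivity
          · positivity
      _ = 2 * q ^ 2 * (2 * q + ε) ^ 2 := by ring
  have hexp : 2 * q ^ 2 * (2 * q + ε) ^ 2 * ((m : ℝ) + 3) =
      8 * s ^ 2 * ((m : ℝ) + 3) + 4 * s + 1 / (2 * ((m : ℝ) + 3)) := by
    have hid : 2 * q ^ 2 * (2 * q + ε) ^ 2 * ((m : ℝ) + 3) =
        (8 * (q ^ 2) ^ 2 + 4 * (q ^ 2) * (2 * (q * ε)) + (1/2) * (2 * (q * ε)) ^ 2) * ((m : ℝ) + 3) := by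
      ring
    rw [hid, hq2, h2inv]
    field_simp
  have hMI : q * (q + p) * ((q + r) * (r + p)) * ((m : ℝ) + 3) ≤
      4 * L ^ 2 * (2 * (m : ℝ) + 5) := by
    have hstep : q * (q + p) * ((q + r) * (r + p)) * ((m : ℝ) + 3) ≤
        2 * q ^ 2 * (2 * q + ε) ^ 2 * ((m : ℝ) + 3) :=
      mul_le_mul_of_nonneg_right hDbound (by linarith)
    rw [hexp] at hstep
    have hnum := dl_num2 ((m : ℝ) + 3) L s (Real.log 2 - 1 / 2)
      (by linarith) hs (by linarith) hsL hLpos hLe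
    have h5 : 2 * ((m : ℝ) + 3) - 1 = 2 * (m : ℝ) + 5 := by ring
    rw [h5] at hnum
    linarith
  -- conclusion
  have hDpos : 0 < q * ((q + p) * (q + r)) :=
    mul_pos hq (mul_pos (by linarith) (by linarith))
  have hTeq : dlA (m + 2) - dlB (m + 3) = (r - p) / (q * ((q + p) * (q + r))) := by
    rw [eq_div_iff (ne_of_gt hDpos)]; exact hkey
  have h4pos : 0 < 4 * ((m : ℝ) + 2) * L ^ 2 :=
    mul_pos (by linarith) (pow_pos hLpos 2)
  rw [hTeq, ge_iff_le, div_le_div_iff₀ h4pos hDpos]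
  have hrppos : (0:ℝ) < (r + p) * ((m : ℝ) + 3) :=
    mul_pos (by linarith) (by linarith)
  apply le_of_mul_le_mul_right _ hrppos
  have hrp2 : (r - p) * (r + p) = 1 / ((m : ℝ) + 2) + 1 / ((m : ℝ) + 3) := by
    linear_combination hrq + hqp
  have hfac : (r - p) * (4 * ((m : ℝ) + 2) * L ^ 2) * ((r + p) * ((m : ℝ) + 3)) =
      4 * L ^ 2 * (2 * (m : ℝ) + 5) := by
    have h : (r - p) * (4 * ((m : ℝ) + 2) * L ^ 2) * ((r + p) * ((m : ℝ) + 3)) =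
        4 * L ^ 2 * (((m : ℝ) + 2) * ((m : ℝ) + 3)) * ((r - p) * (r + p)) := by ring
    rw [h, hrp2]
    field_simp
    ring
  rw [hfac]
  calc 1 * (q * ((q + p) * (q + r))) * ((r + p) * ((m : ℝ) + 3))
      = q * (q + p) * ((q + r) * (r + p)) * ((m : ℝ) + 3) := by ring
    _ ≤ 4 * L ^ 2 * (2 * (m : ℝ) + 5) := hMI

/-- Discrete Leray inequality on ℕ:
`∑_{n≥2} n |∇u_n|² ≥ (1/4) ∑_{n≥2} u_n² / (n (ln n)²)`. -/
theorem discrete_leray (u : ℕ → ℝ) (hfin : ∃ N, ∀ n ≥ N, u n = 0)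
    (h0 : u 0 = 0) (h1 : u 1 = 0) :
    ∑' n : ℕ, ((n : ℝ) + 2) * (u (n + 2) - u (n + 1)) ^ 2 ≥
      (1 / 4) * ∑' n : ℕ,
        (u (n + 2)) ^ 2 / (((n : ℝ) + 2) * (Real.log ((n : ℝ) + 2)) ^ 2) := by
  obtain ⟨N, hN⟩ := hfin
  set M := N + 2 with hM
  have hf0 : ∀ b ∉ Finset.range M, ((b : ℝ) + 2) * (u (b + 2) - u (b + 1)) ^ 2 = 0 := by
    intro b hb
    rw [Finset.mem_range, not_lt] at hb
    rw [hN (b + 2) (by omega), hN (b + 1) (by omega)]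
    ring
  have hr0 : ∀ b ∉ Finset.range M,
      (u (b + 2)) ^ 2 / (((b : ℝ) + 2) * (Real.log ((b : ℝ) + 2)) ^ 2) = 0 := by
    intro b hb
    rw [Finset.mem_range, not_lt] at hb
    rw [hN (b + 2) (by omega)]
    simp
  rw [tsum_eq_sum hf0, tsum_eq_sum hr0, Finset.mul_sum, ge_iff_le]
  have step3 : ∀ n ∈ Finset.range M,
      1 / 4 * ((u (n + 2)) ^ 2 / (((n : ℝ) + 2) * (Real.log ((n : ℝ) + 2)) ^ 2)) ≤
        dlA (n + 2) * (u (n + 2)) ^ 2 - dlB (n + 3) * (u (n + 2)) ^ 2 := by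
    intro n _
    have hc := dlC n
    have hmul := mul_le_mul_of_nonneg_right (ge_iff_le.mp hc) (sq_nonneg (u (n + 2)))
    calc 1 / 4 * ((u (n + 2)) ^ 2 / (((n : ℝ) + 2) * (Real.log ((n : ℝ) + 2)) ^ 2))
        = 1 / (4 * ((n : ℝ) + 2) * (Real.log ((n : ℝ) + 2)) ^ 2) * (u (n + 2)) ^ 2 := by
          simp only [one_div, mul_inv, div_eq_mul_inv]
          ring
      _ ≤ (dlA (n + 2) - dlB (n + 3)) * (u (n + 2)) ^ 2 := hmul
      _ = dlA (n + 2) * (u (n + 2)) ^ 2 - dlB (n + 3) * (u (n + 2)) ^ 2 := by ring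
  have tele : ∑ n ∈ Finset.range M, dlB (n + 2) * (u (n + 1)) ^ 2 =
      ∑ n ∈ Finset.range M, dlB (n + 3) * (u (n + 2)) ^ 2 := by
    rw [hM]
    rw [Finset.sum_range_succ' (fun n => dlB (n + 2) * (u (n + 1)) ^ 2) (N + 1)]
    rw [Finset.sum_range_succ (fun n => dlB (n + 3) * (u (n + 2)) ^ 2) (N + 1)]
    have e1 : u (N + 1 + 2) = 0 := hN _ (by omega)
    rw [h1, e1]
    norm_num
  have step1 : ∀ n ∈ Finset.range M,
      dlA (n + 2) * (u (n + 2)) ^ 2 - dlB (n + 2) * (u (n + 1)) ^ 2 ≤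
        ((n : ℝ) + 2) * (u (n + 2) - u (n + 1)) ^ 2 := by
    intro n _
    match n with
    | 0 =>
      rw [dlA_two, h1]
      norm_num
    | k + 1 =>
      have hP := dlP k (u (k + 3)) (u (k + 2))
      rw [ge_iff_le] at hP
      simp only [show k + 1 + 2 = k + 3 from rfl, show k + 1 + 1 = k + 2 from rfl]
      push_cast
      linarith [hP]
  calc ∑ n ∈ Finset.range M,
        1 / 4 * ((u (n + 2)) ^ 2 / (((n : ℝ) + 2) * (Real.log ((n : ℝ) + 2)) ^ 2))
      ≤ ∑ n ∈ Finset.range M,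
        (dlA (n + 2) * (u (n + 2)) ^ 2 - dlB (n + 3) * (u (n + 2)) ^ 2) :=
        Finset.sum_le_sum step3
    _ = ∑ n ∈ Finset.range M,
        (dlA (n + 2) * (u (n + 2)) ^ 2 - dlB (n + 2) * (u (n + 1)) ^ 2) := by
        rw [Finset.sum_sub_distrib, Finset.sum_sub_distrib, tele]
    _ ≤ ∑ n ∈ Finset.range M, ((n : ℝ) + 2) * (u (n + 2) - u (n + 1)) ^ 2 :=
        Finset.sum_le_sum step1
end

section
/- For every finitely supported real sequence (u_n)_{n≥0} with u_0 = u_1 = 0, the sharp discrete Rellich inequality holds: ∑_{n≥1} (Δu_n)² ≥ (9/16) ∑_{n≥2} u_n²/n⁴, where Δu_n = 2u_n − u_{n+1} − u_{n-1}. -/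
open Real Finset

lemma edge_sos (a G G' V V' : ℝ) (ha : 0 ≤ a) (hG : 0 < G) (hG' : 0 < G') :
    a * (G' - G) * (V' ^ 2 / G' - V ^ 2 / G) ≤ a * (V' - V) ^ 2 := by
  have h : a * (V' - V) ^ 2 - a * (G' - G) * (V' ^ 2 / G' - V ^ 2 / G)
      = a * (G * V' - G' * V) ^ 2 / (G * G') := by
    field_simp
    ring
  have h2 : 0 ≤ a * (G * V' - G' * V) ^ 2 / (G * G') := by positivity
  linarith

lemma abel_sum (b w : ℕ → ℝ) (M : ℕ) :
    ∑ n ∈ range M, b n * (w (n + 1) - w n)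
      = ∑ n ∈ range M, (b n - b (n + 1)) * w (n + 1) + (b M * w M - b 0 * w 0) := by
  induction M with
  | zero => simp
  | succ M ih =>
      rw [sum_range_succ, sum_range_succ, ih]
      ring

lemma sqrt_low (r : ℝ) (hr : 1 ≤ r) :
    16 * r ^ 5 * Real.sqrt (r ^ 2 - 1) ≤ 16 * r ^ 6 - 8 * r ^ 4 - 2 * r ^ 2 - 1 := by
  have hr0 : 0 < r := by linarith
  have hY : (0:ℝ) ≤ (16 * r ^ 6 - 8 * r ^ 4 - 2 * r ^ 2 - 1) / (16 * r ^ 5) := by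
    have : (0:ℝ) ≤ 16 * r ^ 6 - 8 * r ^ 4 - 2 * r ^ 2 - 1 := by nlinarith [pow_le_pow_right₀ hr (by norm_num : 4 ≤ 6), pow_le_pow_right₀ hr (by norm_num : 2 ≤ 6), one_le_pow₀ hr (n := 6)]
    positivity
  have h1 : Real.sqrt (r ^ 2 - 1) ≤ (16 * r ^ 6 - 8 * r ^ 4 - 2 * r ^ 2 - 1) / (16 * r ^ 5) := by
    have hsq : r ^ 2 - 1 ≤ ((16 * r ^ 6 - 8 * r ^ 4 - 2 * r ^ 2 - 1) / (16 * r ^ 5)) ^ 2 := by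
      rw [div_pow, le_div_iff₀ (by positivity)]
      nlinarith [sq_nonneg r, sq_nonneg (r^2), pow_pos hr0 2]
    calc Real.sqrt (r ^ 2 - 1) ≤ Real.sqrt (((16 * r ^ 6 - 8 * r ^ 4 - 2 * r ^ 2 - 1) / (16 * r ^ 5)) ^ 2) :=
          Real.sqrt_le_sqrt hsq
      _ = (16 * r ^ 6 - 8 * r ^ 4 - 2 * r ^ 2 - 1) / (16 * r ^ 5) := Real.sqrt_sq hY
  rw [le_div_iff₀ (by positivity)] at h1
  linarith

lemma sqrt_high (r : ℝ) (hr : 1 ≤ r) :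
    16 * r ^ 5 * Real.sqrt (r ^ 2 + 1) ≤ 16 * r ^ 6 + 8 * r ^ 4 - 2 * r ^ 2 + 1 := by
  have hr0 : 0 < r := by linarith
  have hY : (0:ℝ) ≤ (16 * r ^ 6 + 8 * r ^ 4 - 2 * r ^ 2 + 1) / (16 * r ^ 5) := by
    have : (0:ℝ) ≤ 16 * r ^ 6 + 8 * r ^ 4 - 2 * r ^ 2 + 1 := by nlinarith [pow_le_pow_right₀ hr (by norm_num : 2 ≤ 6)]
    positivity
  have h1 : Real.sqrt (r ^ 2 + 1) ≤ (16 * r ^ 6 + 8 * r ^ 4 - 2 * r ^ 2 + 1) / (16 * r ^ 5) := by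
    have hsq : r ^ 2 + 1 ≤ ((16 * r ^ 6 + 8 * r ^ 4 - 2 * r ^ 2 + 1) / (16 * r ^ 5)) ^ 2 := by
      rw [div_pow, le_div_iff₀ (by positivity)]
      nlinarith [sq_nonneg (20 * r ^ 2 - 2), sq_nonneg r]
    calc Real.sqrt (r ^ 2 + 1) ≤ Real.sqrt (((16 * r ^ 6 + 8 * r ^ 4 - 2 * r ^ 2 + 1) / (16 * r ^ 5)) ^ 2) :=
          Real.sqrt_le_sqrt hsq
      _ = (16 * r ^ 6 + 8 * r ^ 4 - 2 * r ^ 2 + 1) / (16 * r ^ 5) := Real.sqrt_sq hY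
  rw [le_div_iff₀ (by positivity)] at h1
  linarith

lemma one_le_sqrt' {x : ℝ} (hx : 1 ≤ x) : 1 ≤ Real.sqrt x := by
  rw [show (1:ℝ) = Real.sqrt 1 by simp]
  exact Real.sqrt_le_sqrt hx

lemma keyA (x : ℝ) (hx : 1 ≤ x) :
    Real.sqrt x / (4 * x ^ 2) ≤ 2 * Real.sqrt x - Real.sqrt (x + 1) - Real.sqrt (x - 1) := by
  set r := Real.sqrt x with hrdef
  have hr : 1 ≤ r := one_le_sqrt' hx
  have hr0 : 0 < r := by linarith
  have hx2 : r ^ 2 = x := Real.sq_sqrt (by linarith)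
  have hs := sqrt_low r hr
  have hq := sqrt_high r hr
  have h16 : (0:ℝ) < 16 * r ^ 5 := by positivity
  rw [← hx2]
  have hd : 16 * r ^ 5 * (2 * r - r / (4 * (r ^ 2) ^ 2)) = 32 * r ^ 6 - 4 * r ^ 2 := by
    field_simp
    ring
  have hmain : 16 * r ^ 5 * (Real.sqrt (r ^ 2 + 1) + Real.sqrt (r ^ 2 - 1))
      ≤ 16 * r ^ 5 * (2 * r - r / (4 * (r ^ 2) ^ 2)) := by
    rw [hd, mul_add]
    nlinarith [sq_nonneg r]
  have := (mul_le_mul_iff_right₀ h16).mp hmain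
  linarith

lemma keyB (x : ℝ) (hx : 1 ≤ x) :
    9 / 4 * (x * Real.sqrt x) / (x + 1) ^ 4 ≤
      (x * Real.sqrt x - (x - 1) * Real.sqrt (x - 1)) / x ^ 2
        - ((x + 1) * Real.sqrt (x + 1) - x * Real.sqrt x) / (x + 1) ^ 2 := by
  set r := Real.sqrt x with hrdef
  have hr : 1 ≤ r := one_le_sqrt' hx
  have hr0 : 0 < r := by linarith
  have hx2 : r ^ 2 = x := Real.sq_sqrt (by linarith)
  have hs := sqrt_low r hr
  have hq := sqrt_high r hr
  obtain ⟨s, hsd⟩ : ∃ s, Real.sqrt (x - 1) = s := ⟨_, rfl⟩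
  obtain ⟨q, hqd⟩ : ∃ q, Real.sqrt (x + 1) = q := ⟨_, rfl⟩
  rw [hsd, hqd, ← hx2]
  rw [← hx2] at hsd hqd
  rw [hsd] at hs
  rw [hqd] at hq
  set P : ℝ := 4 * (r ^ 2 + 1) ^ 4 * (r ^ 2 * r - (r ^ 2 - 1) * s)
      - 4 * (r ^ 2) ^ 2 * (r ^ 2 + 1) ^ 2 * ((r ^ 2 + 1) * q - r ^ 2 * r)
      - 9 * (r ^ 2) ^ 3 * r with hPdef
  have hE : (r ^ 2 * r - (r ^ 2 - 1) * s) / (r ^ 2) ^ 2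
        - ((r ^ 2 + 1) * q - r ^ 2 * r) / (r ^ 2 + 1) ^ 2
        - 9 / 4 * (r ^ 2 * r) / (r ^ 2 + 1) ^ 4
      = P / (4 * (r ^ 2) ^ 2 * (r ^ 2 + 1) ^ 4) := by
    rw [hPdef]
    field_simp
  have hP : 0 ≤ P := by
    have h16 : (0:ℝ) < 16 * r ^ 5 := by positivity
    have hr21 : (0:ℝ) ≤ r ^ 2 - 1 := by nlinarith
    have hc1 : (0:ℝ) ≤ 4 * (r ^ 2 + 1) ^ 4 * (r ^ 2 - 1) :=
      mul_nonneg (by positivity) hr21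
    have hc2 : (0:ℝ) ≤ 4 * (r ^ 2) ^ 2 * (r ^ 2 + 1) ^ 3 := by positivity
    have t1 := mul_le_mul_of_nonneg_left hs hc1
    have t2 := mul_le_mul_of_nonneg_left hq hc2
    have e6 : r ^ 6 ≤ r ^ 10 := pow_le_pow_right₀ hr (by norm_num)
    have e4 : r ^ 4 ≤ r ^ 10 := pow_le_pow_right₀ hr (by norm_num)
    have e2 : r ^ 2 ≤ r ^ 8 := pow_le_pow_right₀ hr (by norm_num)
    have e0 : (1:ℝ) ≤ r ^ 8 := one_le_pow₀ hr
    have hNpoly : (0:ℝ) ≤ 336 * r ^ 10 + 200 * r ^ 8 - 44 * r ^ 6 - 68 * r ^ 4 - 20 * r ^ 2 - 4 := by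
      nlinarith [e6, e4, e2, e0]
    have hN : 0 ≤ 16 * r ^ 5 * P := by
      rw [hPdef]
      nlinarith [t1, t2, hNpoly]
    have h0 : 16 * r ^ 5 * 0 ≤ 16 * r ^ 5 * P := by linarith
    exact le_of_mul_le_mul_left h0 h16
  have hpos : (0:ℝ) < 4 * (r ^ 2) ^ 2 * (r ^ 2 + 1) ^ 4 := by positivity
  have : 0 ≤ P / (4 * (r ^ 2) ^ 2 * (r ^ 2 + 1) ^ 4) := div_nonneg hP (le_of_lt hpos)
  linarith [hE ▸ this]

lemma main_fin (u : ℕ → ℝ) (N : ℕ) (h0 : u 0 = 0) (h1 : u 1 = 0)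
    (hN : ∀ n ≥ N, u n = 0) :
    9 / 16 * ∑ n ∈ range N, u (n + 2) ^ 2 / ((n : ℝ) + 2) ^ 4
      ≤ ∑ n ∈ range N, (2 * u (n + 1) - u (n + 2) - u n) ^ 2 := by
  set v : ℕ → ℝ := fun n => u (n + 1) - u n with hv
  set b1 : ℕ → ℝ := fun n => Real.sqrt ((n : ℝ) + 1) - Real.sqrt (n : ℝ) with hb1
  set w1 : ℕ → ℝ := fun n => v n ^ 2 / Real.sqrt (n : ℝ) with hw1
  set a2 : ℕ → ℝ := fun n => 1 / ((n : ℝ) + 1) ^ 2 with ha2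
  set g2 : ℕ → ℝ := fun n => (n : ℝ) * Real.sqrt (n : ℝ) with hg2
  set b2 : ℕ → ℝ := fun n => a2 n * (g2 (n + 1) - g2 n) with hb2
  set w2 : ℕ → ℝ := fun n => u (n + 1) ^ 2 / g2 n with hw2
  -- step 1 edge inequality
  have edge1 : ∀ n ∈ range N, b1 n * (w1 (n + 1) - w1 n) ≤ (v (n + 1) - v n) ^ 2 := by
    intro n _
    rcases Nat.eq_zero_or_pos n with rfl | hn
    · simp [hw1, hb1, hv, h0, h1]
    · have hG : 0 < Real.sqrt (n : ℝ) := Real.sqrt_pos.mpr (by exact_mod_cast hn)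
      have hG' : 0 < Real.sqrt ((n : ℝ) + 1) := Real.sqrt_pos.mpr (by positivity)
      have := edge_sos 1 (Real.sqrt (n : ℝ)) (Real.sqrt ((n : ℝ) + 1))
        (v n) (v (n + 1)) (by norm_num) hG hG'
      simp only [one_mul] at this
      simp only [hb1, hw1]
      push_cast
      linarith [this]
  -- step 2 edge inequality
  have edge2 : ∀ n ∈ range N,
      b2 n * (w2 (n + 1) - w2 n) ≤ a2 n * (u (n + 2) - u (n + 1)) ^ 2 := by
    intro n _
    rcases Nat.eq_zero_or_pos n with rfl | hn
    · simp [hw2, hb2, ha2, hg2, h1]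
    · have hn' : (0:ℝ) < (n : ℝ) := by exact_mod_cast hn
      have hG : 0 < g2 n := by
        simp only [hg2]
        exact mul_pos hn' (Real.sqrt_pos.mpr hn')
      have hG' : 0 < g2 (n + 1) := by
        simp only [hg2]
        push_cast
        positivity
      have ha : 0 ≤ a2 n := by simp only [ha2]; positivity
      have := edge_sos (a2 n) (g2 n) (g2 (n + 1)) (u (n + 1)) (u (n + 2)) ha hG hG'
      simp only [hb2, hw2]
      linarith [this]
  -- boundary values
  have hvN : v N = 0 := by simp [hv, hN N le_rfl, hN (N + 1) (Nat.le_succ N)]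
  have hw1N : w1 N = 0 := by simp [hw1, hvN]
  have hw10 : w1 0 = 0 := by simp [hw1]
  have hw2N : w2 N = 0 := by simp [hw2, hN (N + 1) (Nat.le_succ N)]
  have hw20 : w2 0 = 0 := by simp [hw2, hg2]
  -- pointwise lower bound after first Abel summation
  have point1 : ∀ n ∈ range N,
      1 / 4 * (a2 n * (u (n + 2) - u (n + 1)) ^ 2) ≤ (b1 n - b1 (n + 1)) * w1 (n + 1) := by
    intro n _
    have hx : (1:ℝ) ≤ (n : ℝ) + 1 := by have : (0:ℝ) ≤ (n : ℝ) := Nat.cast_nonneg n; linarith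
    have hA := keyA ((n : ℝ) + 1) hx
    have hsx : (0:ℝ) < Real.sqrt ((n : ℝ) + 1) := Real.sqrt_pos.mpr (by positivity)
    have hc : (0:ℝ) ≤ v (n + 1) ^ 2 / Real.sqrt ((n : ℝ) + 1) := by positivity
    have h2 := mul_le_mul_of_nonneg_right hA hc
    have e1 : b1 n - b1 (n + 1) = 2 * Real.sqrt ((n : ℝ) + 1) - Real.sqrt ((n : ℝ) + 1 + 1)
        - Real.sqrt ((n : ℝ) + 1 - 1) := by
      simp only [hb1]
      push_cast
      ring_nf
    have e2 : w1 (n + 1) = v (n + 1) ^ 2 / Real.sqrt ((n : ℝ) + 1) := by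
      simp only [hw1]
      push_cast
      ring_nf
    rw [e1, e2]
    have e3 : Real.sqrt ((n : ℝ) + 1) / (4 * ((n : ℝ) + 1) ^ 2)
          * (v (n + 1) ^ 2 / Real.sqrt ((n : ℝ) + 1))
        = 1 / 4 * (a2 n * (u (n + 2) - u (n + 1)) ^ 2) := by
      simp only [ha2, hv]
      push_cast
      field_simp
    rw [← e3]
    exact h2
  -- pointwise lower bound after second Abel summation
  have point2 : ∀ n ∈ range N,
      9 / 4 * (u (n + 2) ^ 2 / ((n : ℝ) + 2) ^ 4) ≤ (b2 n - b2 (n + 1)) * w2 (n + 1) := by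
    intro n _
    have hx : (1:ℝ) ≤ (n : ℝ) + 1 := by have : (0:ℝ) ≤ (n : ℝ) := Nat.cast_nonneg n; linarith
    have hB := keyB ((n : ℝ) + 1) hx
    have hsx : (0:ℝ) < Real.sqrt ((n : ℝ) + 1) := Real.sqrt_pos.mpr (by positivity)
    have hgx : (0:ℝ) < ((n : ℝ) + 1) * Real.sqrt ((n : ℝ) + 1) := by positivity
    have hc : (0:ℝ) ≤ u (n + 2) ^ 2 / (((n : ℝ) + 1) * Real.sqrt ((n : ℝ) + 1)) := by positivity
    have h2 := mul_le_mul_of_nonneg_right hB hc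
    have e1 : b2 n - b2 (n + 1)
        = (((n : ℝ) + 1) * Real.sqrt ((n : ℝ) + 1)
            - ((n : ℝ) + 1 - 1) * Real.sqrt ((n : ℝ) + 1 - 1)) / ((n : ℝ) + 1) ^ 2
          - ((((n : ℝ) + 1) + 1) * Real.sqrt (((n : ℝ) + 1) + 1)
            - ((n : ℝ) + 1) * Real.sqrt ((n : ℝ) + 1)) / (((n : ℝ) + 1) + 1) ^ 2 := by
      simp only [hb2, ha2, hg2]
      push_cast
      ring_nf
    have e2 : w2 (n + 1) = u (n + 2) ^ 2 / (((n : ℝ) + 1) * Real.sqrt ((n : ℝ) + 1)) := by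
      simp only [hw2, hg2]
      push_cast
      ring_nf
    rw [e1, e2]
    have e3 : 9 / 4 * (((n : ℝ) + 1) * Real.sqrt ((n : ℝ) + 1)) / (((n : ℝ) + 1) + 1) ^ 4
          * (u (n + 2) ^ 2 / (((n : ℝ) + 1) * Real.sqrt ((n : ℝ) + 1)))
        = 9 / 4 * (u (n + 2) ^ 2 / ((n : ℝ) + 2) ^ 4) := by
      have h12 : ((n : ℝ) + 1) + 1 = (n : ℝ) + 2 := by ring
      rw [h12]
      field_simp
    rw [← e3]
    exact h2
  -- assemble
  have habel1 : ∑ n ∈ range N, b1 n * (w1 (n + 1) - w1 n)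
      = ∑ n ∈ range N, (b1 n - b1 (n + 1)) * w1 (n + 1) := by
    rw [abel_sum b1 w1 N, hw1N, hw10]
    ring
  have habel2 : ∑ n ∈ range N, b2 n * (w2 (n + 1) - w2 n)
      = ∑ n ∈ range N, (b2 n - b2 (n + 1)) * w2 (n + 1) := by
    rw [abel_sum b2 w2 N, hw2N, hw20]
    ring
  have hstep1 : ∑ n ∈ range N, (b1 n - b1 (n + 1)) * w1 (n + 1)
      ≤ ∑ n ∈ range N, (v (n + 1) - v n) ^ 2 := by
    rw [← habel1]
    exact sum_le_sum edge1
  have hstep2 : ∑ n ∈ range N, (b2 n - b2 (n + 1)) * w2 (n + 1)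
      ≤ ∑ n ∈ range N, a2 n * (u (n + 2) - u (n + 1)) ^ 2 := by
    rw [← habel2]
    exact sum_le_sum edge2
  have hmid1 : ∑ n ∈ range N, 1 / 4 * (a2 n * (u (n + 2) - u (n + 1)) ^ 2)
      ≤ ∑ n ∈ range N, (b1 n - b1 (n + 1)) * w1 (n + 1) := sum_le_sum point1
  have hmid2 : ∑ n ∈ range N, 9 / 4 * (u (n + 2) ^ 2 / ((n : ℝ) + 2) ^ 4)
      ≤ ∑ n ∈ range N, (b2 n - b2 (n + 1)) * w2 (n + 1) := sum_le_sum point2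
  have heqL : ∑ n ∈ range N, (2 * u (n + 1) - u (n + 2) - u n) ^ 2
      = ∑ n ∈ range N, (v (n + 1) - v n) ^ 2 := by
    apply sum_congr rfl
    intro n _
    simp only [hv]
    ring
  have hfac1 : ∑ n ∈ range N, 1 / 4 * (a2 n * (u (n + 2) - u (n + 1)) ^ 2)
      = 1 / 4 * ∑ n ∈ range N, a2 n * (u (n + 2) - u (n + 1)) ^ 2 := by
    rw [mul_sum]
  have hfac2 : ∑ n ∈ range N, 9 / 4 * (u (n + 2) ^ 2 / ((n : ℝ) + 2) ^ 4)
      = 9 / 4 * ∑ n ∈ range N, u (n + 2) ^ 2 / ((n : ℝ) + 2) ^ 4 := by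
    rw [mul_sum]
  nlinarith [hstep1, hstep2, hmid1, hmid2]


/-- Sharp second order discrete Rellich inequality:
`∑_{n≥1} (Δu_n)² ≥ (9/16) ∑_{n≥2} u_n²/n⁴` where `Δu_n = 2u_n − u_{n+1} − u_{n-1}`. -/
theorem discrete_rellich_order_two (u : ℕ → ℝ) (hfin : ∃ N, ∀ n ≥ N, u n = 0)
    (h0 : u 0 = 0) (h1 : u 1 = 0) :
    ∑' n : ℕ, (2 * u (n + 1) - u (n + 2) - u n) ^ 2 ≥
      (9 / 16) * ∑' n : ℕ, (u (n + 2)) ^ 2 / ((n : ℝ) + 2) ^ 4 := by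
  obtain ⟨N, hN⟩ := hfin
  have hL : ∑' n : ℕ, (2 * u (n + 1) - u (n + 2) - u n) ^ 2
      = ∑ n ∈ range N, (2 * u (n + 1) - u (n + 2) - u n) ^ 2 := by
    apply tsum_eq_sum
    intro b hb
    have hbN : N ≤ b := by simpa using hb
    rw [hN b hbN, hN (b + 1) (by omega), hN (b + 2) (by omega)]
    ring
  have hR : ∑' n : ℕ, (u (n + 2)) ^ 2 / ((n : ℝ) + 2) ^ 4
      = ∑ n ∈ range N, (u (n + 2)) ^ 2 / ((n : ℝ) + 2) ^ 4 := by
    apply tsum_eq_sum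
    intro b hb
    have hbN : N ≤ b := by simpa using hb
    rw [hN (b + 2) (by omega)]
    simp
  rw [hL, hR, ge_iff_le]
  exact main_fin u N h0 h1 hN
end

section
/- The second-order discrete Rellich inequality fails without the condition u_1 = 0: for every ε > 0 there exists a finitely supported real sequence u with u_0 = 0 (but u_1 ≠ 0) such that ∑_{n≥1} (Δu_n)² < ε ∑_{n≥2} u_n²/n⁴. -/
/-- The second order discrete Rellich inequality fails without `u_1 = 0`:
for every `ε > 0` there is a finitely supported `u` with `u_0 = 0`, `u_1 ≠ 0`,
whose Rellich quotient is smaller than `ε`. -/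
theorem rellich_fails_without_u1 :
    ∀ ε > (0 : ℝ), ∃ u : ℕ → ℝ,
      (∃ N, ∀ n ≥ N, u n = 0) ∧ u 0 = 0 ∧ u 1 ≠ 0 ∧
      ∑' n : ℕ, (2 * u (n + 1) - u (n + 2) - u n) ^ 2 <
        ε * ∑' n : ℕ, (u (n + 2)) ^ 2 / ((n : ℝ) + 2) ^ 4 := by
  intro ε hε
  obtain ⟨L, hL⟩ := exists_nat_gt (max 4 (4608 / ε))
  set R : ℝ := (L : ℝ) with hRdef
  have hR4 : (4:ℝ) ≤ R := le_of_lt (lt_of_le_of_lt (le_max_left _ _) hL)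
  have hRε : 4608 / ε < R := lt_of_le_of_lt (le_max_right _ _) hL
  have hR0 : (0:ℝ) < R := by linarith
  have hL4 : 4 ≤ L := by
    have h4 : (4:ℝ) ≤ (L:ℝ) := by rw [← hRdef]; exact hR4
    exact_mod_cast h4
  set u : ℕ → ℝ := fun n => if n ≤ L then (n:ℝ) * (R - (n:ℝ))^2 / R^2 else 0 with hu
  have hsupp : ∀ n ≥ L + 1, u n = 0 := by
    intro n hn
    simp only [hu]
    rw [if_neg (by omega)]
  refine ⟨u, ⟨L + 1, hsupp⟩, ?_, ?_, ?_⟩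
  · simp [hu]
  · simp only [hu]
    rw [if_pos (by omega)]
    have h1 : R - 1 ≠ 0 := by linarith
    push_cast
    positivity
  · -- main inequality
    set f : ℕ → ℝ := fun n => (2 * u (n + 1) - u (n + 2) - u n) ^ 2 with hf
    set g : ℕ → ℝ := fun n => (u (n + 2)) ^ 2 / ((n : ℝ) + 2) ^ 4 with hg
    have hfzero : ∀ n ∉ Finset.range (L + 1), f n = 0 := by
      intro n hn
      simp only [Finset.mem_range, not_lt] at hn
      have h0 : u n = 0 := hsupp n (by omega)
      have h1 : u (n+1) = 0 := hsupp (n+1) (by omega)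
      have h2 : u (n+2) = 0 := hsupp (n+2) (by omega)
      simp [hf, h0, h1, h2]
    have hgzero : ∀ n ∉ Finset.range (L + 1), g n = 0 := by
      intro n hn
      simp only [Finset.mem_range, not_lt] at hn
      have h2 : u (n+2) = 0 := hsupp (n+2) (by omega)
      simp [hg, h2]
    have hfsum : ∑' n, f n = ∑ n ∈ Finset.range (L + 1), f n := tsum_eq_sum hfzero
    have hgsummable : Summable g := summable_of_ne_finset_zero hgzero
    -- per-term bound on f
    have hterm : ∀ n ∈ Finset.range (L + 1), f n ≤ 36 / R ^ 2 := by
      intro n hn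
      simp only [Finset.mem_range] at hn
      have hnL : n ≤ L := by omega
      rcases lt_trichotomy (n + 2) (L + 1) with h | h | h
      · -- n + 2 ≤ L : interior
        have h2 : n + 2 ≤ L := by omega
        have h1 : n + 1 ≤ L := by omega
        have e0 : u n = (n:ℝ) * (R - (n:ℝ))^2 / R^2 := by
          simp only [hu]; rw [if_pos hnL]
        have e1 : u (n+1) = ((n:ℝ)+1) * (R - ((n:ℝ)+1))^2 / R^2 := by
          simp only [hu]; rw [if_pos h1]; push_cast; ring
        have e2 : u (n+2) = ((n:ℝ)+2) * (R - ((n:ℝ)+2))^2 / R^2 := by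
          simp only [hu]; rw [if_pos h2]; push_cast; ring
        have ha0 : (0:ℝ) ≤ (n:ℝ) := Nat.cast_nonneg n
        have haR : (n:ℝ) + 2 ≤ R := by
          rw [hRdef]; exact_mod_cast h2
        have key : 2 * u (n+1) - u (n+2) - u n = (4*R - 6*(n:ℝ) - 6) / R^2 := by
          rw [e0, e1, e2]
          field_simp
          ring
        simp only [hf]
        rw [key, div_pow, div_le_div_iff₀ (by positivity) (by positivity)]
        nlinarith [sq_nonneg R, mul_nonneg (mul_nonneg ha0 ha0) (sq_nonneg R),
          mul_nonneg ha0 (sq_nonneg R), sq_nonneg (R - (n:ℝ)), sq_nonneg ((4*R - 6*(n:ℝ) - 6) * R)]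
      · -- n + 2 = L + 1
        have hn1 : n + 1 = L := by omega
        have h1 : n + 1 ≤ L := by omega
        have hnot : ¬ (n + 2 ≤ L) := by omega
        have e0 : u n = (n:ℝ) * (R - (n:ℝ))^2 / R^2 := by
          simp only [hu]; rw [if_pos hnL]
        have e1 : u (n+1) = ((n:ℝ)+1) * (R - ((n:ℝ)+1))^2 / R^2 := by
          simp only [hu]; rw [if_pos h1]; push_cast; ring
        have e2 : u (n+2) = 0 := by simp only [hu]; rw [if_neg hnot]
        have haR : (n:ℝ) + 1 = R := by rw [hRdef]; exact_mod_cast hn1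
        have key : 2 * u (n+1) - u (n+2) - u n = -((R - 1) / R^2) := by
          rw [e0, e1, e2, haR]
          have hn' : (n:ℝ) = R - 1 := by linarith
          rw [hn']
          field_simp
          ring
        simp only [hf]
        rw [key]
        have : (-((R - 1) / R^2))^2 = (R-1)^2 / (R^2)^2 := by
          rw [neg_pow, div_pow]; ring
        rw [this, div_le_div_iff₀ (by positivity) (by positivity)]
        nlinarith [sq_nonneg R, sq_nonneg (R-1)]
      · -- n = L
        have hnL' : n = L := by omega
        have e0 : u n = 0 := by
          simp only [hu]; rw [if_pos hnL, hnL']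
          have : R - (L:ℝ) = 0 := by rw [hRdef]; ring
          rw [this]; ring
        have e1 : u (n+1) = 0 := hsupp (n+1) (by omega)
        have e2 : u (n+2) = 0 := hsupp (n+2) (by omega)
        simp only [hf, e0, e1, e2]
        have : (2 * (0:ℝ) - 0 - 0)^2 = 0 := by ring
        rw [this]
        positivity
    -- bound the f sum
    have hfbound : ∑' n, f n ≤ 72 / R := by
      rw [hfsum]
      calc ∑ n ∈ Finset.range (L + 1), f n
          ≤ ∑ _n ∈ Finset.range (L + 1), (36 / R ^ 2) := Finset.sum_le_sum hterm
        _ = (L + 1 : ℝ) * (36 / R ^ 2) := by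
            rw [Finset.sum_const, Finset.card_range]; push_cast; ring
        _ = (R + 1) * (36 / R ^ 2) := by rw [hRdef]
        _ = 36 * (R + 1) / R ^ 2 := by ring
        _ ≤ 72 / R := by
            rw [div_le_div_iff₀ (by positivity) hR0]
            nlinarith
    -- lower bound the g sum
    have hg0 : g 0 = (2 * (R - 2)^2 / R^2)^2 / 16 := by
      have e2 : u 2 = 2 * (R - 2)^2 / R^2 := by
        simp only [hu]; rw [if_pos (by omega)]; push_cast; ring
      simp only [hg]
      norm_num [e2]
    have hgbound : (2 * (R - 2)^2 / R^2)^2 / 16 ≤ ∑' n, g n := by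
      rw [← hg0]
      refine Summable.le_tsum hgsummable 0 (fun j _ => ?_)
      simp only [hg]
      positivity
    -- conclude
    have key : R^4 ≤ 16*(R-2)^4 := by
      have h := pow_le_pow_left₀ (by linarith : (0:ℝ) ≤ R)
        (by linarith : R ≤ 2*(R-2)) 4
      ring_nf at h ⊢
      linarith [h]
    have hg0lb : (1:ℝ)/64 ≤ (2 * (R - 2)^2 / R^2)^2 / 16 := by
      have h : (2 * (R - 2)^2 / R^2)^2 / 16 = (R-2)^4 / (4*R^4) := by
        field_simp; ring
      rw [h, div_le_div_iff₀ (by norm_num) (by positivity)]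
      linarith [key]
    have hεR : 4608 < ε * R := by
      rw [div_lt_iff₀ hε] at hRε
      linarith [hRε]
    have step1 : 72 / R < ε / 64 := by
      rw [div_lt_div_iff₀ hR0 (by norm_num)]
      linarith [hεR]
    have step2 : ε / 64 ≤ ε * ∑' n, g n := by
      calc ε / 64 = ε * (1/64) := by ring
        _ ≤ ε * ((2 * (R - 2)^2 / R^2)^2 / 16) := by
            exact mul_le_mul_of_nonneg_left hg0lb (le_of_lt hε)
        _ ≤ ε * ∑' n, g n := mul_le_mul_of_nonneg_left hgbound (le_of_lt hε)
    calc ∑' n, f n ≤ 72 / R := hfbound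
      _ < ε / 64 := step1
      _ ≤ ε * ∑' n, g n := step2
end

section
/- Define H_α(x) = 1 + (1−x)^α − (1−x)^{(1+α)/2} − (1+x)^{(1−α)/2} for x ∈ [0,1). For every α < 0 and every x ∈ [0,1), the third derivative satisfies H_α'''(x) > 0; consequently H_α(x) > ((1−α)²/4) x² for all x ∈ (0,1). -/
open Real Set Filter Topology

noncomputable def Hf (α x : ℝ) : ℝ :=
  1 + (1 - x) ^ α - (1 - x) ^ ((1 + α) / 2) - (1 + x) ^ ((1 - α) / 2)

noncomputable def Hf1 (α x : ℝ) : ℝ :=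
  -(α * (1 - x) ^ (α - 1)) + ((1 + α) / 2) * (1 - x) ^ ((1 + α) / 2 - 1)
    - ((1 - α) / 2) * (1 + x) ^ ((1 - α) / 2 - 1)

noncomputable def Hf2 (α x : ℝ) : ℝ :=
  α * (α - 1) * (1 - x) ^ (α - 2)
    - ((1 + α) / 2) * ((1 + α) / 2 - 1) * (1 - x) ^ ((1 + α) / 2 - 2)
    - ((1 - α) / 2) * ((1 - α) / 2 - 1) * (1 + x) ^ ((1 - α) / 2 - 2)

noncomputable def Hf3 (α x : ℝ) : ℝ :=
  -(α * (α - 1) * (α - 2) * (1 - x) ^ (α - 3))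
    + ((1 + α) / 2) * ((1 + α) / 2 - 1) * ((1 + α) / 2 - 2) * (1 - x) ^ ((1 + α) / 2 - 3)
    - ((1 - α) / 2) * ((1 - α) / 2 - 1) * ((1 - α) / 2 - 2) * (1 + x) ^ ((1 - α) / 2 - 3)

lemma hasDerivAt_one_sub_rpow (p x : ℝ) (hx : x < 1) :
    HasDerivAt (fun y : ℝ => (1 - y) ^ p) (-(p * (1 - x) ^ (p - 1))) x := by
  have h1 : HasDerivAt (fun y : ℝ => 1 - y) (-1) x := by
    simpa using (hasDerivAt_id x).const_sub 1
  have h2 : HasDerivAt (fun z : ℝ => z ^ p) (p * (1 - x) ^ (p - 1)) (1 - x) :=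
    Real.hasDerivAt_rpow_const (Or.inl (by linarith))
  have := h2.comp x h1
  simpa [mul_comm, Function.comp_def] using this

lemma hasDerivAt_one_add_rpow (p x : ℝ) (hx : -1 < x) :
    HasDerivAt (fun y : ℝ => (1 + y) ^ p) (p * (1 + x) ^ (p - 1)) x := by
  have h1 : HasDerivAt (fun y : ℝ => 1 + y) 1 x := by
    simpa using (hasDerivAt_id x).const_add 1
  have h2 : HasDerivAt (fun z : ℝ => z ^ p) (p * (1 + x) ^ (p - 1)) (1 + x) :=
    Real.hasDerivAt_rpow_const (Or.inl (by linarith))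
  have := h2.comp x h1
  simpa [mul_comm, Function.comp_def] using this

lemma hasDerivAt_Hf (α x : ℝ) (hx : x ∈ Ioo (-1 : ℝ) 1) :
    HasDerivAt (Hf α) (Hf1 α x) x := by
  have h1 := hasDerivAt_one_sub_rpow α x hx.2
  have h2 := hasDerivAt_one_sub_rpow ((1 + α) / 2) x hx.2
  have h3 := hasDerivAt_one_add_rpow ((1 - α) / 2) x hx.1
  have := ((h1.const_add 1).sub h2).sub h3
  refine this.congr_deriv ?_
  unfold Hf1; ring

lemma hasDerivAt_Hf1 (α x : ℝ) (hx : x ∈ Ioo (-1 : ℝ) 1) :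
    HasDerivAt (Hf1 α) (Hf2 α x) x := by
  have h1 := (hasDerivAt_one_sub_rpow (α - 1) x hx.2).const_mul α
  have h2 := (hasDerivAt_one_sub_rpow ((1 + α) / 2 - 1) x hx.2).const_mul ((1 + α) / 2)
  have h3 := (hasDerivAt_one_add_rpow ((1 - α) / 2 - 1) x hx.1).const_mul ((1 - α) / 2)
  have := ((h1.neg.add h2).sub h3)
  refine this.congr_deriv ?_
  unfold Hf2
  rw [show α - 1 - 1 = α - 2 by ring, show (1 + α) / 2 - 1 - 1 = (1 + α) / 2 - 2 by ring,
    show (1 - α) / 2 - 1 - 1 = (1 - α) / 2 - 2 by ring]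
  ring

lemma hasDerivAt_Hf2 (α x : ℝ) (hx : x ∈ Ioo (-1 : ℝ) 1) :
    HasDerivAt (Hf2 α) (Hf3 α x) x := by
  have h1 := (hasDerivAt_one_sub_rpow (α - 2) x hx.2).const_mul (α * (α - 1))
  have h2 := (hasDerivAt_one_sub_rpow ((1 + α) / 2 - 2) x hx.2).const_mul
    (((1 + α) / 2) * ((1 + α) / 2 - 1))
  have h3 := (hasDerivAt_one_add_rpow ((1 - α) / 2 - 2) x hx.1).const_mul
    (((1 - α) / 2) * ((1 - α) / 2 - 1))
  have := (h1.sub h2).sub h3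
  refine this.congr_deriv ?_
  unfold Hf3
  rw [show α - 2 - 1 = α - 3 by ring, show (1 + α) / 2 - 2 - 1 = (1 + α) / 2 - 3 by ring,
    show (1 - α) / 2 - 2 - 1 = (1 - α) / 2 - 3 by ring]
  ring

lemma iteratedDeriv_three_Hf (α : ℝ) {x : ℝ} (hx : x ∈ Ioo (-1 : ℝ) 1) :
    iteratedDeriv 3 (Hf α) x = Hf3 α x := by
  have hU : Ioo (-1 : ℝ) 1 ∈ 𝓝 x := Ioo_mem_nhds hx.1 hx.2
  have h1 : ∀ y ∈ Ioo (-1 : ℝ) 1, deriv (Hf α) y = Hf1 α y :=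
    fun y hy => (hasDerivAt_Hf α y hy).deriv
  have h2 : ∀ y ∈ Ioo (-1 : ℝ) 1, deriv (deriv (Hf α)) y = Hf2 α y := by
    intro y hy
    have he : deriv (Hf α) =ᶠ[𝓝 y] Hf1 α :=
      Filter.eventuallyEq_of_mem (Ioo_mem_nhds hy.1 hy.2) h1
    rw [he.deriv_eq]
    exact (hasDerivAt_Hf1 α y hy).deriv
  have h3 : deriv (deriv (deriv (Hf α))) x = Hf3 α x := by
    have he : deriv (deriv (Hf α)) =ᶠ[𝓝 x] Hf2 α :=
      Filter.eventuallyEq_of_mem hU h2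
    rw [he.deriv_eq]
    exact (hasDerivAt_Hf2 α x hx).deriv
  rw [show (3 : ℕ) = 2 + 1 from rfl, iteratedDeriv_succ, show (2 : ℕ) = 1 + 1 from rfl,
    iteratedDeriv_succ, iteratedDeriv_one]
  exact h3

lemma Hf3_pos (α : ℝ) (hα : α < 0) {x : ℝ} (hx : x ∈ Ico (0 : ℝ) 1) :
    0 < Hf3 α x := by
  obtain ⟨hx0, hx1⟩ := hx
  set t : ℝ := 1 - x with ht_def
  set s : ℝ := 1 + x with hs_def
  have ht : 0 < t := by simp only [ht_def]; linarith
  have ht1 : t ≤ 1 := by simp only [ht_def]; linarith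
  have hs1 : 1 ≤ s := by simp only [hs_def]; linarith
  have hst : s * t ≤ 1 := by simp only [ht_def, hs_def]; nlinarith
  set u : ℝ := t ^ (α - 3) with hu_def
  set v : ℝ := t ^ ((1 + α) / 2 - 3) with hv_def
  set w : ℝ := s ^ ((1 - α) / 2 - 3) with hw_def
  have hu : 0 < u := Real.rpow_pos_of_pos ht _
  have hv : 0 < v := Real.rpow_pos_of_pos ht _
  have hw : 0 < w := Real.rpow_pos_of_pos (by linarith) _
  have h1u : 1 ≤ u := Real.one_le_rpow_of_pos_of_le_one_of_nonpos ht ht1 (by linarith)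
  have h1v : 1 ≤ v := Real.one_le_rpow_of_pos_of_le_one_of_nonpos ht ht1 (by linarith)
  have hvu : v ≤ u := Real.rpow_le_rpow_of_exponent_ge ht ht1 (by linarith)
  have hwu : w ≤ u := by
    by_cases hc : (1 - α) / 2 - 3 ≤ 0
    · exact le_trans (Real.rpow_le_one_of_one_le_of_nonpos hs1 hc) h1u
    · push_neg at hc
      have hsle : s ≤ t⁻¹ := by
        rw [← mul_le_mul_iff_of_pos_right ht, inv_mul_cancel₀ ht.ne']
        exact hst
      calc w ≤ (t⁻¹) ^ ((1 - α) / 2 - 3) :=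
              Real.rpow_le_rpow (by linarith) hsle hc.le
        _ = t ^ (-((1 - α) / 2 - 3)) := by
              rw [Real.inv_rpow ht.le, ← Real.rpow_neg ht.le]
        _ ≤ u := Real.rpow_le_rpow_of_exponent_ge ht ht1 (by linarith)
  have hform : Hf3 α x =
      (-(α * (α - 1) * (α - 2))) * u
        + (((1 + α) / 2) * ((1 + α) / 2 - 1) * ((1 + α) / 2 - 2)) * v
        + (-(((1 - α) / 2) * ((1 - α) / 2 - 1) * ((1 - α) / 2 - 2))) * w := by
    unfold Hf3; ring
  obtain ⟨A, hA_def⟩ : ∃ A : ℝ, A = -(α * (α - 1) * (α - 2)) := ⟨_, rfl⟩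
  obtain ⟨B, hB_def⟩ : ∃ B : ℝ, B = ((1 + α) / 2) * ((1 + α) / 2 - 1) * ((1 + α) / 2 - 2) :=
    ⟨_, rfl⟩
  obtain ⟨C, hC_def⟩ : ∃ C : ℝ,
      C = -(((1 - α) / 2) * ((1 - α) / 2 - 1) * ((1 - α) / 2 - 2)) := ⟨_, rfl⟩
  rw [← hA_def, ← hB_def, ← hC_def] at hform
  have hA : 0 < A := by
    have hp : 0 < (-α) * (1 - α) * (2 - α) :=
      mul_pos (mul_pos (by linarith) (by linarith)) (by linarith)
    have he : A = (-α) * (1 - α) * (2 - α) := by simp only [hA_def]; ring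
    linarith
  rw [hform]
  rcases le_or_gt (-1 : ℝ) α with hcase | hcase
  · -- `-1 ≤ α < 0` : B ≥ 0, C ≤ 0, w ≤ v
    have hB0 : 0 ≤ B := by
      have hp : 0 ≤ (1 + α) * (1 - α) * (3 - α) :=
        mul_nonneg (mul_nonneg (by linarith) (by linarith)) (by linarith)
      have he : B = (1 + α) * (1 - α) * (3 - α) / 8 := by simp only [hB_def]; ring
      linarith
    have hC0 : C ≤ 0 := by
      have hp : 0 ≤ (1 - α) * (1 + α) * (3 + α) :=
        mul_nonneg (mul_nonneg (by linarith) (by linarith)) (by linarith)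
      have he : C = -((1 - α) * (1 + α) * (3 + α) / 8) := by simp only [hC_def]; ring
      linarith
    have hBC : 0 ≤ B + C := by
      have hp : 0 ≤ (-α) * (1 + α) * (1 - α) :=
        mul_nonneg (mul_nonneg (by linarith) (by linarith)) (by linarith)
      have he : B + C = (-α) * (1 + α) * (1 - α) / 4 := by
        simp only [hB_def, hC_def]; ring
      linarith
    have hwv : w ≤ v := by
      have : w ≤ 1 := Real.rpow_le_one_of_one_le_of_nonpos hs1 (by linarith)
      linarith
    have h1 : C * v ≤ C * w := mul_le_mul_of_nonpos_left hwv hC0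
    have h2 : 0 < A * u := mul_pos hA hu
    have h3 : 0 ≤ (B + C) * v := mul_nonneg hBC hv.le
    have h4 : B * v + C * v = (B + C) * v := by ring
    linarith
  · -- `α < -1` : B < 0
    have hB0 : B < 0 := by
      have hp : 0 < (-(1 + α)) * (1 - α) * (3 - α) :=
        mul_pos (mul_pos (by linarith) (by linarith)) (by linarith)
      have he : B = -((-(1 + α)) * (1 - α) * (3 - α) / 8) := by simp only [hB_def]; ring
      linarith
    have hBu : B * u ≤ B * v := mul_le_mul_of_nonpos_left hvu hB0.le
    rcases le_or_gt 0 C with hC0 | hC0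
    · have hAB : 0 < A + B := by
        have hq : 0 < 7 * α ^ 2 - 14 * α + 3 := by nlinarith
        have hp : 0 < (1 - α) * (7 * α ^ 2 - 14 * α + 3) := mul_pos (by linarith) hq
        have he : A + B = (1 - α) * (7 * α ^ 2 - 14 * α + 3) / 8 := by
          simp only [hA_def, hB_def]; ring
        linarith
      have h2 : 0 < (A + B) * u := mul_pos hAB hu
      have h3 : 0 ≤ C * w := mul_nonneg hC0 hw.le
      have h4 : A * u + B * u = (A + B) * u := by ring
      linarith
    · have hCu : C * u ≤ C * w := mul_le_mul_of_nonpos_left hwu hC0.le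
      have hABC : 0 < A + B + C := by
        have hp : 0 < (-3 * α) * (1 - α) * (3 - α) :=
          mul_pos (mul_pos (by linarith) (by linarith)) (by linarith)
        have he : A + B + C = (-3 * α) * (1 - α) * (3 - α) / 4 := by
          simp only [hA_def, hB_def, hC_def]; ring
        linarith
      have h2 : 0 < (A + B + C) * u := mul_pos hABC hu
      have h4 : A * u + B * u + C * u = (A + B + C) * u := by ring
      linarith

lemma Ico_subset_Ioo' : Ico (0 : ℝ) 1 ⊆ Ioo (-1 : ℝ) 1 := fun y hy => ⟨by linarith [hy.1], hy.2⟩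

/-- Generic step: if `g` has positive derivative `g'` on `Ioo 0 1` (witnessed by
`HasDerivAt` on `Ioo (-1) 1`) and `g 0 = 0`, then `g > 0` on `Ioo 0 1`. -/
lemma pos_of_deriv_pos (g g' : ℝ → ℝ)
    (hd : ∀ y ∈ Ioo (-1 : ℝ) 1, HasDerivAt g (g' y) y)
    (hg0 : g 0 = 0) (hg' : ∀ y ∈ Ioo (0 : ℝ) 1, 0 < g' y) :
    ∀ x ∈ Ioo (0 : ℝ) 1, 0 < g x := by
  intro x hx
  have hmono : StrictMonoOn g (Ico (0 : ℝ) 1) := by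
    apply strictMonoOn_of_deriv_pos (convex_Ico 0 1)
    · intro y hy
      exact (hd y (Ico_subset_Ioo' hy)).continuousAt.continuousWithinAt
    · intro y hy
      rw [interior_Ico] at hy
      rw [(hd y (Ico_subset_Ioo' (Ioo_subset_Ico_self hy))).deriv]
      exact hg' y hy
  have := hmono (by constructor <;> norm_num) ⟨hx.1.le, hx.2⟩ hx.1
  rwa [hg0] at this

lemma Hf_lower (α : ℝ) (hα : α < 0) :
    ∀ x ∈ Ioo (0 : ℝ) 1, ((1 - α) ^ 2 / 4) * x ^ 2 < Hf α x := by
  have h2 : ∀ x ∈ Ioo (0 : ℝ) 1, 0 < Hf2 α x - (1 - α) ^ 2 / 2 := by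
    apply pos_of_deriv_pos _ (Hf3 α)
    · intro y hy
      exact ((hasDerivAt_Hf2 α y hy).sub_const _)
    · have : Hf2 α 0 = (1 - α) ^ 2 / 2 := by
        simp only [Hf2, sub_zero, add_zero, Real.one_rpow]
        ring
      rw [this]; ring
    · intro y hy
      exact Hf3_pos α hα ⟨hy.1.le, hy.2⟩
  have h1 : ∀ x ∈ Ioo (0 : ℝ) 1, 0 < Hf1 α x - ((1 - α) ^ 2 / 2) * x := by
    apply pos_of_deriv_pos _ (fun y => Hf2 α y - (1 - α) ^ 2 / 2)
    · intro y hy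
      have hid : HasDerivAt (fun y : ℝ => ((1 - α) ^ 2 / 2) * y) ((1 - α) ^ 2 / 2) y := by
        simpa using (hasDerivAt_id y).const_mul ((1 - α) ^ 2 / 2)
      exact (hasDerivAt_Hf1 α y hy).sub hid
    · simp only [Hf1, sub_zero, add_zero, Real.one_rpow, mul_zero, mul_one]
      ring
    · exact h2
  have h0 : ∀ x ∈ Ioo (0 : ℝ) 1, 0 < Hf α x - ((1 - α) ^ 2 / 4) * x ^ 2 := by
    apply pos_of_deriv_pos _ (fun y => Hf1 α y - ((1 - α) ^ 2 / 2) * y)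
    · intro y hy
      have hid : HasDerivAt (fun y : ℝ => ((1 - α) ^ 2 / 4) * y ^ 2)
          (((1 - α) ^ 2 / 2) * y) y := by
        have := (hasDerivAt_pow 2 y).const_mul ((1 - α) ^ 2 / 4)
        refine this.congr_deriv ?_
        norm_num; ring
      exact (hasDerivAt_Hf α y hy).sub hid
    · simp only [Hf, sub_zero, add_zero, Real.one_rpow, mul_zero]
      norm_num
    · exact h1
  intro x hx
  have := h0 x hx
  linarith

/-- For `α < 0` and `H_α(x) = 1 + (1−x)^α − (1−x)^{(1+α)/2} − (1+x)^{(1−α)/2}`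
on `[0,1)`: `H_α''' > 0` on `[0,1)` and `H_α(x) > ((1−α)²/4) x²` on `(0,1)`. -/
theorem Halpha_third_deriv_pos (α : ℝ) (hα : α < 0) :
    (∀ x ∈ Set.Ico (0 : ℝ) 1,
      0 < iteratedDeriv 3
        (fun x : ℝ => 1 + (1 - x) ^ α - (1 - x) ^ ((1 + α) / 2) - (1 + x) ^ ((1 - α) / 2)) x) ∧
    (∀ x ∈ Set.Ioo (0 : ℝ) 1,
      ((1 - α) ^ 2 / 4) * x ^ 2 <
        1 + (1 - x) ^ α - (1 - x) ^ ((1 + α) / 2) - (1 + x) ^ ((1 - α) / 2)) := by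
  constructor
  · intro x hx
    have hx' : x ∈ Ioo (-1 : ℝ) 1 := Ico_subset_Ioo' hx
    have : iteratedDeriv 3 (Hf α) x = Hf3 α x := iteratedDeriv_three_Hf α hx'
    exact this ▸ Hf3_pos α hα hx
  · intro x hx
    exact Hf_lower α hα x hx
end

section
/- Define G_α(x) = 1 + (1+x)^α − (1+x)^{(α+1)/2} − (1−x)^{(1−α)/2} for x ∈ [0,1]. For every α ∈ [0,1], G_α'''(x) ≥ 0 on [0,1], and consequently G_α(x) ≥ ((α−1)²/4) x² for x ∈ [0,1]. -/
open Set Filter Real Topology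

private lemma iteratedDeriv_three' (f : ℝ → ℝ) :
    iteratedDeriv 3 f = deriv (deriv (deriv f)) := by
  rw [show (3 : ℕ) = 2 + 1 from rfl, iteratedDeriv_succ,
    show (2 : ℕ) = 1 + 1 from rfl, iteratedDeriv_succ, iteratedDeriv_one]

private lemma hasDerivAt_plus (s y : ℝ) (hy : 0 < 1 + y) :
    HasDerivAt (fun x : ℝ => (1 + x) ^ s) (s * (1 + y) ^ (s - 1)) y := by
  have h := (((hasDerivAt_id y).const_add 1).rpow_const (p := s) (Or.inl hy.ne'))
  simpa using h

private lemma hasDerivAt_minus (s y : ℝ) (hy : 0 < 1 - y) :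
    HasDerivAt (fun x : ℝ => (1 - x) ^ s) (-(s * (1 - y) ^ (s - 1))) y := by
  have h := (((hasDerivAt_id y).const_sub 1).rpow_const (p := s) (Or.inl hy.ne'))
  simp only [id_eq] at h
  convert h using 1
  ring

private lemma tendsto_rpow_one_sub {s : ℝ} (hs : s < 0) :
    Tendsto (fun x : ℝ => (1 - x) ^ s) (𝓝[<] (1 : ℝ)) atTop := by
  have h1 : Tendsto (fun x : ℝ => (1 - x) ^ (-s)) (𝓝[<] (1 : ℝ)) (𝓝[>] 0) := by
    rw [tendsto_nhdsWithin_iff]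
    constructor
    · have hbase : Tendsto (fun x : ℝ => 1 - x) (𝓝[<] (1 : ℝ)) (𝓝 0) := by
        have hc : Continuous (fun x : ℝ => 1 - x) := continuous_const.sub continuous_id
        have h := hc.tendsto (1 : ℝ)
        simpa using h.mono_left nhdsWithin_le_nhds
      have hco : ContinuousAt (fun u : ℝ => u ^ (-s)) 0 :=
        Real.continuousAt_rpow_const 0 (-s) (Or.inr (by linarith))
      have h := hco.tendsto.comp hbase
      simpa [Function.comp_def, Real.zero_rpow (show -s ≠ 0 by linarith)] using h
    · filter_upwards [self_mem_nhdsWithin] with x hx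
      exact Real.rpow_pos_of_pos (by simp only [mem_Iio] at hx; linarith) _
  have h2 := h1.inv_tendsto_nhdsGT_zero
  apply h2.congr'
  filter_upwards [self_mem_nhdsWithin] with x hx
  simp only [mem_Iio] at hx
  simp only [Pi.inv_apply]
  rw [← Real.rpow_neg (by linarith), neg_neg]

/-- For `α ∈ [0,1]` and `G_α(x) = 1 + (1+x)^α − (1+x)^{(α+1)/2} − (1−x)^{(1−α)/2}`
on `[0,1]`: `G_α''' ≥ 0` on `[0,1]` and `G_α(x) ≥ ((α−1)²/4) x²` on `[0,1]`. -/
theorem Galpha_third_deriv_nonneg (α : ℝ) (hα : α ∈ Set.Icc (0 : ℝ) 1) :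
    (∀ x ∈ Set.Icc (0 : ℝ) 1,
      0 ≤ iteratedDeriv 3
        (fun x : ℝ => 1 + (1 + x) ^ α - (1 + x) ^ ((α + 1) / 2) - (1 - x) ^ ((1 - α) / 2)) x) ∧
    (∀ x ∈ Set.Icc (0 : ℝ) 1,
      ((α - 1) ^ 2 / 4) * x ^ 2 ≤
        1 + (1 + x) ^ α - (1 + x) ^ ((α + 1) / 2) - (1 - x) ^ ((1 - α) / 2)) := by
  obtain ⟨hα0, hα1⟩ := hα
  rcases eq_or_lt_of_le hα1 with h1 | h1
  · -- α = 1 : the function is identically zero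
    subst h1
    have hfz : (fun x : ℝ => 1 + (1 + x) ^ (1 : ℝ) - (1 + x) ^ ((1 + 1) / 2 : ℝ)
        - (1 - x) ^ ((1 - 1) / 2 : ℝ)) = fun _ : ℝ => (0 : ℝ) := by
      funext x
      norm_num
    constructor
    · intro x _
      rw [hfz, iteratedDeriv_three']
      simp
    · intro x _
      have hx : 1 + (1 + x) ^ (1 : ℝ) - (1 + x) ^ ((1 + 1) / 2 : ℝ)
          - (1 - x) ^ ((1 - 1) / 2 : ℝ) = 0 := by
        have := congrFun hfz x
        simpa using this
      rw [hx]
      norm_num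
  · -- α < 1
    set q : ℝ := (α + 1) / 2 with hq
    set p : ℝ := (1 - α) / 2 with hp
    have hp0 : 0 < p := by rw [hp]; linarith
    have hq0 : 0 < q := by rw [hq]; linarith
    have hq1 : q ≤ 1 := by rw [hq]; linarith
    have hp1 : p ≤ 1 := by rw [hp]; linarith
    set f : ℝ → ℝ := fun x => 1 + (1 + x) ^ α - (1 + x) ^ q - (1 - x) ^ p with hf
    -- derivative chain on Ioo (-1) 1
    have Hf : ∀ y ∈ Ioo (-1 : ℝ) 1, HasDerivAt f
        (α * (1 + y) ^ (α - 1) - q * (1 + y) ^ (q - 1) + p * (1 - y) ^ (p - 1)) y := by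
      intro y hy
      have h1 : 0 < 1 + y := by linarith [hy.1]
      have h2 : 0 < 1 - y := by linarith [hy.2]
      have h := (((hasDerivAt_plus α y h1).const_add 1).sub (hasDerivAt_plus q y h1)).sub
        (hasDerivAt_minus p y h2)
      refine h.congr_deriv ?_
      ring
    have Hf1 : ∀ y ∈ Ioo (-1 : ℝ) 1, HasDerivAt
        (fun x : ℝ => α * (1 + x) ^ (α - 1) - q * (1 + x) ^ (q - 1) + p * (1 - x) ^ (p - 1))
        (α * (α - 1) * (1 + y) ^ (α - 1 - 1) - q * (q - 1) * (1 + y) ^ (q - 1 - 1)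
          - p * (p - 1) * (1 - y) ^ (p - 1 - 1)) y := by
      intro y hy
      have h1 : 0 < 1 + y := by linarith [hy.1]
      have h2 : 0 < 1 - y := by linarith [hy.2]
      have h := (((hasDerivAt_plus (α - 1) y h1).const_mul α).sub
        ((hasDerivAt_plus (q - 1) y h1).const_mul q)).add
        ((hasDerivAt_minus (p - 1) y h2).const_mul p)
      refine h.congr_deriv ?_
      ring
    have Hf2 : ∀ y ∈ Ioo (-1 : ℝ) 1, HasDerivAt
        (fun x : ℝ => α * (α - 1) * (1 + x) ^ (α - 1 - 1) - q * (q - 1) * (1 + x) ^ (q - 1 - 1)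
          - p * (p - 1) * (1 - x) ^ (p - 1 - 1))
        (α * (α - 1) * (α - 1 - 1) * (1 + y) ^ (α - 1 - 1 - 1)
          - q * (q - 1) * (q - 1 - 1) * (1 + y) ^ (q - 1 - 1 - 1)
          + p * (p - 1) * (p - 1 - 1) * (1 - y) ^ (p - 1 - 1 - 1)) y := by
      intro y hy
      have h1 : 0 < 1 + y := by linarith [hy.1]
      have h2 : 0 < 1 - y := by linarith [hy.2]
      have h := (((hasDerivAt_plus (α - 1 - 1) y h1).const_mul (α * (α - 1))).sub
        ((hasDerivAt_plus (q - 1 - 1) y h1).const_mul (q * (q - 1)))).sub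
        ((hasDerivAt_minus (p - 1 - 1) y h2).const_mul (p * (p - 1)))
      refine h.congr_deriv ?_
      ring
    -- deriv identities on the open interval
    have hOpen : IsOpen (Ioo (-1 : ℝ) 1) := isOpen_Ioo
    have hd1 : ∀ y ∈ Ioo (-1 : ℝ) 1, deriv f y
        = α * (1 + y) ^ (α - 1) - q * (1 + y) ^ (q - 1) + p * (1 - y) ^ (p - 1) :=
      fun y hy => (Hf y hy).deriv
    have hd2 : ∀ y ∈ Ioo (-1 : ℝ) 1, deriv (deriv f) y
        = α * (α - 1) * (1 + y) ^ (α - 1 - 1) - q * (q - 1) * (1 + y) ^ (q - 1 - 1)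
          - p * (p - 1) * (1 - y) ^ (p - 1 - 1) := by
      intro y hy
      have hev : deriv f =ᶠ[𝓝 y] fun x =>
          α * (1 + x) ^ (α - 1) - q * (1 + x) ^ (q - 1) + p * (1 - x) ^ (p - 1) := by
        filter_upwards [hOpen.mem_nhds hy] with z hz using hd1 z hz
      rw [hev.deriv_eq]
      exact (Hf1 y hy).deriv
    have hd3 : ∀ y ∈ Ioo (-1 : ℝ) 1, deriv (deriv (deriv f)) y
        = α * (α - 1) * (α - 1 - 1) * (1 + y) ^ (α - 1 - 1 - 1)
          - q * (q - 1) * (q - 1 - 1) * (1 + y) ^ (q - 1 - 1 - 1)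
          + p * (p - 1) * (p - 1 - 1) * (1 - y) ^ (p - 1 - 1 - 1) := by
      intro y hy
      have hev : deriv (deriv f) =ᶠ[𝓝 y] fun x =>
          α * (α - 1) * (1 + x) ^ (α - 1 - 1) - q * (q - 1) * (1 + x) ^ (q - 1 - 1)
            - p * (p - 1) * (1 - x) ^ (p - 1 - 1) := by
        filter_upwards [hOpen.mem_nhds hy] with z hz using hd2 z hz
      rw [hev.deriv_eq]
      exact (Hf2 y hy).deriv
    -- nonnegativity of the third derivative expression on [0, 1)
    have hf3nn : ∀ y : ℝ, 0 ≤ y → y < 1 →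
        0 ≤ α * (α - 1) * (α - 1 - 1) * (1 + y) ^ (α - 1 - 1 - 1)
          - q * (q - 1) * (q - 1 - 1) * (1 + y) ^ (q - 1 - 1 - 1)
          + p * (p - 1) * (p - 1 - 1) * (1 - y) ^ (p - 1 - 1 - 1) := by
      intro y hy0 hy1
      have h1 : (0 : ℝ) < 1 + y := by linarith
      have h2 : (0 : ℝ) < 1 - y := by linarith
      have hX : 0 ≤ (1 + y) ^ (α - 1 - 1 - 1) := (Real.rpow_pos_of_pos h1 _).le
      have hY1 : (1 + y) ^ (q - 1 - 1 - 1) ≤ 1 :=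
        Real.rpow_le_one_of_one_le_of_nonpos (by linarith) (by linarith)
      have hZ : 1 ≤ (1 - y) ^ (p - 1 - 1 - 1) :=
        Real.one_le_rpow_of_pos_of_le_one_of_nonpos h2 (by linarith) (by linarith)
      have hcB : 0 ≤ q * (q - 1) * (q - 1 - 1) := by
        nlinarith [mul_nonneg (mul_nonneg hq0.le (by linarith : (0:ℝ) ≤ 1 - q))
          (by linarith : (0:ℝ) ≤ 2 - q)]
      have hcC : 0 ≤ p * (p - 1) * (p - 1 - 1) := by
        nlinarith [mul_nonneg (mul_nonneg hp0.le (by linarith : (0:ℝ) ≤ 1 - p))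
          (by linarith : (0:ℝ) ≤ 2 - p)]
      have hBC : q * (q - 1) * (q - 1 - 1) ≤ p * (p - 1) * (p - 1 - 1) := by
        rw [hp, hq]
        nlinarith [mul_nonneg (mul_nonneg hα0 (by linarith : (0:ℝ) ≤ 1 - α))
          (by linarith : (0:ℝ) ≤ 1 + α)]
      have hA : 0 ≤ α * (α - 1) * (α - 1 - 1) * (1 + y) ^ (α - 1 - 1 - 1) := by
        have hpoly : 0 ≤ α * (α - 1) * (α - 1 - 1) := by
          nlinarith [mul_nonneg (mul_nonneg hα0 (by linarith : (0:ℝ) ≤ 1 - α))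
            (by linarith : (0:ℝ) ≤ 2 - α)]
        exact mul_nonneg hpoly hX
      nlinarith [mul_nonneg hcC (by linarith : (0:ℝ) ≤ (1 - y) ^ (p - 1 - 1 - 1) - 1),
        mul_nonneg hcB (by linarith : (0:ℝ) ≤ 1 - (1 + y) ^ (q - 1 - 1 - 1))]
    constructor
    · -- first part: third derivative nonnegative
      intro x hx
      rw [iteratedDeriv_three']
      rcases lt_or_eq_of_le hx.2 with hx1 | hx1
      · rw [hd3 x ⟨by linarith [hx.1], hx1⟩]
        exact hf3nn x hx.1 hx1
      · -- x = 1 : junk value 0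
        subst hx1
        have hts : Tendsto (deriv (deriv f)) (𝓝[<] (1 : ℝ)) atTop := by
          have ht3 : Tendsto (fun y : ℝ => (1 - y) ^ (p - 1 - 1 - 1 + 1)) (𝓝[<] (1 : ℝ)) atTop :=
            tendsto_rpow_one_sub (by linarith)
          have ht3' : Tendsto (fun y : ℝ => -(p * (p - 1)) * (1 - y) ^ (p - 1 - 1 - 1 + 1))
              (𝓝[<] (1 : ℝ)) atTop :=
            ht3.const_mul_atTop (by nlinarith)
          have hc1 : ContinuousAt (fun y : ℝ => α * (α - 1) * (1 + y) ^ (α - 1 - 1)) 1 := by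
            apply ContinuousAt.mul continuousAt_const
            exact (continuousAt_const.add continuousAt_id).rpow_const
              (Or.inl (by norm_num))
          have hc2 : ContinuousAt (fun y : ℝ => q * (q - 1) * (1 + y) ^ (q - 1 - 1)) 1 := by
            apply ContinuousAt.mul continuousAt_const
            exact (continuousAt_const.add continuousAt_id).rpow_const
              (Or.inl (by norm_num))
          have ht12 : Tendsto (fun y : ℝ => α * (α - 1) * (1 + y) ^ (α - 1 - 1)
              - q * (q - 1) * (1 + y) ^ (q - 1 - 1)) (𝓝[<] (1 : ℝ))
              (𝓝 (α * (α - 1) * (1 + 1) ^ (α - 1 - 1) - q * (q - 1) * (1 + 1) ^ (q - 1 - 1))) :=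
            ((hc1.sub hc2).tendsto).mono_left nhdsWithin_le_nhds
          have hsum := ht12.add_atTop ht3'
          have heq : deriv (deriv f) =ᶠ[𝓝[<] (1 : ℝ)] fun y =>
              (α * (α - 1) * (1 + y) ^ (α - 1 - 1) - q * (q - 1) * (1 + y) ^ (q - 1 - 1))
              + -(p * (p - 1)) * (1 - y) ^ (p - 1 - 1 - 1 + 1) := by
            filter_upwards [Ioo_mem_nhdsLT_of_mem (by norm_num : (1:ℝ) ∈ Ioc (-1:ℝ) 1)]
              with z hz
            rw [hd2 z hz]
            have : p - 1 - 1 - 1 + 1 = p - 1 - 1 := by ring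
            rw [this]
            ring
          exact hsum.congr' heq.symm
        have hnd : ¬ DifferentiableAt ℝ (deriv (deriv f)) 1 := by
          intro h
          have hc : Tendsto (deriv (deriv f)) (𝓝[<] (1 : ℝ)) (𝓝 (deriv (deriv f) 1)) :=
            h.continuousAt.tendsto.mono_left nhdsWithin_le_nhds
          exact not_tendsto_atTop_of_tendsto_nhds hc hts
        rw [deriv_zero_of_not_differentiableAt hnd]
    · -- second part: the quadratic lower bound
      intro x hx
      rcases lt_or_eq_of_le hx.2 with hx1 | hx1
      · -- x ∈ [0, 1) : integrate the second derivative bound twice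
        have hsub : Icc (0 : ℝ) x ⊆ Ioo (-1 : ℝ) 1 := fun z hz =>
          ⟨by linarith [hz.1], by linarith [hz.2]⟩
        have hint : interior (Icc (0 : ℝ) x) ⊆ Ioo (-1 : ℝ) 1 := by
          rw [interior_Icc]
          exact fun z hz => ⟨by linarith [hz.1], by linarith [hz.2]⟩
        -- f2 is monotone on [0, x]
        have hmono2 : MonotoneOn
            (fun y : ℝ => α * (α - 1) * (1 + y) ^ (α - 1 - 1) - q * (q - 1) * (1 + y) ^ (q - 1 - 1)
              - p * (p - 1) * (1 - y) ^ (p - 1 - 1)) (Icc 0 x) := by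
          apply monotoneOn_of_deriv_nonneg (convex_Icc 0 x)
          · intro z hz
            exact (Hf2 z (hsub hz)).continuousAt.continuousWithinAt
          · intro z hz
            exact (Hf2 z (hint hz)).differentiableAt.differentiableWithinAt
          · intro z hz
            rw [(Hf2 z (hint hz)).deriv]
            rw [interior_Icc] at hz
            exact hf3nn z hz.1.le (by linarith [hz.2])
        have hf2_zero : α * (α - 1) * (1 + (0:ℝ)) ^ (α - 1 - 1)
            - q * (q - 1) * (1 + (0:ℝ)) ^ (q - 1 - 1)
            - p * (p - 1) * (1 - (0:ℝ)) ^ (p - 1 - 1) = (α - 1) ^ 2 / 2 := by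
          rw [show (1:ℝ) + 0 = 1 by norm_num, show (1:ℝ) - 0 = 1 by norm_num,
            Real.one_rpow, Real.one_rpow, Real.one_rpow, hp, hq]
          ring
        have hf2_ge : ∀ z ∈ Icc (0 : ℝ) x,
            (α - 1) ^ 2 / 2 ≤ α * (α - 1) * (1 + z) ^ (α - 1 - 1)
              - q * (q - 1) * (1 + z) ^ (q - 1 - 1) - p * (p - 1) * (1 - z) ^ (p - 1 - 1) := by
          intro z hz
          have h := hmono2 (left_mem_Icc.2 hx.1) hz hz.1
          simp only at h
          rw [hf2_zero] at h
          exact h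
        -- g1 := f1 - (α-1)²/2 · y is monotone on [0, x]
        have hmono1 : MonotoneOn
            (fun y : ℝ => (α * (1 + y) ^ (α - 1) - q * (1 + y) ^ (q - 1) + p * (1 - y) ^ (p - 1))
              - (α - 1) ^ 2 / 2 * y) (Icc 0 x) := by
          apply monotoneOn_of_deriv_nonneg (convex_Icc 0 x)
          · intro z hz
            exact ((Hf1 z (hsub hz)).sub ((hasDerivAt_id z).const_mul
              ((α - 1) ^ 2 / 2))).continuousAt.continuousWithinAt
          · intro z hz
            exact ((Hf1 z (hint hz)).sub ((hasDerivAt_id z).const_mul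
              ((α - 1) ^ 2 / 2))).differentiableAt.differentiableWithinAt
          · intro z hz
            have hD : HasDerivAt
                (fun y : ℝ => (α * (1 + y) ^ (α - 1) - q * (1 + y) ^ (q - 1)
                  + p * (1 - y) ^ (p - 1)) - (α - 1) ^ 2 / 2 * y)
                ((α * (α - 1) * (1 + z) ^ (α - 1 - 1) - q * (q - 1) * (1 + z) ^ (q - 1 - 1)
                  - p * (p - 1) * (1 - z) ^ (p - 1 - 1)) - (α - 1) ^ 2 / 2 * 1) z :=
              (Hf1 z (hint hz)).sub ((hasDerivAt_id z).const_mul ((α - 1) ^ 2 / 2))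
            rw [hD.deriv]
            have h := hf2_ge z (interior_subset hz)
            linarith
        have hf1_ge : ∀ z ∈ Icc (0 : ℝ) x,
            0 ≤ (α * (1 + z) ^ (α - 1) - q * (1 + z) ^ (q - 1) + p * (1 - z) ^ (p - 1))
              - (α - 1) ^ 2 / 2 * z := by
          intro z hz
          have h := hmono1 (left_mem_Icc.2 hx.1) hz hz.1
          have hz0 : α * (1 + (0:ℝ)) ^ (α - 1) - q * (1 + (0:ℝ)) ^ (q - 1)
              + p * (1 - (0:ℝ)) ^ (p - 1) - (α - 1) ^ 2 / 2 * 0 = 0 := by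
            rw [show (1:ℝ) + 0 = 1 by norm_num, show (1:ℝ) - 0 = 1 by norm_num,
              Real.one_rpow, Real.one_rpow, Real.one_rpow, hp, hq]
            ring
          calc (0:ℝ) = _ := hz0.symm
            _ ≤ _ := h
        -- g0 := f - (α-1)²/4 · y² is monotone on [0, x]
        have hmono0 : MonotoneOn
            (fun y : ℝ => f y - (α - 1) ^ 2 / 4 * y ^ 2) (Icc 0 x) := by
          apply monotoneOn_of_deriv_nonneg (convex_Icc 0 x)
          · intro z hz
            exact ((Hf z (hsub hz)).sub ((hasDerivAt_pow 2 z).const_mul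
              ((α - 1) ^ 2 / 4))).continuousAt.continuousWithinAt
          · intro z hz
            exact ((Hf z (hint hz)).sub ((hasDerivAt_pow 2 z).const_mul
              ((α - 1) ^ 2 / 4))).differentiableAt.differentiableWithinAt
          · intro z hz
            have hD : HasDerivAt
                (fun y : ℝ => f y - (α - 1) ^ 2 / 4 * y ^ 2)
                ((α * (1 + z) ^ (α - 1) - q * (1 + z) ^ (q - 1) + p * (1 - z) ^ (p - 1))
                  - (α - 1) ^ 2 / 4 * ((2 : ℕ) * z ^ (2 - 1))) z :=
              (Hf z (hint hz)).sub ((hasDerivAt_pow 2 z).const_mul ((α - 1) ^ 2 / 4))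
            rw [hD.deriv]
            have h := hf1_ge z (interior_subset hz)
            have heq : (α - 1) ^ 2 / 4 * ((2 : ℕ) * z ^ (2 - 1)) = (α - 1) ^ 2 / 2 * z := by
              push_cast
              ring
            rw [heq]
            linarith
        have h := hmono0 (left_mem_Icc.2 hx.1) (right_mem_Icc.2 hx.1) hx.1
        have hz0 : f 0 - (α - 1) ^ 2 / 4 * (0:ℝ) ^ 2 = 0 := by
          rw [hf]
          simp only
          rw [show (1:ℝ) + 0 = 1 by norm_num, show (1:ℝ) - 0 = 1 by norm_num,
            Real.one_rpow, Real.one_rpow, Real.one_rpow]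
          ring
        simp only at h
        rw [hz0] at h
        have hfin : ((α - 1) ^ 2 / 4) * x ^ 2 ≤ f x := by linarith
        exact hfin
      · -- x = 1 : direct computation
        subst hx1
        rw [show (1:ℝ) - 1 = 0 by norm_num, Real.zero_rpow hp0.ne']
        have h2q : (2:ℝ) ^ q * (2:ℝ) ^ q = 2 * 2 ^ α := by
          rw [← Real.rpow_add (by norm_num : (0:ℝ) < 2)]
          rw [show q + q = α + 1 by rw [hq]; ring, Real.rpow_add (by norm_num : (0:ℝ) < 2),
            Real.rpow_one]
          ring
        have h11 : (1:ℝ) + 1 = 2 := by norm_num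
        rw [h11]
        nlinarith [sq_nonneg ((2:ℝ) ^ q - 1), mul_nonneg hα0 (by linarith : (0:ℝ) ≤ 2 - α)]
end

section
/- Let α ≥ 3 and define F_α(x) = 1 + x^α − x^{(3α−1)/2}(2x−1)^{(1−α)/2} − x^{(α−1)/2} on [1, 3/2]. Then F_α(x) ≥ ((α−1)²/4)(x−1)² for all x ∈ [1, 3/2]. -/
open Real Set

/-- First-order lower bound for the slope of `y ↦ y^(γ-1)` on an interval
where `y^(γ-2)` is bounded below by `m`. -/
private lemma slope_ge (γ m lo hi : ℝ) (hγ : 1 ≤ γ) (hlo : 1 ≤ lo)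
    (hm : ∀ y ∈ Icc lo hi, m ≤ y ^ (γ - 2)) :
    ∀ a ∈ Icc lo hi, ∀ c ∈ Icc lo hi, a ≤ c →
      (γ - 1) * m * (c - a) ≤ c ^ (γ - 1) - a ^ (γ - 1) := by
  intro a ha c hc hac
  have hconv : Convex ℝ (Icc lo hi) := convex_Icc lo hi
  have hcont : ContinuousOn (fun y : ℝ => y ^ (γ - 1)) (Icc lo hi) := by
    apply ContinuousOn.rpow_const continuousOn_id
    intro y hy
    exact Or.inl (by simp only [id]; nlinarith [hy.1])
  have hint : interior (Icc lo hi) = Ioo lo hi := interior_Icc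
  have hdiff : DifferentiableOn ℝ (fun y : ℝ => y ^ (γ - 1)) (interior (Icc lo hi)) := by
    rw [hint]
    intro y hy
    have hy0 : y ≠ 0 := by nlinarith [hy.1]
    exact (Real.hasDerivAt_rpow_const (Or.inl hy0)).differentiableAt.differentiableWithinAt
  have hbound : ∀ y ∈ interior (Icc lo hi), (γ - 1) * m ≤ deriv (fun y : ℝ => y ^ (γ - 1)) y := by
    rw [hint]
    intro y hy
    have hy0 : y ≠ 0 := by nlinarith [hy.1]
    have hd : deriv (fun y : ℝ => y ^ (γ - 1)) y = (γ - 1) * y ^ (γ - 1 - 1) :=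
      (Real.hasDerivAt_rpow_const (Or.inl hy0)).deriv
    rw [hd, show γ - 1 - 1 = γ - 2 by ring]
    have := hm y ⟨hy.1.le, hy.2.le⟩
    nlinarith [this]
  exact hconv.mul_sub_le_image_sub_of_le_deriv hcont hdiff hbound a ha c hc hac

/-- Second-order Taylor lower bound for `rpow` at a point `p`, valid on both sides. -/
private lemma taylor2 (γ m lo hi p q : ℝ) (hγ : 1 ≤ γ) (hlo : 1 ≤ lo)
    (hp : p ∈ Icc lo hi) (hq : q ∈ Icc lo hi)
    (hm : ∀ y ∈ Icc lo hi, m ≤ y ^ (γ - 2)) :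
    p ^ γ + γ * p ^ (γ - 1) * (q - p) + γ * (γ - 1) * m / 2 * (q - p) ^ 2 ≤ q ^ γ := by
  set f : ℝ → ℝ := fun y => y ^ γ - γ * p ^ (γ - 1) * y - γ * (γ - 1) * m / 2 * (y - p) ^ 2
    with hf
  have hγ0 : 0 < γ := by linarith
  -- derivative of f
  have hder : ∀ y : ℝ, y ≠ 0 →
      HasDerivAt f (γ * y ^ (γ - 1) - γ * p ^ (γ - 1) - γ * (γ - 1) * m * (y - p)) y := by
    intro y hy0
    have h1 : HasDerivAt (fun y : ℝ => y ^ γ) (γ * y ^ (γ - 1)) y :=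
      Real.hasDerivAt_rpow_const (Or.inl hy0)
    have h2 : HasDerivAt (fun y : ℝ => γ * p ^ (γ - 1) * y) (γ * p ^ (γ - 1)) y := by
      simpa using (hasDerivAt_id y).const_mul (γ * p ^ (γ - 1))
    have h3 : HasDerivAt (fun y : ℝ => γ * (γ - 1) * m / 2 * (y - p) ^ 2)
        (γ * (γ - 1) * m / 2 * (2 * (y - p))) y := by
      have := ((hasDerivAt_id y).sub_const p).pow 2
      simpa using this.const_mul (γ * (γ - 1) * m / 2)
    have : HasDerivAt (fun y : ℝ => y ^ γ - γ * p ^ (γ - 1) * y - γ * (γ - 1) * m / 2 * (y - p) ^ 2)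
        (γ * y ^ (γ - 1) - γ * p ^ (γ - 1) - γ * (γ - 1) * m / 2 * (2 * (y - p))) y :=
      (h1.sub h2).sub h3
    convert this using 1
    ring
  have key : f p ≤ f q := by
    rcases le_total p q with hpq | hpq
    · -- on [p, q] the derivative is nonnegative
      have hconv : Convex ℝ (Icc p q) := convex_Icc p q
      have hsub : Icc p q ⊆ Icc lo hi := Icc_subset_Icc hp.1 hq.2
      have hcont : ContinuousOn f (Icc p q) := by
        intro y hy
        have hy0 : y ≠ 0 := by nlinarith [hp.1, hy.1]
        exact (hder y hy0).continuousAt.continuousWithinAt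
      have hint : interior (Icc p q) = Ioo p q := interior_Icc
      have hdiff : DifferentiableOn ℝ f (interior (Icc p q)) := by
        rw [hint]; intro y hy
        have hy0 : y ≠ 0 := by nlinarith [hp.1, hy.1]
        exact (hder y hy0).differentiableAt.differentiableWithinAt
      have hbound : ∀ y ∈ interior (Icc p q), (0:ℝ) ≤ deriv f y := by
        rw [hint]; intro y hy
        have hy0 : y ≠ 0 := by nlinarith [hp.1, hy.1]
        rw [(hder y hy0).deriv]
        have hyIcc : y ∈ Icc lo hi := ⟨le_trans hp.1 hy.1.le, le_trans hy.2.le hq.2⟩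
        have := slope_ge γ m lo hi hγ hlo hm p hp y hyIcc hy.1.le
        nlinarith [this]
      have := hconv.mul_sub_le_image_sub_of_le_deriv hcont hdiff hbound p
        ⟨le_rfl, hpq⟩ q ⟨hpq, le_rfl⟩ hpq
      linarith [this]
    · -- on [q, p] the derivative is nonpositive
      have hconv : Convex ℝ (Icc q p) := convex_Icc q p
      have hcont : ContinuousOn f (Icc q p) := by
        intro y hy
        have hy0 : y ≠ 0 := by nlinarith [hq.1, hy.1]
        exact (hder y hy0).continuousAt.continuousWithinAt
      have hint : interior (Icc q p) = Ioo q p := interior_Icc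
      have hdiff : DifferentiableOn ℝ f (interior (Icc q p)) := by
        rw [hint]; intro y hy
        have hy0 : y ≠ 0 := by nlinarith [hq.1, hy.1]
        exact (hder y hy0).differentiableAt.differentiableWithinAt
      have hbound : ∀ y ∈ interior (Icc q p), deriv f y ≤ (0:ℝ) := by
        rw [hint]; intro y hy
        have hy0 : y ≠ 0 := by nlinarith [hq.1, hy.1]
        rw [(hder y hy0).deriv]
        have hyIcc : y ∈ Icc lo hi := ⟨le_trans hq.1 hy.1.le, le_trans hy.2.le hp.2⟩
        have := slope_ge γ m lo hi hγ hlo hm y hyIcc p hp hy.2.le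
        nlinarith [this]
      have := hconv.image_sub_le_mul_sub_of_deriv_le hcont hdiff hbound q
        ⟨le_rfl, hpq⟩ p ⟨hpq, le_rfl⟩ hpq
      linarith [this]
  have hfp : f p = p ^ γ - γ * p ^ (γ - 1) * p := by simp [hf]
  have hfq : f q = q ^ γ - γ * p ^ (γ - 1) * q - γ * (γ - 1) * m / 2 * (q - p) ^ 2 := by
    simp [hf]
  rw [hfp, hfq] at key
  linarith [key]

set_option maxHeartbeats 1600000 in
/-- For `α ≥ 3` and
`F_α(x) = 1 + x^α − x^{(3α−1)/2}(2x−1)^{(1−α)/2} − x^{(α−1)/2}` on `[1, 3/2]`,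
one has `F_α(x) ≥ ((α−1)²/4)(x−1)²`. -/
theorem Falpha_lower_bound (α : ℝ) (hα : 3 ≤ α) :
    ∀ x ∈ Set.Icc (1 : ℝ) (3 / 2),
      ((α - 1) ^ 2 / 4) * (x - 1) ^ 2 ≤
        1 + x ^ α - x ^ ((3 * α - 1) / 2) * (2 * x - 1) ^ ((1 - α) / 2) -
          x ^ ((α - 1) / 2) := by
  intro x hx
  obtain ⟨hx1, hx32⟩ := hx
  have hx0 : (0:ℝ) < x := by linarith
  have hD0 : (0:ℝ) < 2 * x - 1 := by linarith
  set γ : ℝ := (α - 1) / 2 with hγdef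
  clear_value γ
  have hγ1 : 1 ≤ γ := by rw [hγdef]; linarith
  have hγ0 : 0 < γ := by linarith
  have he0 : 0 ≤ γ - 1 := by linarith
  have hu0 : 0 ≤ x - 1 := by linarith
  -- rewrite the goal in terms of t := x^γ and s := (x^2/(2x-1))^γ
  have ecoef : (α - 1) ^ 2 / 4 = γ ^ 2 := by rw [hγdef]; ring
  have e1 : x ^ α = x ^ γ * x ^ γ * x := by
    rw [show α = γ + (γ + 1) by rw [hγdef]; ring, Real.rpow_add hx0, Real.rpow_add hx0,
      Real.rpow_one]
    ring
  have e2 : x ^ ((3 * α - 1) / 2) = x ^ γ * x ^ γ * x ^ γ * x := by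
    rw [show (3 * α - 1) / 2 = γ + (γ + (γ + 1)) by rw [hγdef]; ring, Real.rpow_add hx0,
      Real.rpow_add hx0, Real.rpow_add hx0, Real.rpow_one]
    ring
  have e3 : (2 * x - 1) ^ ((1 - α) / 2) = ((2 * x - 1) ^ γ)⁻¹ := by
    rw [show (1 - α) / 2 = -γ by rw [hγdef]; ring, Real.rpow_neg hD0.le]
  rw [ecoef, e1, e2, e3]
  set t : ℝ := x ^ γ with htdef
  set X : ℝ := x ^ (γ - 1) with hXdef
  set s : ℝ := (x ^ 2 / (2 * x - 1)) ^ γ with hsdef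
  clear_value t X s
  have hdp : 0 < (2 * x - 1) ^ γ := Real.rpow_pos_of_pos hD0 γ
  have ht1 : 1 ≤ t := by
    rw [htdef]
    calc (1:ℝ) = x ^ (0:ℝ) := (Real.rpow_zero x).symm
    _ ≤ x ^ γ := Real.rpow_le_rpow_of_exponent_le hx1 (by linarith)
  have htx : x ≤ t := by
    rw [htdef]
    calc x = x ^ (1:ℝ) := (Real.rpow_one x).symm
    _ ≤ x ^ γ := Real.rpow_le_rpow_of_exponent_le hx1 (by linarith)
  have hX1 : 1 ≤ X := by
    rw [hXdef]
    calc (1:ℝ) = x ^ (0:ℝ) := (Real.rpow_zero x).symm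
    _ ≤ x ^ (γ - 1) := Real.rpow_le_rpow_of_exponent_le hx1 (by linarith)
  have htXx : X * x = t := by
    rw [hXdef, htdef]
    calc x ^ (γ - 1) * x = x ^ (γ - 1) * x ^ (1:ℝ) := by rw [Real.rpow_one]
    _ = x ^ (γ - 1 + 1) := (Real.rpow_add hx0 _ _).symm
    _ = x ^ γ := by rw [show γ - 1 + 1 = γ by ring]
  have hb1 : 1 ≤ x ^ 2 / (2 * x - 1) := by
    rw [le_div_iff₀ hD0]; linarith only [sq_nonneg (x - 1)]
  have hs1 : 1 ≤ s := by
    rw [hsdef]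
    calc (1:ℝ) = (x ^ 2 / (2 * x - 1)) ^ (0:ℝ) := (Real.rpow_zero _).symm
    _ ≤ (x ^ 2 / (2 * x - 1)) ^ γ := Real.rpow_le_rpow_of_exponent_le hb1 (by linarith)
  have hsd : s * (2 * x - 1) ^ γ = t * t := by
    rw [hsdef, htdef, Real.div_rpow (by positivity) hD0.le,
      div_mul_cancel₀ _ (ne_of_gt hdp), show (x:ℝ) ^ 2 = x * x by ring,
      Real.mul_rpow hx0.le hx0.le]
  have e5 : t * t * t * x * ((2 * x - 1) ^ γ)⁻¹ = x * t * s := by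
    rw [mul_inv_eq_iff_eq_mul₀ (ne_of_gt hdp)]
    linear_combination (-t*x) * hsd
  rw [e5]
  -- Bernoulli-type lower bound for s
  have hbern : 1 + γ * (x ^ 2 / (2 * x - 1) - 1) ≤ s := by
    have h := taylor2 γ 0 1 (x ^ 2 / (2 * x - 1)) 1 (x ^ 2 / (2 * x - 1)) hγ1 le_rfl
      ⟨le_rfl, hb1⟩ ⟨hb1, le_rfl⟩
      (fun y hy => Real.rpow_nonneg (by linarith [hy.1]) _)
    simp only [Real.one_rpow] at h
    rw [hsdef]
    linarith only [h]
  have hbd : (x ^ 2 / (2 * x - 1) - 1) * (2 * x - 1) = (x - 1) ^ 2 := by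
    rw [sub_mul, div_mul_cancel₀ _ hD0.ne']; ring
  have hbdγ : γ * ((x ^ 2 / (2 * x - 1) - 1) * (2 * x - 1)) = γ * (x - 1) ^ 2 := by
    rw [hbd]
  have hsD : (2 * x - 1) + γ * (x - 1) ^ 2 ≤ s * (2 * x - 1) := by
    linarith only [mul_le_mul_of_nonneg_right hbern hD0.le, hbdγ]
  -- facts about P = x^3/(2x-1)
  have hP0 : (0:ℝ) < x ^ 3 / (2 * x - 1) := by positivity
  have hP1 : 1 ≤ x ^ 3 / (2 * x - 1) := by
    rw [le_div_iff₀ hD0]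
    linarith only [mul_nonneg hu0 (show (0:ℝ) ≤ x ^ 2 + x - 1 by
      linarith only [sq_nonneg (x - 1), hx1])]
  have hPx2 : x ^ 3 / (2 * x - 1) ≤ x ^ 2 := by
    rw [div_le_iff₀ hD0]
    linarith only [mul_nonneg (mul_nonneg hx0.le hx0.le) hu0]
  have hPs : (x ^ 3 / (2 * x - 1)) ^ γ = t * s := by
    rw [show x ^ 3 / (2 * x - 1) = x * (x ^ 2 / (2 * x - 1)) by ring,
      Real.mul_rpow hx0.le (by positivity), htdef, hsdef]
  have hPX : (x ^ 3 / (2 * x - 1)) ^ (γ - 1) * (x ^ 3 / (2 * x - 1)) = t * s := by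
    calc (x ^ 3 / (2 * x - 1)) ^ (γ - 1) * (x ^ 3 / (2 * x - 1))
        = (x ^ 3 / (2 * x - 1)) ^ (γ - 1) * (x ^ 3 / (2 * x - 1)) ^ (1:ℝ) := by
          rw [Real.rpow_one]
    _ = (x ^ 3 / (2 * x - 1)) ^ (γ - 1 + 1) := (Real.rpow_add hP0 _ _).symm
    _ = (x ^ 3 / (2 * x - 1)) ^ γ := by rw [show γ - 1 + 1 = γ by ring]
    _ = t * s := hPs
  have hPXv : (x ^ 3 / (2 * x - 1)) ^ (γ - 1) = t * s * (2 * x - 1) / x ^ 3 := by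
    rw [eq_div_iff (by positivity)]
    rw [← hPX, mul_div_assoc', div_mul_cancel₀ _ hD0.ne']
  have hx2γ : ((x:ℝ) ^ 2) ^ γ = t * t := by
    rw [show (x:ℝ) ^ 2 = x * x by ring, Real.mul_rpow hx0.le hx0.le, htdef]
  -- small auxiliary inequalities (proved while the context is still light)
  have hS2 : t * s - X = X * (x * s - 1) := by linear_combination (-s) * htXx
  have hxls : x * 1 ≤ x * s := mul_le_mul_of_nonneg_left hs1 hx0.le
  have hxs1 : 0 ≤ x * s - 1 := by linarith only [hxls, hx1]
  have htsx : x ≤ t * s := by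
    linarith only [mul_le_mul_of_nonneg_left hs1 (by linarith : (0:ℝ) ≤ t), htx]
  have htt : x * x ≤ t * t := mul_le_mul htx htx hx0.le (le_trans hx0.le htx)
  have hγγ : γ * (γ - 1) ≤ γ ^ 2 := by linarith only [hγ0]
  have hquad : (0:ℝ) ≤ 5 * x ^ 2 - 4 * x + 1 := by linarith only [sq_nonneg (x - 1), hx1]
  have S1 : (x - 1) * (2 * x - 1) + γ * x * (x - 1) ^ 2 ≤ (x * s - 1) * (2 * x - 1) := by
    linarith only [mul_le_mul_of_nonneg_left hsD hx0.le]
  have S3 : (x * s - 1) * (2 * x - 1) ≤ X * (x * s - 1) * (2 * x - 1) := by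
    have h := mul_le_mul_of_nonneg_right hX1 (mul_nonneg hxs1 hD0.le)
    linarith only [h]
  have S13 := le_trans S1 S3
  have Sb : x - 1 ≤ t * s - X := by
    have h := mul_le_mul_of_nonneg_right hX1 hxs1
    linarith only [h, hS2, hxls]
  rcases le_total γ 2 with hγ2 | hγ2
  · -- case 1 ≤ γ ≤ 2
    have hm1 : ∀ y ∈ Set.Icc (1:ℝ) x, x ^ (γ - 2) ≤ y ^ (γ - 2) := fun y hy =>
      Real.rpow_le_rpow_of_nonpos (by linarith [hy.1]) hy.2 (by linarith)
    have T1 := taylor2 γ (x ^ (γ - 2)) 1 x x 1 hγ1 le_rfl ⟨hx1, le_rfl⟩ ⟨le_rfl, hx1⟩ hm1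
    rw [Real.one_rpow] at T1
    have hM1x : x ^ (γ - 2) * x = X := by
      rw [hXdef]
      calc x ^ (γ - 2) * x = x ^ (γ - 2) * x ^ (1:ℝ) := by rw [Real.rpow_one]
      _ = x ^ (γ - 2 + 1) := (Real.rpow_add hx0 _ _).symm
      _ = x ^ (γ - 1) := by rw [show γ - 2 + 1 = γ - 1 by ring]
    have hM1v : x ^ (γ - 2) = X / x := by
      rw [eq_div_iff hx0.ne']; exact hM1x
    rw [hM1v, ← htdef, ← hXdef] at T1
    -- T1 : t + γ * X * (1 - x) + γ * (γ-1) * (X/x) / 2 * (1-x)^2 ≤ 1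
    have A1 : t * x + γ * X * (1 - x) * x + γ * (γ - 1) / 2 * (X * (1 - x) ^ 2) ≤ x := by
      have h := mul_le_mul_of_nonneg_right T1 hx0.le
      have e : (t + γ * X * (1 - x) + γ * (γ - 1) * (X / x) / 2 * (1 - x) ^ 2) * x
          = t * x + γ * X * (1 - x) * x + γ * (γ - 1) / 2 * (X * (1 - x) ^ 2) := by
        field_simp
      linarith only [h, e]
    have hm3 : ∀ y ∈ Set.Icc (x ^ 3 / (2 * x - 1)) (x ^ 2), ((x:ℝ) ^ 2) ^ (γ - 2) ≤ y ^ (γ - 2) :=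
      fun y hy => Real.rpow_le_rpow_of_nonpos (lt_of_lt_of_le hP0 hy.1) hy.2 (by linarith)
    have T2 := taylor2 γ (((x:ℝ) ^ 2) ^ (γ - 2)) (x ^ 3 / (2 * x - 1)) (x ^ 2)
      (x ^ 3 / (2 * x - 1)) (x ^ 2) hγ1 hP1 ⟨le_rfl, hPx2⟩ ⟨hPx2, le_rfl⟩ hm3
    have hM3x : ((x:ℝ) ^ 2) ^ (γ - 2) * x ^ 4 = t * t := by
      have h24 : ((x:ℝ) ^ 2) ^ ((2:ℕ):ℝ) = x ^ 4 := by
        rw [Real.rpow_natCast]; ring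
      calc ((x:ℝ) ^ 2) ^ (γ - 2) * x ^ 4 = ((x:ℝ) ^ 2) ^ (γ - 2) * ((x:ℝ) ^ 2) ^ ((2:ℕ):ℝ) := by
            rw [h24]
      _ = ((x:ℝ) ^ 2) ^ (γ - 2 + 2) := by
            rw [← Real.rpow_add (by positivity)]; norm_num
      _ = ((x:ℝ) ^ 2) ^ γ := by rw [show γ - 2 + 2 = γ by ring]
      _ = t * t := hx2γ
    have hM3v : ((x:ℝ) ^ 2) ^ (γ - 2) = t * t / x ^ 4 := by
      rw [eq_div_iff (by positivity)]; exact hM3x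
    rw [hM3v, hPXv, hPs, hx2γ] at T2
    have A2 : t * s * (x ^ 4 * (2 * x - 1) ^ 2)
        + γ * (t * s) * (x ^ 3 * (x - 1) * (2 * x - 1) ^ 2)
        + γ * (γ - 1) / 2 * (t * t * x ^ 4 * (x - 1) ^ 2)
        ≤ t * t * (x ^ 4 * (2 * x - 1) ^ 2) := by
      have h := mul_le_mul_of_nonneg_right T2
        (show (0:ℝ) ≤ x ^ 4 * (2 * x - 1) ^ 2 by positivity)
      have e : (t * s + γ * (t * s * (2 * x - 1) / x ^ 3) * (x ^ 2 - x ^ 3 / (2 * x - 1))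
            + γ * (γ - 1) * (t * t / x ^ 4) / 2 * (x ^ 2 - x ^ 3 / (2 * x - 1)) ^ 2)
          * (x ^ 4 * (2 * x - 1) ^ 2)
          = t * s * (x ^ 4 * (2 * x - 1) ^ 2)
            + γ * (t * s) * (x ^ 3 * (x - 1) * (2 * x - 1) ^ 2)
            + γ * (γ - 1) / 2 * (t * t * x ^ 4 * (x - 1) ^ 2) := by
        field_simp; ring
      linarith only [h, e]
    have K1 := mul_le_mul_of_nonneg_right A1
      (show (0:ℝ) ≤ x ^ 2 * (2 * x - 1) ^ 2 by positivity)
    have cP1 : (0:ℝ) ≤ γ * (x - 1) * x ^ 3 * (2 * x - 1) := by positivity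
    have P1 := mul_le_mul_of_nonneg_left S13 cP1
    have hS2' : γ * (x - 1) * x ^ 3 * (2 * x - 1) * (X * (x * s - 1) * (2 * x - 1))
        = γ * (x - 1) * x ^ 3 * (2 * x - 1) ^ 2 * (t * s - X) := by
      linear_combination (γ * (x - 1) * x ^ 3 * (2 * x - 1) ^ 2 * s) * htXx
    have Q2 := mul_le_mul_of_nonneg_left
      (mul_le_mul_of_nonneg_right hX1
        (show (0:ℝ) ≤ x ^ 2 * (2 * x - 1) ^ 2 * (x - 1) ^ 2 by positivity))
      (show (0:ℝ) ≤ γ * (γ - 1) / 2 by positivity)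
    have Q3 := mul_le_mul_of_nonneg_left
      (mul_le_mul_of_nonneg_right htt (show (0:ℝ) ≤ x ^ 4 * (x - 1) ^ 2 by positivity))
      (show (0:ℝ) ≤ γ * (γ - 1) / 2 by positivity)
    have Q4 := mul_le_mul_of_nonneg_right hγγ
      (show (0:ℝ) ≤ x ^ 4 * (x - 1) ^ 3 * (2 * x - 1) by positivity)
    have Q5 : (0:ℝ) ≤ γ * (γ - 1) * ((x - 1) ^ 2 * (x ^ 2 / 2)
        * ((x - 1) ^ 2 * (5 * x ^ 2 - 4 * x + 1))) :=
      mul_nonneg (mul_nonneg hγ0.le he0)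
        (mul_nonneg (by positivity) (mul_nonneg (sq_nonneg _) hquad))
    have H : γ ^ 2 * (x - 1) ^ 2 * (x ^ 3 * (2 * x - 1) ^ 2)
        ≤ (1 + t * t * x - x * t * s - t) * (x ^ 3 * (2 * x - 1) ^ 2) := by
      linarith only [K1, A2, P1, hS2', Q2, Q3, Q4, Q5]
    have hpos : (0:ℝ) < x ^ 3 * (2 * x - 1) ^ 2 := by positivity
    exact le_of_mul_le_mul_right H hpos
  · -- case γ ≥ 2
    have hm1 : ∀ y ∈ Set.Icc (1:ℝ) x, (1:ℝ) ≤ y ^ (γ - 2) := by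
      intro y hy
      calc (1:ℝ) = y ^ (0:ℝ) := (Real.rpow_zero y).symm
      _ ≤ y ^ (γ - 2) := Real.rpow_le_rpow_of_exponent_le hy.1 (by linarith)
    have T1 := taylor2 γ 1 1 x x 1 hγ1 le_rfl ⟨hx1, le_rfl⟩ ⟨le_rfl, hx1⟩ hm1
    rw [Real.one_rpow, ← htdef, ← hXdef] at T1
    have hm3 : ∀ y ∈ Set.Icc (x ^ 3 / (2 * x - 1)) (x ^ 2),
        (x ^ 3 / (2 * x - 1)) ^ (γ - 2) ≤ y ^ (γ - 2) := fun y hy =>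
      Real.rpow_le_rpow hP0.le hy.1 (by linarith)
    have T2 := taylor2 γ ((x ^ 3 / (2 * x - 1)) ^ (γ - 2)) (x ^ 3 / (2 * x - 1)) (x ^ 2)
      (x ^ 3 / (2 * x - 1)) (x ^ 2) hγ1 hP1 ⟨le_rfl, hPx2⟩ ⟨hPx2, le_rfl⟩ hm3
    have hM3x : (x ^ 3 / (2 * x - 1)) ^ (γ - 2) * (x ^ 3 / (2 * x - 1)) ^ 2 = t * s := by
      have h24 : (x ^ 3 / (2 * x - 1)) ^ ((2:ℕ):ℝ) = (x ^ 3 / (2 * x - 1)) ^ 2 := by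
        rw [Real.rpow_natCast]
      calc (x ^ 3 / (2 * x - 1)) ^ (γ - 2) * (x ^ 3 / (2 * x - 1)) ^ 2
          = (x ^ 3 / (2 * x - 1)) ^ (γ - 2) * (x ^ 3 / (2 * x - 1)) ^ ((2:ℕ):ℝ) := by rw [h24]
      _ = (x ^ 3 / (2 * x - 1)) ^ (γ - 2 + 2) := by
            rw [← Real.rpow_add hP0]; norm_num
      _ = (x ^ 3 / (2 * x - 1)) ^ γ := by rw [show γ - 2 + 2 = γ by ring]
      _ = t * s := hPs
    have hM3v : (x ^ 3 / (2 * x - 1)) ^ (γ - 2) = t * s * (2 * x - 1) ^ 2 / x ^ 6 := by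
      rw [eq_div_iff (by positivity)]
      have hq : (x ^ 3 / (2 * x - 1)) ^ 2 * (2 * x - 1) ^ 2 = x ^ 6 := by
        rw [div_pow, div_mul_cancel₀ _ (pow_ne_zero 2 hD0.ne')]
        ring
      calc (x ^ 3 / (2 * x - 1)) ^ (γ - 2) * x ^ 6
          = ((x ^ 3 / (2 * x - 1)) ^ (γ - 2) * (x ^ 3 / (2 * x - 1)) ^ 2) * (2 * x - 1) ^ 2 := by
            rw [← hq]; ring
      _ = t * s * (2 * x - 1) ^ 2 := by rw [hM3x]
    rw [hM3v, hPXv, hPs, hx2γ] at T2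
    have A2 : t * s * x ^ 6 + γ * (t * s) * (x ^ 5 * (x - 1))
        + γ * (γ - 1) / 2 * (t * s * x ^ 4 * (x - 1) ^ 2) ≤ t * t * x ^ 6 := by
      have h := mul_le_mul_of_nonneg_right T2 (show (0:ℝ) ≤ x ^ 6 by positivity)
      have e : (t * s + γ * (t * s * (2 * x - 1) / x ^ 3) * (x ^ 2 - x ^ 3 / (2 * x - 1))
            + γ * (γ - 1) * (t * s * (2 * x - 1) ^ 2 / x ^ 6) / 2
              * (x ^ 2 - x ^ 3 / (2 * x - 1)) ^ 2) * x ^ 6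
          = t * s * x ^ 6 + γ * (t * s) * (x ^ 5 * (x - 1))
            + γ * (γ - 1) / 2 * (t * s * x ^ 4 * (x - 1) ^ 2) := by
        field_simp; ring
      linarith only [h, e]
    have K1 := mul_le_mul_of_nonneg_right T1
      (show (0:ℝ) ≤ x ^ 5 * (2 * x - 1) ^ 2 by positivity)
    have K2 := mul_le_mul_of_nonneg_right A2
      (show (0:ℝ) ≤ (2 * x - 1) ^ 2 by positivity)
    have R1 := mul_le_mul_of_nonneg_left Sb
      (show (0:ℝ) ≤ γ * (x - 1) * x ^ 5 * (2 * x - 1) ^ 2 by positivity)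
    have R2 := mul_le_mul_of_nonneg_left htsx
      (show (0:ℝ) ≤ γ * (γ - 1) / 2 * ((x - 1) ^ 2 * (2 * x - 1) ^ 2 * x ^ 4) by positivity)
    have H : γ ^ 2 * (x - 1) ^ 2 * (x ^ 5 * (2 * x - 1) ^ 2)
        ≤ (1 + t * t * x - x * t * s - t) * (x ^ 5 * (2 * x - 1) ^ 2) := by
      linarith only [K1, K2, R1, R2]
    have hpos : (0:ℝ) < x ^ 5 * (2 * x - 1) ^ 2 := by positivity
    exact le_of_mul_le_mul_right H hpos
end
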